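/- arXiv:2409.08690 — 10 statements merged into one kernel-verified Lean document; each statement's English description precedes it below -/
import Mathlib

section
/- (Theorem 1, combinatorial form) Let g be a contact graph with blocks A_1, …, A_m. Then the probability of the event E_g equals the sum over all injective functions ι from the set of blocks of g into Fin N of the products ∏_{j=1}^{m} ∏_{u ∈ A_j} p u (ι(A_j)); equivalently, μ(E_g) = ∑_{i_1, …, i_m pairwise distinct elements of Fin N} ∏_{j=1}^{m} ∏_{u ∈ A_j} p u (i_j). -/
open MeasureTheory ProbabilityTheory

/-- Theorem 1, combinatorial form: the probability of the contact-graph event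
`E_g` equals the sum, over all injective assignments of pairwise distinct states to the blocks
of `g`, of the products of the marginal probabilities. -/
theorem contact_graph_prob_combinatorial
    (N M : ℕ) (hN : 1 ≤ N) (hM : 1 ≤ M)
    {Ω : Type*} [MeasurableSpace Ω] (μ : Measure Ω) [IsProbabilityMeasure μ]
    (X : Fin M → Ω → Fin N)
    (hXmeas : ∀ j, Measurable (X j))
    (hXindep : iIndepFun X μ)
    (p : Fin M → Fin N → NNReal)
    (hp : ∀ j i, μ {ω | X j ω = i} = p j i)
    (hpsum : ∀ j, ∑ i, p j i = 1)
    (g : Finpartition (Finset.univ : Finset (Fin M))) :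
    μ {ω | ∀ u v : Fin M, X u ω = X v ω ↔ ∃ B ∈ g.parts, u ∈ B ∧ v ∈ B}
      = ((∑ ι ∈ Finset.univ.filter
            (fun ι : {B // B ∈ g.parts} → Fin N => Function.Injective ι),
          ∏ B : {B // B ∈ g.parts}, ∏ u ∈ (B : Finset (Fin M)), p u (ι B) : NNReal)
        : ENNReal) := by
  classical
  set S := {B // B ∈ g.parts}
  -- the block containing u
  have humem : ∀ u : Fin M, u ∈ (Finset.univ : Finset (Fin M)) := fun u => Finset.mem_univ u
  let pt : Fin M → S := fun u => ⟨g.part u, g.part_mem.2 (humem u)⟩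
  have hpt_mem : ∀ u, u ∈ (pt u : Finset (Fin M)) := fun u => g.mem_part (humem u)
  -- events
  let A : (S → Fin N) → Set Ω := fun ι => ⋂ u : Fin M, {ω | X u ω = ι (pt u)}
  -- each part is nonempty; choose a representative
  let rep : S → Fin M := fun B => (g.nonempty_of_mem_parts B.2).choose
  have hrep : ∀ B : S, rep B ∈ (B : Finset (Fin M)) :=
    fun B => (g.nonempty_of_mem_parts B.2).choose_spec
  have hpt_rep : ∀ B : S, pt (rep B) = B := by
    intro B
    apply Subtype.ext
    exact g.eq_of_mem_parts (g.part_mem.2 (humem _)) B.2 (hpt_mem _) (hrep B)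
  -- the event equals the union of the A ι over injective ι
  have hE : {ω | ∀ u v : Fin M, X u ω = X v ω ↔ ∃ B ∈ g.parts, u ∈ B ∧ v ∈ B}
      = ⋃ ι ∈ Finset.univ.filter (fun ι : S → Fin N => Function.Injective ι), A ι := by
    ext ω
    simp only [Set.mem_setOf_eq, Set.mem_iUnion, Finset.mem_filter, Finset.mem_univ, true_and]
    constructor
    · intro hω
      refine ⟨fun B => X (rep B) ω, ?_, ?_⟩
      · intro B C hBC
        have := (hω (rep B) (rep C)).1 hBC
        obtain ⟨D, hD, h1, h2⟩ := this
        apply Subtype.ext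
        calc (B : Finset (Fin M)) = D := g.eq_of_mem_parts B.2 hD (hrep B) h1
          _ = C := g.eq_of_mem_parts hD C.2 h2 (hrep C)
      · refine Set.mem_iInter.2 fun u => ?_
        exact (hω u (rep (pt u))).2 ⟨pt u, (pt u).2, hpt_mem u, hrep (pt u)⟩
    · rintro ⟨ι, hι, hA⟩
      have hA' : ∀ u, X u ω = ι (pt u) := fun u => Set.mem_iInter.1 hA u
      intro u v
      constructor
      · intro h
        have : ι (pt u) = ι (pt v) := by rw [← hA' u, ← hA' v, h]
        have := hι this
        exact ⟨pt u, (pt u).2, hpt_mem u, this ▸ hpt_mem v⟩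
      · rintro ⟨B, hB, hu, hv⟩
        have h1 : pt u = ⟨B, hB⟩ := Subtype.ext
          (g.eq_of_mem_parts (g.part_mem.2 (humem u)) hB (hpt_mem u) hu)
        have h2 : pt v = ⟨B, hB⟩ := Subtype.ext
          (g.eq_of_mem_parts (g.part_mem.2 (humem v)) hB (hpt_mem v) hv)
        rw [hA' u, hA' v, h1, h2]
  rw [hE]
  -- disjointness
  have hdisj : (Finset.univ.filter (fun ι : S → Fin N => Function.Injective ι) : Set (S → Fin N)).PairwiseDisjoint A := by
    intro ι hι κ hκ hne
    refine Set.disjoint_left.2 fun ω hωι hωκ => hne ?_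
    funext B
    have h1 : X (rep B) ω = ι (pt (rep B)) := Set.mem_iInter.1 hωι (rep B)
    have h2 : X (rep B) ω = κ (pt (rep B)) := Set.mem_iInter.1 hωκ (rep B)
    rw [hpt_rep B] at h1 h2
    rw [← h1, ← h2]
  have hmeasA : ∀ ι : S → Fin N, MeasurableSet (A ι) := by
    intro ι
    exact MeasurableSet.iInter fun u => (hXmeas u) (measurableSet_singleton _)
  rw [measure_biUnion_finset hdisj fun ι _ => hmeasA ι]
  push_cast
  refine Finset.sum_congr rfl fun ι hι => ?_
  -- μ (A ι) = product
  have hAprod : μ (A ι) = ∏ u : Fin M, μ {ω | X u ω = ι (pt u)} := by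
    refine hXindep.meas_iInter fun u => ?_
    exact ⟨{ι (pt u)}, measurableSet_singleton _, rfl⟩
  rw [hAprod]
  have hcoe : ∀ u, μ {ω | X u ω = ι (pt u)} = (p u (ι (pt u)) : ENNReal) :=
    fun u => hp u (ι (pt u))
  simp_rw [hcoe]
  -- rearrange product over Fin M as product over blocks
  have key : ∀ f : Fin M → ENNReal,
      ∏ B : S, ∏ u ∈ (B : Finset (Fin M)), f u = ∏ u : Fin M, f u := by
    intro f
    calc ∏ B : S, ∏ u ∈ (B : Finset (Fin M)), f u
        = ∏ B ∈ g.parts, ∏ u ∈ B, f u :=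
          Finset.prod_attach g.parts (fun B => ∏ u ∈ B, f u)
      _ = ∏ u ∈ g.parts.biUnion id, f u :=
          (Finset.prod_biUnion g.supIndep.pairwiseDisjoint).symm
      _ = ∏ u : Fin M, f u := by rw [g.biUnion_parts]
  rw [← key (fun u => (p u (ι (pt u)) : ENNReal))]
  refine Finset.prod_congr rfl fun B _ => ?_
  refine Finset.prod_congr rfl fun u hu => ?_
  have : pt u = B := Subtype.ext
    (g.eq_of_mem_parts (g.part_mem.2 (humem u)) B.2 (hpt_mem u) hu)
  rw [this]
end

section
/- (2-clique formula) Let g be a contact graph with exactly two blocks A_1 and A_2 (so A_1 ∪ A_2 = Fin M and A_1 ∩ A_2 = ∅). Then μ(E_g) = σ(A_1)·σ(A_2) − σ(Fin M). -/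
open MeasureTheory ProbabilityTheory

/-- 2-clique formula: if the contact graph `g` has exactly two blocks `A₁, A₂`,
then `μ(E_g) = σ(A₁)·σ(A₂) − σ(Fin M)`. -/
theorem contact_graph_prob_two_cliques
    (N M : ℕ) (hN : 1 ≤ N) (hM : 1 ≤ M)
    {Ω : Type*} [MeasurableSpace Ω] (μ : Measure Ω) [IsProbabilityMeasure μ]
    (X : Fin M → Ω → Fin N)
    (hXmeas : ∀ j, Measurable (X j))
    (hXindep : iIndepFun X μ)
    (p : Fin M → Fin N → NNReal)
    (hp : ∀ j i, μ {ω | X j ω = i} = p j i)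
    (hpsum : ∀ j, ∑ i, p j i = 1)
    (g : Finpartition (Finset.univ : Finset (Fin M)))
    (A₁ A₂ : Finset (Fin M)) (hA : A₁ ≠ A₂)
    (hparts : g.parts = {A₁, A₂}) :
    (μ {ω | ∀ u v : Fin M, X u ω = X v ω ↔ ∃ B ∈ g.parts, u ∈ B ∧ v ∈ B}).toReal
      = (∑ i : Fin N, ∏ u ∈ A₁, (p u i : ℝ)) * (∑ i : Fin N, ∏ u ∈ A₂, (p u i : ℝ))
        - ∑ i : Fin N, ∏ u : Fin M, (p u i : ℝ) := by
  classical
  -- basic facts about the partition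
  have hA1mem : A₁ ∈ g.parts := by rw [hparts]; simp
  have hA2mem : A₂ ∈ g.parts := by rw [hparts]; simp
  have h1ne : A₁.Nonempty := g.nonempty_of_mem_parts hA1mem
  have h2ne : A₂.Nonempty := g.nonempty_of_mem_parts hA2mem
  have hdisj : Disjoint A₁ A₂ := g.disjoint hA1mem hA2mem hA
  have hunion : A₁ ∪ A₂ = (Finset.univ : Finset (Fin M)) := by
    have := g.sup_parts
    rw [hparts] at this
    simpa [Finset.sup_insert, Finset.sup_singleton, Finset.sup_union] using this
  have hmemor : ∀ u : Fin M, u ∈ A₁ ∨ u ∈ A₂ := by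
    intro u
    have : u ∈ A₁ ∪ A₂ := by rw [hunion]; exact Finset.mem_univ u
    simpa [Finset.mem_union] using this
  have hnot12 : ∀ u : Fin M, u ∈ A₁ → u ∉ A₂ := fun u h1 h2 =>
    (Finset.disjoint_left.mp hdisj h1) h2
  have hnot21 : ∀ u : Fin M, u ∈ A₂ → u ∉ A₁ := fun u h2 h1 =>
    (Finset.disjoint_left.mp hdisj h1) h2
  obtain ⟨u₀, hu₀⟩ := h1ne
  obtain ⟨v₀, hv₀⟩ := h2ne
  -- the elementary events
  set S : Fin N × Fin N → Set Ω :=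
    fun q => {ω | (∀ u ∈ A₁, X u ω = q.1) ∧ ∀ v ∈ A₂, X v ω = q.2} with hS
  -- measure of each elementary event
  have hSmeas : ∀ q : Fin N × Fin N,
      μ (S q) = (∏ u ∈ A₁, (p u q.1 : ENNReal)) * ∏ v ∈ A₂, (p v q.2 : ENNReal) := by
    rintro ⟨a, b⟩
    set f : Fin M → Fin N := fun u => if u ∈ A₁ then a else b with hf
    have hSet : S (a, b) = ⋂ u ∈ (Finset.univ : Finset (Fin M)), X u ⁻¹' {f u} := by
      ext ω
      simp only [hS, Set.mem_setOf_eq, Set.mem_iInter, Set.mem_preimage,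
        Set.mem_singleton_iff, Finset.mem_univ, forall_true_left, hf]
      constructor
      · rintro ⟨h1, h2⟩ u
        rcases hmemor u with hu | hu
        · rw [if_pos hu]; exact h1 u hu
        · rw [if_neg (hnot21 u hu)]; exact h2 u hu
      · intro h
        constructor
        · intro u hu; have hx := h u; rwa [if_pos hu] at hx
        · intro u hu; have hx := h u; rwa [if_neg (hnot21 u hu)] at hx
    have hind := (iIndepFun_iff_measure_inter_preimage_eq_mul.mp hXindep)
      (Finset.univ) (sets := fun u => {f u}) (fun u _ => measurableSet_singleton _)
    have hpre : ∀ u : Fin M, X u ⁻¹' {f u} = {ω | X u ω = f u} := fun u => rfl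
    rw [hSet, hind]
    have : ∀ u : Fin M, μ (X u ⁻¹' {f u}) = (p u (f u) : ENNReal) := by
      intro u; rw [hpre]; exact hp u (f u)
    rw [Finset.prod_congr rfl fun u _ => this u]
    rw [← hunion, Finset.prod_union hdisj]
    congr 1
    · exact Finset.prod_congr rfl fun u hu => by simp [hf, hu]
    · exact Finset.prod_congr rfl fun u hu => by
        simp [hf, hnot21 u hu]
  -- the event as a disjoint union
  have hEvent : {ω | ∀ u v : Fin M, X u ω = X v ω ↔ ∃ B ∈ g.parts, u ∈ B ∧ v ∈ B}
      = ⋃ q ∈ (Finset.univ : Finset (Fin N)).offDiag, S q := by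
    ext ω
    simp only [Set.mem_setOf_eq, Set.mem_iUnion, Finset.mem_offDiag, Finset.mem_univ,
      true_and, hS, hparts, Finset.mem_insert, Finset.mem_singleton]
    constructor
    · intro h
      refine ⟨(X u₀ ω, X v₀ ω), ?_, ?_, ?_⟩
      · intro hab
        have : ∃ B, (B = A₁ ∨ B = A₂) ∧ u₀ ∈ B ∧ v₀ ∈ B := (h u₀ v₀).mp hab
        obtain ⟨B, hB, hu, hv⟩ := this
        rcases hB with rfl | rfl
        · exact hnot12 v₀ hv hv₀
        · exact hnot12 u₀ hu₀ hu
      · intro u hu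
        exact (h u u₀).mpr ⟨A₁, Or.inl rfl, hu, hu₀⟩
      · intro v hv
        exact (h v v₀).mpr ⟨A₂, Or.inr rfl, hv, hv₀⟩
    · rintro ⟨⟨a, b⟩, hab, h1, h2⟩
      intro u v
      constructor
      · intro huv
        rcases hmemor u with hu | hu <;> rcases hmemor v with hv | hv
        · exact ⟨A₁, Or.inl rfl, hu, hv⟩
        · exfalso; rw [h1 u hu, h2 v hv] at huv; exact hab huv
        · exfalso; rw [h2 u hu, h1 v hv] at huv; exact hab huv.symm
        · exact ⟨A₂, Or.inr rfl, hu, hv⟩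
      · rintro ⟨B, hB, hu, hv⟩
        rcases hB with rfl | rfl
        · rw [h1 u hu, h1 v hv]
        · rw [h2 u hu, h2 v hv]
  -- disjointness
  have hpair : (↑((Finset.univ : Finset (Fin N)).offDiag) : Set (Fin N × Fin N)).PairwiseDisjoint S := by
    rintro ⟨a, b⟩ _ ⟨a', b'⟩ _ hne
    simp only [Function.onFun, Set.disjoint_left]
    rintro ω ⟨h1, h2⟩ ⟨h1', h2'⟩
    apply hne
    have ha : a = a' := (h1 u₀ hu₀).symm.trans (h1' u₀ hu₀)
    have hb : b = b' := (h2 v₀ hv₀).symm.trans (h2' v₀ hv₀)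
    simp [ha, hb]
  have hSmeasurable : ∀ q : Fin N × Fin N, MeasurableSet (S q) := by
    rintro ⟨a, b⟩
    have : S (a, b) = (⋂ u ∈ A₁, X u ⁻¹' {a}) ∩ ⋂ v ∈ A₂, X v ⁻¹' {b} := by
      ext ω; simp [hS]
    rw [this]
    exact ((MeasurableSet.biInter (A₁ : Finset (Fin M)).countable_toSet
      fun u _ => (hXmeas u) (measurableSet_singleton a)).inter
      (MeasurableSet.biInter (A₂ : Finset (Fin M)).countable_toSet
      fun v _ => (hXmeas v) (measurableSet_singleton b)))
  rw [hEvent, measure_biUnion_finset hpair fun q _ => hSmeasurable q]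
  rw [Finset.sum_congr rfl fun q _ => hSmeas q]
  -- now push to ℝ
  have hcast : ∀ q : Fin N × Fin N,
      (∏ u ∈ A₁, (p u q.1 : ENNReal)) * ∏ v ∈ A₂, (p v q.2 : ENNReal)
        = (((∏ u ∈ A₁, p u q.1) * ∏ v ∈ A₂, p v q.2 : NNReal) : ENNReal) := by
    intro q; push_cast; ring
  rw [Finset.sum_congr rfl fun q _ => hcast q, ← ENNReal.coe_finset_sum, ENNReal.coe_toReal]
  push_cast
  -- algebraic identity over ℝ
  have key : ∑ q ∈ (Finset.univ : Finset (Fin N)).offDiag,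
        (∏ u ∈ A₁, (p u q.1 : ℝ)) * ∏ v ∈ A₂, (p v q.2 : ℝ)
      = (∑ i : Fin N, ∏ u ∈ A₁, (p u i : ℝ)) * (∑ i : Fin N, ∏ u ∈ A₂, (p u i : ℝ))
        - ∑ i : Fin N, (∏ u ∈ A₁, (p u i : ℝ)) * ∏ u ∈ A₂, (p u i : ℝ) := by
    have hsplit := Finset.sum_union (f := fun q : Fin N × Fin N =>
        (∏ u ∈ A₁, (p u q.1 : ℝ)) * ∏ v ∈ A₂, (p v q.2 : ℝ))
      (Finset.disjoint_diag_offDiag (Finset.univ : Finset (Fin N)))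
    rw [Finset.diag_union_offDiag] at hsplit
    have hprod : ∑ q ∈ (Finset.univ : Finset (Fin N)) ×ˢ Finset.univ,
        (∏ u ∈ A₁, (p u q.1 : ℝ)) * ∏ v ∈ A₂, (p v q.2 : ℝ)
        = (∑ i : Fin N, ∏ u ∈ A₁, (p u i : ℝ)) * (∑ i : Fin N, ∏ u ∈ A₂, (p u i : ℝ)) := by
      rw [Finset.sum_mul_sum, Finset.sum_product]
    have hdiag : ∑ q ∈ (Finset.univ : Finset (Fin N)).diag,
        (∏ u ∈ A₁, (p u q.1 : ℝ)) * ∏ v ∈ A₂, (p v q.2 : ℝ)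
        = ∑ i : Fin N, (∏ u ∈ A₁, (p u i : ℝ)) * ∏ u ∈ A₂, (p u i : ℝ) :=
      Finset.sum_diag _ _
    linarith [hsplit, hprod, hdiag]
  rw [key]
  congr 1
  refine Finset.sum_congr rfl fun i _ => ?_
  rw [← Finset.prod_union hdisj, hunion]
end

section
/- (3-clique formula) Let g be a contact graph with exactly three blocks A_1, A_2, A_3. Writing A_{ij} = A_i ∪ A_j and 𝓜 = Fin M, μ(E_g) = σ(A_1)σ(A_2)σ(A_3) − σ(A_{12})σ(A_3) − σ(A_{13})σ(A_2) − σ(A_{23})σ(A_1) + 2·σ(𝓜). -/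
open MeasureTheory ProbabilityTheory

/-- `σ(A) = ∑ i, ∏ u ∈ A, p u i`, as a real number. -/
def sigmaProb (N M : ℕ) (p : Fin M → Fin N → NNReal) (A : Finset (Fin M)) : ℝ :=
  ∑ i : Fin N, ∏ u ∈ A, (p u i : ℝ)


private lemma indicator_aux {α : Type*} [DecidableEq α] (i₁ i₂ i₃ : α) (x : ℝ) :
    (if i₁ ≠ i₂ ∧ i₁ ≠ i₃ ∧ i₂ ≠ i₃ then x else 0)
      = x - (if i₂ = i₁ then x else 0) - (if i₃ = i₁ then x else 0)
        - (if i₃ = i₂ then x else 0)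
        + ((if i₂ = i₁ ∧ i₃ = i₁ then x else 0) + (if i₂ = i₁ ∧ i₃ = i₁ then x else 0)) := by
  by_cases h1 : i₂ = i₁ <;> by_cases h2 : i₃ = i₁ <;> by_cases h3 : i₃ = i₂ <;>
    simp_all [eq_comm] <;> ring

/-- 3-clique formula: if the contact graph `g` has exactly three blocks
`A₁, A₂, A₃`, then `μ(E_g) = σ(A₁)σ(A₂)σ(A₃) − σ(A₁∪A₂)σ(A₃) − σ(A₁∪A₃)σ(A₂)
− σ(A₂∪A₃)σ(A₁) + 2σ(𝓜)`. -/
theorem contact_graph_prob_three_cliques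
    (N M : ℕ) (hN : 1 ≤ N) (hM : 1 ≤ M)
    {Ω : Type*} [MeasurableSpace Ω] (μ : Measure Ω) [IsProbabilityMeasure μ]
    (X : Fin M → Ω → Fin N)
    (hXmeas : ∀ j, Measurable (X j))
    (hXindep : iIndepFun X μ)
    (p : Fin M → Fin N → NNReal)
    (hp : ∀ j i, μ {ω | X j ω = i} = p j i)
    (hpsum : ∀ j, ∑ i, p j i = 1)
    (g : Finpartition (Finset.univ : Finset (Fin M)))
    (A₁ A₂ A₃ : Finset (Fin M))
    (h12 : A₁ ≠ A₂) (h13 : A₁ ≠ A₃) (h23 : A₂ ≠ A₃)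
    (hparts : g.parts = {A₁, A₂, A₃}) :
    (μ {ω | ∀ u v : Fin M, X u ω = X v ω ↔ ∃ B ∈ g.parts, u ∈ B ∧ v ∈ B}).toReal
      = sigmaProb N M p A₁ * sigmaProb N M p A₂ * sigmaProb N M p A₃
        - sigmaProb N M p (A₁ ∪ A₂) * sigmaProb N M p A₃
        - sigmaProb N M p (A₁ ∪ A₃) * sigmaProb N M p A₂
        - sigmaProb N M p (A₂ ∪ A₃) * sigmaProb N M p A₁
        + 2 * sigmaProb N M p Finset.univ := by
  classical
  have hA1 : A₁ ∈ g.parts := by rw [hparts]; simp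
  have hA2 : A₂ ∈ g.parts := by rw [hparts]; simp
  have hA3 : A₃ ∈ g.parts := by rw [hparts]; simp
  have d12 : Disjoint A₁ A₂ := g.disjoint hA1 hA2 h12
  have d13 : Disjoint A₁ A₃ := g.disjoint hA1 hA3 h13
  have d23 : Disjoint A₂ A₃ := g.disjoint hA2 hA3 h23
  obtain ⟨a₁, ha₁⟩ := g.nonempty_of_mem_parts hA1
  obtain ⟨a₂, ha₂⟩ := g.nonempty_of_mem_parts hA2
  obtain ⟨a₃, ha₃⟩ := g.nonempty_of_mem_parts hA3
  have n12 : a₁ ∉ A₂ := Finset.disjoint_left.mp d12 ha₁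
  have n13 : a₁ ∉ A₃ := Finset.disjoint_left.mp d13 ha₁
  have n21 : a₂ ∉ A₁ := Finset.disjoint_right.mp d12 ha₂
  have n23 : a₂ ∉ A₃ := Finset.disjoint_left.mp d23 ha₂
  have n31 : a₃ ∉ A₁ := Finset.disjoint_right.mp d13 ha₃
  have n32 : a₃ ∉ A₂ := Finset.disjoint_right.mp d23 ha₃
  have hcover : ∀ u : Fin M, u ∈ A₁ ∨ u ∈ A₂ ∨ u ∈ A₃ := by
    intro u
    obtain ⟨B, hB, huB⟩ := g.exists_mem (Finset.mem_univ u)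
    rw [hparts] at hB
    simp only [Finset.mem_insert, Finset.mem_singleton] at hB
    rcases hB with rfl | rfl | rfl
    · exact Or.inl huB
    · exact Or.inr (Or.inl huB)
    · exact Or.inr (Or.inr huB)
  have hsame : ∀ u v : Fin M, (∃ B ∈ g.parts, u ∈ B ∧ v ∈ B) ↔
      (u ∈ A₁ ∧ v ∈ A₁) ∨ (u ∈ A₂ ∧ v ∈ A₂) ∨ (u ∈ A₃ ∧ v ∈ A₃) := by
    intro u v
    rw [hparts]
    constructor
    · rintro ⟨B, hB, h⟩
      simp only [Finset.mem_insert, Finset.mem_singleton] at hB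
      rcases hB with rfl | rfl | rfl <;> tauto
    · rintro (⟨h1, h2⟩ | ⟨h1, h2⟩ | ⟨h1, h2⟩)
      · exact ⟨A₁, by simp, h1, h2⟩
      · exact ⟨A₂, by simp, h1, h2⟩
      · exact ⟨A₃, by simp, h1, h2⟩
  -- the colouring associated to a triple of values
  set c : Fin N → Fin N → Fin N → Fin M → Fin N :=
    fun i₁ i₂ i₃ u => if u ∈ A₁ then i₁ else if u ∈ A₂ then i₂ else i₃ with hc
  have hc1 : ∀ i₁ i₂ i₃ u, u ∈ A₁ → c i₁ i₂ i₃ u = i₁ := fun _ _ _ u hu => if_pos hu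
  have hc2 : ∀ i₁ i₂ i₃ u, u ∈ A₂ → c i₁ i₂ i₃ u = i₂ := by
    intro i₁ i₂ i₃ u hu
    have h1 : u ∉ A₁ := Finset.disjoint_right.mp d12 hu
    simp [hc, h1, hu]
  have hc3 : ∀ i₁ i₂ i₃ u, u ∈ A₃ → c i₁ i₂ i₃ u = i₃ := by
    intro i₁ i₂ i₃ u hu
    have h1 : u ∉ A₁ := Finset.disjoint_right.mp d13 hu
    have h2 : u ∉ A₂ := Finset.disjoint_right.mp d23 hu
    simp [hc, h1, h2]
  -- probability of a full assignment
  have hkey : ∀ f : Fin M → Fin N,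
      μ {ω | ∀ u, X u ω = f u} = ∏ u, (p u (f u) : ENNReal) := by
    intro f
    have hset : {ω | ∀ u, X u ω = f u} = ⋂ u, X u ⁻¹' {f u} := by
      ext ω; simp [Set.mem_iInter]
    rw [hset, hXindep.meas_iInter (fun u => ⟨{f u}, measurableSet_singleton _, rfl⟩)]
    refine Finset.prod_congr rfl fun u _ => ?_
    have : X u ⁻¹' {f u} = {ω | X u ω = f u} := by ext ω; simp
    rw [this, hp]
  -- the events
  set S : Fin N × Fin N × Fin N → Set Ω :=
    fun i => {ω | ∀ u, X u ω = c i.1 i.2.1 i.2.2 u} with hS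
  set T : Finset (Fin N × Fin N × Fin N) :=
    Finset.univ.filter (fun i => i.1 ≠ i.2.1 ∧ i.1 ≠ i.2.2 ∧ i.2.1 ≠ i.2.2) with hT
  have hE : {ω | ∀ u v : Fin M, X u ω = X v ω ↔ ∃ B ∈ g.parts, u ∈ B ∧ v ∈ B}
      = ⋃ i ∈ T, S i := by
    ext ω
    simp only [Set.mem_setOf_eq, Set.mem_iUnion, hT, Finset.mem_filter, Finset.mem_univ,
      true_and]
    constructor
    · intro hω
      refine ⟨(X a₁ ω, X a₂ ω, X a₃ ω), ⟨?_, ?_, ?_⟩, ?_⟩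
      · intro h
        have := (hω a₁ a₂).mp h
        rw [hsame] at this
        tauto
      · intro h
        have := (hω a₁ a₃).mp h
        rw [hsame] at this
        tauto
      · intro h
        have := (hω a₂ a₃).mp h
        rw [hsame] at this
        tauto
      · intro u
        rcases hcover u with hu | hu | hu
        · rw [hc1 _ _ _ _ hu]
          exact (hω u a₁).mpr ((hsame u a₁).mpr (Or.inl ⟨hu, ha₁⟩))
        · rw [hc2 _ _ _ _ hu]
          exact (hω u a₂).mpr ((hsame u a₂).mpr (Or.inr (Or.inl ⟨hu, ha₂⟩)))
        · rw [hc3 _ _ _ _ hu]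
          exact (hω u a₃).mpr ((hsame u a₃).mpr (Or.inr (Or.inr ⟨hu, ha₃⟩)))
    · rintro ⟨⟨i₁, i₂, i₃⟩, ⟨hne12, hne13, hne23⟩, hω⟩
      intro u v
      rw [hω u, hω v, hsame]
      constructor
      · intro h
        rcases hcover u with hu | hu | hu <;> rcases hcover v with hv | hv | hv
        · exact Or.inl ⟨hu, hv⟩
        · exact absurd h (by rw [hc1 _ _ _ _ hu, hc2 _ _ _ _ hv]; exact hne12)
        · exact absurd h (by rw [hc1 _ _ _ _ hu, hc3 _ _ _ _ hv]; exact hne13)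
        · exact absurd h (by rw [hc2 _ _ _ _ hu, hc1 _ _ _ _ hv]; exact (Ne.symm hne12))
        · exact Or.inr (Or.inl ⟨hu, hv⟩)
        · exact absurd h (by rw [hc2 _ _ _ _ hu, hc3 _ _ _ _ hv]; exact hne23)
        · exact absurd h (by rw [hc3 _ _ _ _ hu, hc1 _ _ _ _ hv]; exact (Ne.symm hne13))
        · exact absurd h (by rw [hc3 _ _ _ _ hu, hc2 _ _ _ _ hv]; exact (Ne.symm hne23))
        · exact Or.inr (Or.inr ⟨hu, hv⟩)
      · rintro (⟨hu, hv⟩ | ⟨hu, hv⟩ | ⟨hu, hv⟩)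
        · rw [hc1 _ _ _ _ hu, hc1 _ _ _ _ hv]
        · rw [hc2 _ _ _ _ hu, hc2 _ _ _ _ hv]
        · rw [hc3 _ _ _ _ hu, hc3 _ _ _ _ hv]
  have hSmeas : ∀ i, MeasurableSet (S i) := by
    intro i
    have : S i = ⋂ u, X u ⁻¹' {c i.1 i.2.1 i.2.2 u} := by
      ext ω; simp [hS, Set.mem_iInter]
    rw [this]
    exact MeasurableSet.iInter fun u => hXmeas u (measurableSet_singleton _)
  have hSdisj : (↑T : Set (Fin N × Fin N × Fin N)).PairwiseDisjoint S := by
    intro i _ j _ hij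
    refine Set.disjoint_left.mpr fun ω hωi hωj => hij ?_
    have hcc : ∀ u, c i.1 i.2.1 i.2.2 u = c j.1 j.2.1 j.2.2 u := by
      intro u; rw [← hωi u, hωj u]
    have e1 : i.1 = j.1 := by
      have := hcc a₁; rwa [hc1 _ _ _ _ ha₁, hc1 _ _ _ _ ha₁] at this
    have e2 : i.2.1 = j.2.1 := by
      have := hcc a₂; rwa [hc2 _ _ _ _ ha₂, hc2 _ _ _ _ ha₂] at this
    have e3 : i.2.2 = j.2.2 := by
      have := hcc a₃; rwa [hc3 _ _ _ _ ha₃, hc3 _ _ _ _ ha₃] at this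
    exact Prod.ext e1 (Prod.ext e2 e3)
  have hmeasE : μ {ω | ∀ u v : Fin M, X u ω = X v ω ↔ ∃ B ∈ g.parts, u ∈ B ∧ v ∈ B}
      = ∑ i ∈ T, ∏ u, (p u (c i.1 i.2.1 i.2.2 u) : ENNReal) := by
    rw [hE, measure_biUnion_finset hSdisj fun i _ => hSmeas i]
    exact Finset.sum_congr rfl fun i _ => hkey _
  -- pass to real numbers
  have htoReal : (μ {ω | ∀ u v : Fin M, X u ω = X v ω ↔ ∃ B ∈ g.parts, u ∈ B ∧ v ∈ B}).toReal
      = ∑ i ∈ T, ∏ u, (p u (c i.1 i.2.1 i.2.2 u) : ℝ) := by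
    rw [hmeasE, ENNReal.toReal_sum (fun i _ => by
      rw [← ENNReal.coe_finset_prod]; exact ENNReal.coe_ne_top)]
    refine Finset.sum_congr rfl fun i _ => ?_
    rw [← ENNReal.coe_finset_prod, ENNReal.coe_toReal, NNReal.coe_prod]
  rw [htoReal]
  -- factor the product over the three blocks
  set f₁ : Fin N → ℝ := fun i => ∏ u ∈ A₁, (p u i : ℝ) with hf₁
  set f₂ : Fin N → ℝ := fun i => ∏ u ∈ A₂, (p u i : ℝ) with hf₂
  set f₃ : Fin N → ℝ := fun i => ∏ u ∈ A₃, (p u i : ℝ) with hf₃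
  have huniv : A₁ ∪ A₂ ∪ A₃ = (Finset.univ : Finset (Fin M)) := by
    ext u
    simp only [Finset.mem_union, Finset.mem_univ, iff_true]
    rcases hcover u with h | h | h <;> tauto
  have d12_3 : Disjoint (A₁ ∪ A₂) A₃ := Finset.disjoint_union_left.mpr ⟨d13, d23⟩
  have hprod : ∀ i₁ i₂ i₃ : Fin N,
      (∏ u, (p u (c i₁ i₂ i₃ u) : ℝ)) = f₁ i₁ * f₂ i₂ * f₃ i₃ := by
    intro i₁ i₂ i₃
    rw [← huniv, Finset.prod_union d12_3, Finset.prod_union d12]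
    congr 1
    · congr 1
      · exact Finset.prod_congr rfl fun u hu => by rw [hc1 _ _ _ _ hu]
      · exact Finset.prod_congr rfl fun u hu => by rw [hc2 _ _ _ _ hu]
    · exact Finset.prod_congr rfl fun u hu => by rw [hc3 _ _ _ _ hu]
  -- sigma identities
  have hs1 : sigmaProb N M p A₁ = ∑ i, f₁ i := rfl
  have hs2 : sigmaProb N M p A₂ = ∑ i, f₂ i := rfl
  have hs3 : sigmaProb N M p A₃ = ∑ i, f₃ i := rfl
  have hs12 : sigmaProb N M p (A₁ ∪ A₂) = ∑ i, f₁ i * f₂ i :=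
    Finset.sum_congr rfl fun i _ => Finset.prod_union d12
  have hs13 : sigmaProb N M p (A₁ ∪ A₃) = ∑ i, f₁ i * f₃ i :=
    Finset.sum_congr rfl fun i _ => Finset.prod_union d13
  have hs23 : sigmaProb N M p (A₂ ∪ A₃) = ∑ i, f₂ i * f₃ i :=
    Finset.sum_congr rfl fun i _ => Finset.prod_union d23
  have hsU : sigmaProb N M p Finset.univ = ∑ i, f₁ i * f₂ i * f₃ i := by
    refine Finset.sum_congr rfl fun i _ => ?_
    rw [← huniv, Finset.prod_union d12_3, Finset.prod_union d12]
  rw [hs1, hs2, hs3, hs12, hs13, hs23, hsU]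
  -- rewrite the sum over T
  have hsumT : (∑ i ∈ T, ∏ u, (p u (c i.1 i.2.1 i.2.2 u) : ℝ))
      = ∑ i₁ : Fin N, ∑ i₂ : Fin N, ∑ i₃ : Fin N,
          if i₁ ≠ i₂ ∧ i₁ ≠ i₃ ∧ i₂ ≠ i₃ then f₁ i₁ * f₂ i₂ * f₃ i₃ else 0 := by
    rw [hT, Finset.sum_filter, Fintype.sum_prod_type]
    refine Finset.sum_congr rfl fun i₁ _ => ?_
    rw [Fintype.sum_prod_type]
    refine Finset.sum_congr rfl fun i₂ _ => Finset.sum_congr rfl fun i₃ _ => ?_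
    by_cases h : i₁ ≠ i₂ ∧ i₁ ≠ i₃ ∧ i₂ ≠ i₃
    · rw [if_pos h, if_pos h, hprod]
    · rw [if_neg h, if_neg h]
  rw [hsumT]
  -- the inclusion–exclusion identity, pointwise then summed
  have hpt : ∀ i₁ i₂ i₃ : Fin N,
      (if i₁ ≠ i₂ ∧ i₁ ≠ i₃ ∧ i₂ ≠ i₃ then f₁ i₁ * f₂ i₂ * f₃ i₃ else 0)
      = f₁ i₁ * f₂ i₂ * f₃ i₃
        - (if i₂ = i₁ then f₁ i₁ * f₂ i₂ * f₃ i₃ else 0)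
        - (if i₃ = i₁ then f₁ i₁ * f₂ i₂ * f₃ i₃ else 0)
        - (if i₃ = i₂ then f₁ i₁ * f₂ i₂ * f₃ i₃ else 0)
        + ((if i₂ = i₁ ∧ i₃ = i₁ then f₁ i₁ * f₂ i₂ * f₃ i₃ else 0)
          + (if i₂ = i₁ ∧ i₃ = i₁ then f₁ i₁ * f₂ i₂ * f₃ i₃ else 0)) := by
    intro i₁ i₂ i₃
    exact indicator_aux i₁ i₂ i₃ _
  simp only [hpt]
  simp only [Finset.sum_add_distrib, Finset.sum_sub_distrib]
  -- evaluate the five sums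
  have h_all : (∑ i₁ : Fin N, ∑ i₂ : Fin N, ∑ i₃ : Fin N, f₁ i₁ * f₂ i₂ * f₃ i₃)
      = (∑ i, f₁ i) * (∑ i, f₂ i) * (∑ i, f₃ i) := by
    have e3 : ∀ i₁ i₂ : Fin N, (∑ i₃ : Fin N, f₁ i₁ * f₂ i₂ * f₃ i₃)
        = f₁ i₁ * f₂ i₂ * ∑ i, f₃ i := fun i₁ i₂ => (Finset.mul_sum _ _ _).symm
    simp only [e3]
    have e2 : ∀ i₁ : Fin N, (∑ i₂ : Fin N, f₁ i₁ * f₂ i₂ * ∑ i, f₃ i)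
        = f₁ i₁ * (∑ i, f₂ i) * ∑ i, f₃ i := by
      intro i₁
      rw [← Finset.sum_mul, ← Finset.mul_sum]
    simp only [e2]
    rw [← Finset.sum_mul, ← Finset.sum_mul]
  have h_12 : (∑ i₁ : Fin N, ∑ i₂ : Fin N, ∑ i₃ : Fin N,
        if i₂ = i₁ then f₁ i₁ * f₂ i₂ * f₃ i₃ else 0)
      = (∑ i, f₁ i * f₂ i) * (∑ i, f₃ i) := by
    have : ∀ i₁ : Fin N, (∑ i₂ : Fin N, ∑ i₃ : Fin N,
        if i₂ = i₁ then f₁ i₁ * f₂ i₂ * f₃ i₃ else 0)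
        = (f₁ i₁ * f₂ i₁) * ∑ i₃, f₃ i₃ := by
      intro i₁
      rw [Finset.sum_comm]
      simp only [Fintype.sum_ite_eq']
      rw [← Finset.mul_sum]
    simp only [this]
    rw [← Finset.sum_mul]
  have h_13 : (∑ i₁ : Fin N, ∑ i₂ : Fin N, ∑ i₃ : Fin N,
        if i₃ = i₁ then f₁ i₁ * f₂ i₂ * f₃ i₃ else 0)
      = (∑ i, f₁ i * f₃ i) * (∑ i, f₂ i) := by
    have : ∀ i₁ : Fin N, (∑ i₂ : Fin N, ∑ i₃ : Fin N,
        if i₃ = i₁ then f₁ i₁ * f₂ i₂ * f₃ i₃ else 0)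
        = (f₁ i₁ * f₃ i₁) * ∑ i₂, f₂ i₂ := by
      intro i₁
      simp only [Fintype.sum_ite_eq']
      rw [Finset.mul_sum]
      exact Finset.sum_congr rfl fun i₂ _ => by ring
    simp only [this]
    rw [← Finset.sum_mul]
  have h_23 : (∑ i₁ : Fin N, ∑ i₂ : Fin N, ∑ i₃ : Fin N,
        if i₃ = i₂ then f₁ i₁ * f₂ i₂ * f₃ i₃ else 0)
      = (∑ i, f₂ i * f₃ i) * (∑ i, f₁ i) := by
    have : ∀ i₁ : Fin N, (∑ i₂ : Fin N, ∑ i₃ : Fin N,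
        if i₃ = i₂ then f₁ i₁ * f₂ i₂ * f₃ i₃ else 0)
        = f₁ i₁ * ∑ i₂, f₂ i₂ * f₃ i₂ := by
      intro i₁
      simp only [Fintype.sum_ite_eq']
      rw [Finset.mul_sum]
      exact Finset.sum_congr rfl fun i₂ _ => by ring
    simp only [this]
    rw [← Finset.sum_mul, mul_comm]
  have h_eq : (∑ i₁ : Fin N, ∑ i₂ : Fin N, ∑ i₃ : Fin N,
        if i₂ = i₁ ∧ i₃ = i₁ then f₁ i₁ * f₂ i₂ * f₃ i₃ else 0)
      = ∑ i, f₁ i * f₂ i * f₃ i := by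
    refine Finset.sum_congr rfl fun i₁ _ => ?_
    have inner : ∀ i₂ : Fin N, (∑ i₃ : Fin N,
        if i₂ = i₁ ∧ i₃ = i₁ then f₁ i₁ * f₂ i₂ * f₃ i₃ else 0)
        = if i₂ = i₁ then f₁ i₁ * f₂ i₂ * f₃ i₁ else 0 := by
      intro i₂
      by_cases h : i₂ = i₁
      · simp only [h, true_and, if_true]
        exact Fintype.sum_ite_eq' i₁ (fun i₃ => f₁ i₁ * f₂ i₁ * f₃ i₃)
      · simp [h]
    simp only [inner]
    exact Fintype.sum_ite_eq' i₁ (fun i₂ => f₁ i₁ * f₂ i₂ * f₃ i₁)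
  rw [h_all, h_12, h_13, h_23, h_eq]
  ring
end

section
/- (4-clique formula) Let g be a contact graph with exactly four blocks A_1, A_2, A_3, A_4. Writing A_{ij} = A_i ∪ A_j, A_{ijk} = A_i ∪ A_j ∪ A_k and 𝓜 = Fin M, μ(E_g) = σ(A_1)σ(A_2)σ(A_3)σ(A_4) − σ(A_{12})σ(A_3)σ(A_4) − σ(A_{13})σ(A_2)σ(A_4) − σ(A_{14})σ(A_2)σ(A_3) − σ(A_{23})σ(A_1)σ(A_4) − σ(A_{24})σ(A_1)σ(A_3) − σ(A_{34})σ(A_1)σ(A_2) + 2(σ(A_{123})σ(A_4) + σ(A_{124})σ(A_3) + σ(A_{134})σ(A_2) + σ(A_{234})σ(A_1)) + σ(A_{12})σ(A_{34}) + σ(A_{13})σ(A_{24}) + σ(A_{14})σ(A_{23}) − 6·σ(𝓜). -/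
open MeasureTheory ProbabilityTheory
open scoped ENNReal NNReal

private lemma sum_ne2 {n : ℕ} (i j : Fin n) (hij : i ≠ j) (c : Fin n → ℝ) :
    (∑ k, if i ≠ k ∧ j ≠ k then c k else 0) = (∑ k, c k) - c i - c j := by
  have h : ∀ k, (if i ≠ k ∧ j ≠ k then c k else 0)
      = c k - ((if k = i then c k else 0) + (if k = j then c k else 0)) := by
    intro k
    by_cases h1 : k = i <;> by_cases h2 : k = j <;> simp_all (config := {decide := false}) [eq_comm]
  simp_rw [h]
  rw [Finset.sum_sub_distrib, Finset.sum_add_distrib, Finset.sum_ite_eq', Finset.sum_ite_eq']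
  simp; ring

private lemma two_sum {n : ℕ} (a b : Fin n → ℝ) :
    (∑ i, ∑ j, if i ≠ j then a i * b j else 0)
      = (∑ i, a i) * (∑ i, b i) - ∑ i, a i * b i := by
  have h : ∀ i j : Fin n, (if i ≠ j then a i * b j else 0)
      = a i * b j - (if j = i then a i * b j else 0) := by
    intro i j; by_cases h : i = j <;> simp_all (config := {decide := false}) [eq_comm]
  simp_rw [h]
  rw [Finset.sum_congr rfl (fun i _ => Finset.sum_sub_distrib _ _)]
  simp_rw [Finset.sum_ite_eq', Finset.mem_univ, if_true, ← Finset.mul_sum]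
  rw [Finset.sum_sub_distrib, ← Finset.sum_mul]

private lemma triple_sum {n : ℕ} (a b c : Fin n → ℝ) :
    (∑ i, ∑ j, ∑ k, if i ≠ j ∧ i ≠ k ∧ j ≠ k then a i * b j * c k else 0)
      = (∑ i, a i) * (∑ i, b i) * (∑ i, c i)
        - (∑ i, a i * b i) * (∑ i, c i)
        - (∑ i, a i * c i) * (∑ i, b i)
        - (∑ i, a i) * (∑ i, b i * c i)
        + 2 * (∑ i, a i * b i * c i) := by
  have step : ∀ i j : Fin n, (∑ k, if i ≠ j ∧ i ≠ k ∧ j ≠ k then a i * b j * c k else 0)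
      = (if i ≠ j then a i * b j * ((∑ k, c k) - c i - c j) else 0) := by
    intro i j
    by_cases hij : i ≠ j
    · have h2 : ∀ k, (if i ≠ j ∧ i ≠ k ∧ j ≠ k then a i * b j * c k else 0)
          = a i * b j * (if i ≠ k ∧ j ≠ k then c k else 0) := by
        intro k; by_cases h : i ≠ k ∧ j ≠ k <;> simp [h, hij]
      simp_rw [h2]
      rw [← Finset.mul_sum, sum_ne2 i j hij, if_pos hij]
    · simp [hij]
  simp_rw [step]
  have split : ∀ i j : Fin n, (if i ≠ j then a i * b j * ((∑ k, c k) - c i - c j) else 0)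
      = (if i ≠ j then a i * b j else 0) * (∑ k, c k)
        - (if i ≠ j then (a i * c i) * b j else 0)
        - (if i ≠ j then a i * (b j * c j) else 0) := by
    intro i j; by_cases hij : i ≠ j <;> simp [hij] <;> ring
  simp_rw [split]
  simp only [Finset.sum_sub_distrib]
  simp_rw [← Finset.sum_mul]
  rw [two_sum a b, two_sum (fun i => a i * c i) b, two_sum a (fun j => b j * c j)]
  have hre : (∑ i, a i * c i * b i) = ∑ i, a i * b i * c i :=
    Finset.sum_congr rfl (fun i _ => by ring)
  rw [hre]; ring

private lemma sum_ne3 {n : ℕ} (i j k : Fin n) (hij : i ≠ j) (hik : i ≠ k) (hjk : j ≠ k) (d : Fin n → ℝ) :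
    (∑ l, if i ≠ l ∧ j ≠ l ∧ k ≠ l then d l else 0)
      = (∑ l, d l) - d i - d j - d k := by
  have h : ∀ l, (if i ≠ l ∧ j ≠ l ∧ k ≠ l then d l else 0)
      = d l - ((if l = i then d l else 0) + (if l = j then d l else 0) + (if l = k then d l else 0)) := by
    intro l
    by_cases h1 : l = i <;> by_cases h2 : l = j <;> by_cases h3 : l = k <;>
      simp_all (config := {decide := false}) [eq_comm]
  simp_rw [h]
  rw [Finset.sum_sub_distrib, Finset.sum_add_distrib, Finset.sum_add_distrib,
    Finset.sum_ite_eq', Finset.sum_ite_eq', Finset.sum_ite_eq']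
  simp; ring

private lemma quad_sum {n : ℕ} (a b c d : Fin n → ℝ) :
    (∑ i, ∑ j, ∑ k, ∑ l, if i ≠ j ∧ i ≠ k ∧ i ≠ l ∧ j ≠ k ∧ j ≠ l ∧ k ≠ l
        then a i * b j * c k * d l else 0)
      = (∑ i, a i) * (∑ i, b i) * (∑ i, c i) * (∑ i, d i)
        - (∑ i, a i * b i) * (∑ i, c i) * (∑ i, d i)
        - (∑ i, a i * c i) * (∑ i, b i) * (∑ i, d i)
        - (∑ i, a i * d i) * (∑ i, b i) * (∑ i, c i)
        - (∑ i, b i * c i) * (∑ i, a i) * (∑ i, d i)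
        - (∑ i, b i * d i) * (∑ i, a i) * (∑ i, c i)
        - (∑ i, c i * d i) * (∑ i, a i) * (∑ i, b i)
        + 2 * ((∑ i, a i * b i * c i) * (∑ i, d i)
             + (∑ i, a i * b i * d i) * (∑ i, c i)
             + (∑ i, a i * c i * d i) * (∑ i, b i)
             + (∑ i, b i * c i * d i) * (∑ i, a i))
        + (∑ i, a i * b i) * (∑ i, c i * d i)
        + (∑ i, a i * c i) * (∑ i, b i * d i)
        + (∑ i, a i * d i) * (∑ i, b i * c i)
        - 6 * (∑ i, a i * b i * c i * d i) := by
  have step : ∀ i j k : Fin n,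
      (∑ l, if i ≠ j ∧ i ≠ k ∧ i ≠ l ∧ j ≠ k ∧ j ≠ l ∧ k ≠ l then a i * b j * c k * d l else 0)
      = (if i ≠ j ∧ i ≠ k ∧ j ≠ k
          then a i * b j * c k * ((∑ l, d l) - d i - d j - d k) else 0) := by
    intro i j k
    by_cases h3 : i ≠ j ∧ i ≠ k ∧ j ≠ k
    · obtain ⟨hij, hik, hjk⟩ := h3
      have h2 : ∀ l, (if i ≠ j ∧ i ≠ k ∧ i ≠ l ∧ j ≠ k ∧ j ≠ l ∧ k ≠ l
            then a i * b j * c k * d l else 0)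
          = a i * b j * c k * (if i ≠ l ∧ j ≠ l ∧ k ≠ l then d l else 0) := by
        intro l
        by_cases h : i ≠ l ∧ j ≠ l ∧ k ≠ l
        · rw [if_pos ⟨hij, hik, h.1, hjk, h.2.1, h.2.2⟩, if_pos h]
        · rw [if_neg h, if_neg (by tauto), mul_zero]
      simp_rw [h2]
      rw [← Finset.mul_sum, sum_ne3 i j k hij hik hjk, if_pos ⟨hij, hik, hjk⟩]
    · rw [if_neg h3]
      apply Finset.sum_eq_zero
      intro l _
      rw [if_neg (by tauto)]
  simp_rw [step]
  have split : ∀ i j k : Fin n,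
      (if i ≠ j ∧ i ≠ k ∧ j ≠ k then a i * b j * c k * ((∑ l, d l) - d i - d j - d k) else 0)
      = (if i ≠ j ∧ i ≠ k ∧ j ≠ k then a i * b j * c k else 0) * (∑ l, d l)
        - (if i ≠ j ∧ i ≠ k ∧ j ≠ k then (a i * d i) * b j * c k else 0)
        - (if i ≠ j ∧ i ≠ k ∧ j ≠ k then a i * (b j * d j) * c k else 0)
        - (if i ≠ j ∧ i ≠ k ∧ j ≠ k then a i * b j * (c k * d k) else 0) := by
    intro i j k
    by_cases h3 : i ≠ j ∧ i ≠ k ∧ j ≠ k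
    · simp only [if_pos h3]; ring
    · simp only [if_neg h3]; ring
  simp_rw [split]
  simp only [Finset.sum_sub_distrib]
  simp_rw [← Finset.sum_mul]
  rw [triple_sum a b c, triple_sum (fun i => a i * d i) b c,
    triple_sum a (fun j => b j * d j) c, triple_sum a b (fun k => c k * d k)]
  have h1 : (∑ i, a i * d i * b i) = ∑ i, a i * b i * d i :=
    Finset.sum_congr rfl (fun i _ => by ring)
  have h2 : (∑ i, a i * d i * c i) = ∑ i, a i * c i * d i :=
    Finset.sum_congr rfl (fun i _ => by ring)
  have h3 : (∑ i, a i * d i * b i * c i) = ∑ i, a i * b i * c i * d i :=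
    Finset.sum_congr rfl (fun i _ => by ring)
  have h4 : (∑ i, a i * (b i * d i)) = ∑ i, a i * b i * d i :=
    Finset.sum_congr rfl (fun i _ => by ring)
  have h5 : (∑ i, a i * (b i * d i) * c i) = ∑ i, a i * b i * c i * d i :=
    Finset.sum_congr rfl (fun i _ => by ring)
  have h6 : (∑ i, b i * d i * c i) = ∑ i, b i * c i * d i :=
    Finset.sum_congr rfl (fun i _ => by ring)
  have h7 : (∑ i, a i * (c i * d i)) = ∑ i, a i * c i * d i :=
    Finset.sum_congr rfl (fun i _ => by ring)
  have h8 : (∑ i, a i * b i * (c i * d i)) = ∑ i, a i * b i * c i * d i :=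
    Finset.sum_congr rfl (fun i _ => by ring)
  have h9 : (∑ i, b i * (c i * d i)) = ∑ i, b i * c i * d i :=
    Finset.sum_congr rfl (fun i _ => by ring)
  rw [h1, h2, h3, h4, h5, h6, h7, h8, h9]
  ring


private def wfun {M N : ℕ} (A₁ A₂ A₃ : Finset (Fin M))
    (t : Fin N × Fin N × Fin N × Fin N) (u : Fin M) : Fin N :=
  if u ∈ A₁ then t.1 else if u ∈ A₂ then t.2.1 else if u ∈ A₃ then t.2.2.1 else t.2.2.2

set_option maxHeartbeats 1000000 in
/-- 4-clique formula: the probability of a contact graph with exactly four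
blocks `A₁, A₂, A₃, A₄`, expressed in terms of sigma products over amassed cliques. -/
theorem contact_graph_prob_four_cliques
    (N M : ℕ) (hN : 1 ≤ N) (hM : 1 ≤ M)
    {Ω : Type*} [MeasurableSpace Ω] (μ : Measure Ω) [IsProbabilityMeasure μ]
    (X : Fin M → Ω → Fin N)
    (hXmeas : ∀ j, Measurable (X j))
    (hXindep : iIndepFun X μ)
    (p : Fin M → Fin N → NNReal)
    (hp : ∀ j i, μ {ω | X j ω = i} = p j i)
    (hpsum : ∀ j, ∑ i, p j i = 1)
    (g : Finpartition (Finset.univ : Finset (Fin M)))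
    (A₁ A₂ A₃ A₄ : Finset (Fin M))
    (h12 : A₁ ≠ A₂) (h13 : A₁ ≠ A₃) (h14 : A₁ ≠ A₄)
    (h23 : A₂ ≠ A₃) (h24 : A₂ ≠ A₄) (h34 : A₃ ≠ A₄)
    (hparts : g.parts = {A₁, A₂, A₃, A₄}) :
    (μ {ω | ∀ u v : Fin M, X u ω = X v ω ↔ ∃ B ∈ g.parts, u ∈ B ∧ v ∈ B}).toReal
      = sigmaProb N M p A₁ * sigmaProb N M p A₂ * sigmaProb N M p A₃ * sigmaProb N M p A₄
        - sigmaProb N M p (A₁ ∪ A₂) * sigmaProb N M p A₃ * sigmaProb N M p A₄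
        - sigmaProb N M p (A₁ ∪ A₃) * sigmaProb N M p A₂ * sigmaProb N M p A₄
        - sigmaProb N M p (A₁ ∪ A₄) * sigmaProb N M p A₂ * sigmaProb N M p A₃
        - sigmaProb N M p (A₂ ∪ A₃) * sigmaProb N M p A₁ * sigmaProb N M p A₄
        - sigmaProb N M p (A₂ ∪ A₄) * sigmaProb N M p A₁ * sigmaProb N M p A₃
        - sigmaProb N M p (A₃ ∪ A₄) * sigmaProb N M p A₁ * sigmaProb N M p A₂
        + 2 * (sigmaProb N M p (A₁ ∪ A₂ ∪ A₃) * sigmaProb N M p A₄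
             + sigmaProb N M p (A₁ ∪ A₂ ∪ A₄) * sigmaProb N M p A₃
             + sigmaProb N M p (A₁ ∪ A₃ ∪ A₄) * sigmaProb N M p A₂
             + sigmaProb N M p (A₂ ∪ A₃ ∪ A₄) * sigmaProb N M p A₁)
        + sigmaProb N M p (A₁ ∪ A₂) * sigmaProb N M p (A₃ ∪ A₄)
        + sigmaProb N M p (A₁ ∪ A₃) * sigmaProb N M p (A₂ ∪ A₄)
        + sigmaProb N M p (A₁ ∪ A₄) * sigmaProb N M p (A₂ ∪ A₃)
        - 6 * sigmaProb N M p Finset.univ := by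
  classical
  have hA1 : A₁ ∈ g.parts := by rw [hparts]; simp
  have hA2 : A₂ ∈ g.parts := by rw [hparts]; simp
  have hA3 : A₃ ∈ g.parts := by rw [hparts]; simp
  have hA4 : A₄ ∈ g.parts := by rw [hparts]; simp
  have hd : ∀ {B C : Finset (Fin M)}, B ∈ g.parts → C ∈ g.parts → B ≠ C → Disjoint B C :=
    fun hB hC hBC => g.disjoint hB hC hBC
  have d12 : ∀ x ∈ A₁, x ∉ A₂ := fun x hx => Finset.disjoint_left.mp (hd hA1 hA2 h12) hx
  have d13 : ∀ x ∈ A₁, x ∉ A₃ := fun x hx => Finset.disjoint_left.mp (hd hA1 hA3 h13) hx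
  have d14 : ∀ x ∈ A₁, x ∉ A₄ := fun x hx => Finset.disjoint_left.mp (hd hA1 hA4 h14) hx
  have d23 : ∀ x ∈ A₂, x ∉ A₃ := fun x hx => Finset.disjoint_left.mp (hd hA2 hA3 h23) hx
  have d24 : ∀ x ∈ A₂, x ∉ A₄ := fun x hx => Finset.disjoint_left.mp (hd hA2 hA4 h24) hx
  have d34 : ∀ x ∈ A₃, x ∉ A₄ := fun x hx => Finset.disjoint_left.mp (hd hA3 hA4 h34) hx
  have d21 : ∀ x ∈ A₂, x ∉ A₁ := fun x hx hx' => d12 x hx' hx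
  have d31 : ∀ x ∈ A₃, x ∉ A₁ := fun x hx hx' => d13 x hx' hx
  have d41 : ∀ x ∈ A₄, x ∉ A₁ := fun x hx hx' => d14 x hx' hx
  have d32 : ∀ x ∈ A₃, x ∉ A₂ := fun x hx hx' => d23 x hx' hx
  have d42 : ∀ x ∈ A₄, x ∉ A₂ := fun x hx hx' => d24 x hx' hx
  have d43 : ∀ x ∈ A₄, x ∉ A₃ := fun x hx hx' => d34 x hx' hx
  have hcover : ∀ u : Fin M, u ∈ A₁ ∨ u ∈ A₂ ∨ u ∈ A₃ ∨ u ∈ A₄ := by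
    intro u
    obtain ⟨B, hB, huB⟩ := g.exists_mem (Finset.mem_univ u)
    rw [hparts] at hB
    simp only [Finset.mem_insert, Finset.mem_singleton] at hB
    rcases hB with rfl | rfl | rfl | rfl <;> tauto
  have hblock : ∀ u v : Fin M, (∃ B ∈ g.parts, u ∈ B ∧ v ∈ B) ↔
      ((u ∈ A₁ ∧ v ∈ A₁) ∨ (u ∈ A₂ ∧ v ∈ A₂) ∨ (u ∈ A₃ ∧ v ∈ A₃) ∨ (u ∈ A₄ ∧ v ∈ A₄)) := by
    intro u v
    rw [hparts]
    simp only [Finset.mem_insert, Finset.mem_singleton]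
    constructor
    · rintro ⟨B, (rfl | rfl | rfl | rfl), hB⟩ <;> tauto
    · rintro (h | h | h | h)
      exacts [⟨A₁, by tauto⟩, ⟨A₂, by tauto⟩, ⟨A₃, by tauto⟩, ⟨A₄, by tauto⟩]
  -- wfun value lemmas
  have hw1 : ∀ (t : Fin N × Fin N × Fin N × Fin N) u, u ∈ A₁ → wfun A₁ A₂ A₃ t u = t.1 := by
    intro t u hu; simp [wfun, hu]
  have hw2 : ∀ (t : Fin N × Fin N × Fin N × Fin N) u, u ∈ A₂ → wfun A₁ A₂ A₃ t u = t.2.1 := by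
    intro t u hu; simp [wfun, hu, d21 u hu]
  have hw3 : ∀ (t : Fin N × Fin N × Fin N × Fin N) u, u ∈ A₃ → wfun A₁ A₂ A₃ t u = t.2.2.1 := by
    intro t u hu; simp [wfun, hu, d31 u hu, d32 u hu]
  have hw4 : ∀ (t : Fin N × Fin N × Fin N × Fin N) u, u ∈ A₄ → wfun A₁ A₂ A₃ t u = t.2.2.2 := by
    intro t u hu; simp [wfun, d41 u hu, d42 u hu, d43 u hu]
  obtain ⟨u₁, hu₁⟩ := g.nonempty_of_mem_parts hA1
  obtain ⟨u₂, hu₂⟩ := g.nonempty_of_mem_parts hA2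
  obtain ⟨u₃, hu₃⟩ := g.nonempty_of_mem_parts hA3
  obtain ⟨u₄, hu₄⟩ := g.nonempty_of_mem_parts hA4
  set D : Finset (Fin N × Fin N × Fin N × Fin N) :=
    Finset.univ.filter (fun t => t.1 ≠ t.2.1 ∧ t.1 ≠ t.2.2.1 ∧ t.1 ≠ t.2.2.2
      ∧ t.2.1 ≠ t.2.2.1 ∧ t.2.1 ≠ t.2.2.2 ∧ t.2.2.1 ≠ t.2.2.2) with hD
  have same_part : ∀ (B C : Finset (Fin M)), B ∈ g.parts → C ∈ g.parts →
      ∀ x y, x ∈ B → y ∈ C → (∃ E ∈ g.parts, x ∈ E ∧ y ∈ E) → B = C := by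
    rintro B C hB hC x y hx hy ⟨E, hE, hxE, hyE⟩
    have hBE : B = E := by
      by_contra hne; exact (Finset.disjoint_left.mp (hd hB hE hne) hx) hxE
    have hCE : C = E := by
      by_contra hne; exact (Finset.disjoint_left.mp (hd hC hE hne) hy) hyE
    rw [hBE, hCE]
  have hEvent : {ω | ∀ u v : Fin M, X u ω = X v ω ↔ ∃ B ∈ g.parts, u ∈ B ∧ v ∈ B}
      = ⋃ t ∈ D, {ω | ∀ u, X u ω = wfun A₁ A₂ A₃ t u} := by
    ext ω
    simp only [Set.mem_setOf_eq, Set.mem_iUnion, exists_prop]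
    constructor
    · intro h
      refine ⟨(X u₁ ω, X u₂ ω, X u₃ ω, X u₄ ω), ?_, ?_⟩
      · rw [hD, Finset.mem_filter]
        refine ⟨Finset.mem_univ _, ?_, ?_, ?_, ?_, ?_, ?_⟩ <;>
          · intro he
            first
            | exact h12 (same_part A₁ A₂ hA1 hA2 _ _ hu₁ hu₂ ((h u₁ u₂).mp he))
            | exact h13 (same_part A₁ A₃ hA1 hA3 _ _ hu₁ hu₃ ((h u₁ u₃).mp he))
            | exact h14 (same_part A₁ A₄ hA1 hA4 _ _ hu₁ hu₄ ((h u₁ u₄).mp he))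
            | exact h23 (same_part A₂ A₃ hA2 hA3 _ _ hu₂ hu₃ ((h u₂ u₃).mp he))
            | exact h24 (same_part A₂ A₄ hA2 hA4 _ _ hu₂ hu₄ ((h u₂ u₄).mp he))
            | exact h34 (same_part A₃ A₄ hA3 hA4 _ _ hu₃ hu₄ ((h u₃ u₄).mp he))
      · intro u
        rcases hcover u with hu | hu | hu | hu
        · rw [hw1 _ u hu]
          exact (h u u₁).mpr ((hblock u u₁).mpr (Or.inl ⟨hu, hu₁⟩))
        · rw [hw2 _ u hu]
          exact (h u u₂).mpr ((hblock u u₂).mpr (Or.inr (Or.inl ⟨hu, hu₂⟩)))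
        · rw [hw3 _ u hu]
          exact (h u u₃).mpr ((hblock u u₃).mpr (Or.inr (Or.inr (Or.inl ⟨hu, hu₃⟩))))
        · rw [hw4 _ u hu]
          exact (h u u₄).mpr ((hblock u u₄).mpr (Or.inr (Or.inr (Or.inr ⟨hu, hu₄⟩))))
    · rintro ⟨t, htD, hωt⟩
      rw [hD, Finset.mem_filter] at htD
      obtain ⟨-, n12, n13, n14, n23, n24, n34⟩ := htD
      intro u v
      rw [hωt u, hωt v, hblock u v]
      rcases hcover u with hu | hu | hu | hu <;> rcases hcover v with hv | hv | hv | hv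
      · (rw [hw1 _ u hu, hw1 _ v hv]; exact ⟨fun _ => Or.inl ⟨hu, hv⟩, fun _ => rfl⟩)
      · (rw [hw1 _ u hu, hw2 _ v hv]; exact ⟨fun he => absurd he n12, by rintro (⟨ha, hb⟩ | ⟨ha, hb⟩ | ⟨ha, hb⟩ | ⟨ha, hb⟩); exacts [absurd hb (d21 v hv), absurd ha (d12 u hu), absurd ha (d13 u hu), absurd ha (d14 u hu)]⟩)
      · (rw [hw1 _ u hu, hw3 _ v hv]; exact ⟨fun he => absurd he n13, by rintro (⟨ha, hb⟩ | ⟨ha, hb⟩ | ⟨ha, hb⟩ | ⟨ha, hb⟩); exacts [absurd hb (d31 v hv), absurd ha (d12 u hu), absurd ha (d13 u hu), absurd ha (d14 u hu)]⟩)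
      · (rw [hw1 _ u hu, hw4 _ v hv]; exact ⟨fun he => absurd he n14, by rintro (⟨ha, hb⟩ | ⟨ha, hb⟩ | ⟨ha, hb⟩ | ⟨ha, hb⟩); exacts [absurd hb (d41 v hv), absurd ha (d12 u hu), absurd ha (d13 u hu), absurd ha (d14 u hu)]⟩)
      · (rw [hw2 _ u hu, hw1 _ v hv]; exact ⟨fun he => absurd he.symm n12, by rintro (⟨ha, hb⟩ | ⟨ha, hb⟩ | ⟨ha, hb⟩ | ⟨ha, hb⟩); exacts [absurd ha (d21 u hu), absurd hb (d12 v hv), absurd ha (d23 u hu), absurd ha (d24 u hu)]⟩)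
      · (rw [hw2 _ u hu, hw2 _ v hv]; exact ⟨fun _ => Or.inr (Or.inl ⟨hu, hv⟩), fun _ => rfl⟩)
      · (rw [hw2 _ u hu, hw3 _ v hv]; exact ⟨fun he => absurd he n23, by rintro (⟨ha, hb⟩ | ⟨ha, hb⟩ | ⟨ha, hb⟩ | ⟨ha, hb⟩); exacts [absurd ha (d21 u hu), absurd hb (d32 v hv), absurd ha (d23 u hu), absurd ha (d24 u hu)]⟩)
      · (rw [hw2 _ u hu, hw4 _ v hv]; exact ⟨fun he => absurd he n24, by rintro (⟨ha, hb⟩ | ⟨ha, hb⟩ | ⟨ha, hb⟩ | ⟨ha, hb⟩); exacts [absurd ha (d21 u hu), absurd hb (d42 v hv), absurd ha (d23 u hu), absurd ha (d24 u hu)]⟩)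
      · (rw [hw3 _ u hu, hw1 _ v hv]; exact ⟨fun he => absurd he.symm n13, by rintro (⟨ha, hb⟩ | ⟨ha, hb⟩ | ⟨ha, hb⟩ | ⟨ha, hb⟩); exacts [absurd ha (d31 u hu), absurd ha (d32 u hu), absurd hb (d13 v hv), absurd ha (d34 u hu)]⟩)
      · (rw [hw3 _ u hu, hw2 _ v hv]; exact ⟨fun he => absurd he.symm n23, by rintro (⟨ha, hb⟩ | ⟨ha, hb⟩ | ⟨ha, hb⟩ | ⟨ha, hb⟩); exacts [absurd ha (d31 u hu), absurd ha (d32 u hu), absurd hb (d23 v hv), absurd ha (d34 u hu)]⟩)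
      · (rw [hw3 _ u hu, hw3 _ v hv]; exact ⟨fun _ => Or.inr (Or.inr (Or.inl ⟨hu, hv⟩)), fun _ => rfl⟩)
      · (rw [hw3 _ u hu, hw4 _ v hv]; exact ⟨fun he => absurd he n34, by rintro (⟨ha, hb⟩ | ⟨ha, hb⟩ | ⟨ha, hb⟩ | ⟨ha, hb⟩); exacts [absurd ha (d31 u hu), absurd ha (d32 u hu), absurd hb (d43 v hv), absurd ha (d34 u hu)]⟩)
      · (rw [hw4 _ u hu, hw1 _ v hv]; exact ⟨fun he => absurd he.symm n14, by rintro (⟨ha, hb⟩ | ⟨ha, hb⟩ | ⟨ha, hb⟩ | ⟨ha, hb⟩); exacts [absurd ha (d41 u hu), absurd ha (d42 u hu), absurd ha (d43 u hu), absurd hb (d14 v hv)]⟩)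
      · (rw [hw4 _ u hu, hw2 _ v hv]; exact ⟨fun he => absurd he.symm n24, by rintro (⟨ha, hb⟩ | ⟨ha, hb⟩ | ⟨ha, hb⟩ | ⟨ha, hb⟩); exacts [absurd ha (d41 u hu), absurd ha (d42 u hu), absurd ha (d43 u hu), absurd hb (d24 v hv)]⟩)
      · (rw [hw4 _ u hu, hw3 _ v hv]; exact ⟨fun he => absurd he.symm n34, by rintro (⟨ha, hb⟩ | ⟨ha, hb⟩ | ⟨ha, hb⟩ | ⟨ha, hb⟩); exacts [absurd ha (d41 u hu), absurd ha (d42 u hu), absurd ha (d43 u hu), absurd hb (d34 v hv)]⟩)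
      · (rw [hw4 _ u hu, hw4 _ v hv]; exact ⟨fun _ => Or.inr (Or.inr (Or.inr ⟨hu, hv⟩)), fun _ => rfl⟩)
  -- probability of a fixed pattern via independence
  have hprob : ∀ v : Fin M → Fin N,
      μ {ω | ∀ u, X u ω = v u} = ∏ u, (p u (v u) : ℝ≥0∞) := by
    intro v
    have hset : {ω | ∀ u, X u ω = v u} = ⋂ u, X u ⁻¹' {v u} := by
      ext ω; simp [Set.mem_iInter]
    rw [hset, hXindep.meas_iInter (fun u => ⟨{v u}, measurableSet_singleton _, rfl⟩)]
    refine Finset.prod_congr rfl fun u _ => ?_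
    rw [← hp u (v u)]
    rfl
  have hmeasE : ∀ t : Fin N × Fin N × Fin N × Fin N,
      MeasurableSet {ω | ∀ u, X u ω = wfun A₁ A₂ A₃ t u} := by
    intro t
    have hset : {ω | ∀ u, X u ω = wfun A₁ A₂ A₃ t u}
        = ⋂ u, X u ⁻¹' {wfun A₁ A₂ A₃ t u} := by
      ext ω; simp [Set.mem_iInter]
    rw [hset]
    exact MeasurableSet.iInter fun u => hXmeas u (measurableSet_singleton _)
  have hdisjE : (↑D : Set (Fin N × Fin N × Fin N × Fin N)).PairwiseDisjoint
      (fun t => {ω | ∀ u, X u ω = wfun A₁ A₂ A₃ t u}) := by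
    intro t _ t' _ hne
    rw [Function.onFun, Set.disjoint_left]
    intro ω h1 h2
    apply hne
    have a1 := h1 u₁; have b1 := h2 u₁
    rw [hw1 t u₁ hu₁] at a1; rw [hw1 t' u₁ hu₁] at b1
    have a2 := h1 u₂; have b2 := h2 u₂
    rw [hw2 t u₂ hu₂] at a2; rw [hw2 t' u₂ hu₂] at b2
    have a3 := h1 u₃; have b3 := h2 u₃
    rw [hw3 t u₃ hu₃] at a3; rw [hw3 t' u₃ hu₃] at b3
    have a4 := h1 u₄; have b4 := h2 u₄
    rw [hw4 t u₄ hu₄] at a4; rw [hw4 t' u₄ hu₄] at b4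
    exact Prod.ext (a1 ▸ b1) (Prod.ext (a2 ▸ b2) (Prod.ext (a3 ▸ b3) (a4 ▸ b4)))
  have hμE : μ {ω | ∀ u v : Fin M, X u ω = X v ω ↔ ∃ B ∈ g.parts, u ∈ B ∧ v ∈ B}
      = ∑ t ∈ D, ∏ u, (p u (wfun A₁ A₂ A₃ t u) : ℝ≥0∞) := by
    rw [hEvent, measure_biUnion_finset hdisjE (fun t _ => hmeasE t)]
    exact Finset.sum_congr rfl fun t _ => hprob _
  have htoReal : (μ {ω | ∀ u v : Fin M, X u ω = X v ω ↔ ∃ B ∈ g.parts, u ∈ B ∧ v ∈ B}).toReal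
      = ∑ t ∈ D, ∏ u, (p u (wfun A₁ A₂ A₃ t u) : ℝ) := by
    rw [hμE]
    simp_rw [← ENNReal.coe_finset_prod]
    rw [← ENNReal.coe_finset_sum, ENNReal.coe_toReal]
    push_cast
    rfl
  -- disjointness for products
  have dis12 : Disjoint A₁ A₂ := hd hA1 hA2 h12
  have dis123 : Disjoint (A₁ ∪ A₂) A₃ :=
    Finset.disjoint_union_left.mpr ⟨hd hA1 hA3 h13, hd hA2 hA3 h23⟩
  have dis1234 : Disjoint (A₁ ∪ A₂ ∪ A₃) A₄ :=
    Finset.disjoint_union_left.mpr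
      ⟨Finset.disjoint_union_left.mpr ⟨hd hA1 hA4 h14, hd hA2 hA4 h24⟩, hd hA3 hA4 h34⟩
  have hU : (Finset.univ : Finset (Fin M)) = A₁ ∪ A₂ ∪ A₃ ∪ A₄ := by
    ext u
    simp only [Finset.mem_univ, Finset.mem_union, true_iff]
    rcases hcover u with h | h | h | h <;> tauto
  set q₁ : Fin N → ℝ := fun i => ∏ u ∈ A₁, (p u i : ℝ) with hq₁
  set q₂ : Fin N → ℝ := fun i => ∏ u ∈ A₂, (p u i : ℝ) with hq₂
  set q₃ : Fin N → ℝ := fun i => ∏ u ∈ A₃, (p u i : ℝ) with hq₃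
  set q₄ : Fin N → ℝ := fun i => ∏ u ∈ A₄, (p u i : ℝ) with hq₄
  have hprodsplit : ∀ t : Fin N × Fin N × Fin N × Fin N,
      (∏ u, (p u (wfun A₁ A₂ A₃ t u) : ℝ))
      = q₁ t.1 * q₂ t.2.1 * q₃ t.2.2.1 * q₄ t.2.2.2 := by
    intro t
    rw [show (∏ u, (p u (wfun A₁ A₂ A₃ t u) : ℝ))
        = ∏ u ∈ A₁ ∪ A₂ ∪ A₃ ∪ A₄, (p u (wfun A₁ A₂ A₃ t u) : ℝ) from by rw [← hU]]
    rw [Finset.prod_union dis1234, Finset.prod_union dis123, Finset.prod_union dis12]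
    have e1 : (∏ u ∈ A₁, (p u (wfun A₁ A₂ A₃ t u) : ℝ)) = q₁ t.1 :=
      Finset.prod_congr rfl (fun u hu => by rw [hw1 t u hu])
    have e2 : (∏ u ∈ A₂, (p u (wfun A₁ A₂ A₃ t u) : ℝ)) = q₂ t.2.1 :=
      Finset.prod_congr rfl (fun u hu => by rw [hw2 t u hu])
    have e3 : (∏ u ∈ A₃, (p u (wfun A₁ A₂ A₃ t u) : ℝ)) = q₃ t.2.2.1 :=
      Finset.prod_congr rfl (fun u hu => by rw [hw3 t u hu])
    have e4 : (∏ u ∈ A₄, (p u (wfun A₁ A₂ A₃ t u) : ℝ)) = q₄ t.2.2.2 :=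
      Finset.prod_congr rfl (fun u hu => by rw [hw4 t u hu])
    rw [e1, e2, e3, e4]
  have hfinal : (μ {ω | ∀ u v : Fin M, X u ω = X v ω ↔ ∃ B ∈ g.parts, u ∈ B ∧ v ∈ B}).toReal
      = ∑ i, ∑ j, ∑ k, ∑ l, if i ≠ j ∧ i ≠ k ∧ i ≠ l ∧ j ≠ k ∧ j ≠ l ∧ k ≠ l
          then q₁ i * q₂ j * q₃ k * q₄ l else 0 := by
    rw [htoReal, Finset.sum_congr rfl (fun t _ => hprodsplit t), hD, Finset.sum_filter]
    rw [Fintype.sum_prod_type]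
    simp only [Fintype.sum_prod_type]
  rw [hfinal, quad_sum q₁ q₂ q₃ q₄]
  have dis13 : Disjoint A₁ A₃ := hd hA1 hA3 h13
  have dis14 : Disjoint A₁ A₄ := hd hA1 hA4 h14
  have dis23 : Disjoint A₂ A₃ := hd hA2 hA3 h23
  have dis24 : Disjoint A₂ A₄ := hd hA2 hA4 h24
  have dis34 : Disjoint A₃ A₄ := hd hA3 hA4 h34
  have dis124 : Disjoint (A₁ ∪ A₂) A₄ :=
    Finset.disjoint_union_left.mpr ⟨dis14, dis24⟩
  have dis134 : Disjoint (A₁ ∪ A₃) A₄ :=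
    Finset.disjoint_union_left.mpr ⟨dis14, dis34⟩
  have dis234 : Disjoint (A₂ ∪ A₃) A₄ :=
    Finset.disjoint_union_left.mpr ⟨dis24, dis34⟩
  have s1 : sigmaProb N M p A₁ = ∑ i, q₁ i := rfl
  have s2 : sigmaProb N M p A₂ = ∑ i, q₂ i := rfl
  have s3 : sigmaProb N M p A₃ = ∑ i, q₃ i := rfl
  have s4 : sigmaProb N M p A₄ = ∑ i, q₄ i := rfl
  have s12 : sigmaProb N M p (A₁ ∪ A₂) = ∑ i, q₁ i * q₂ i :=
    Finset.sum_congr rfl fun i _ => Finset.prod_union dis12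
  have s13 : sigmaProb N M p (A₁ ∪ A₃) = ∑ i, q₁ i * q₃ i :=
    Finset.sum_congr rfl fun i _ => Finset.prod_union dis13
  have s14 : sigmaProb N M p (A₁ ∪ A₄) = ∑ i, q₁ i * q₄ i :=
    Finset.sum_congr rfl fun i _ => Finset.prod_union dis14
  have s23 : sigmaProb N M p (A₂ ∪ A₃) = ∑ i, q₂ i * q₃ i :=
    Finset.sum_congr rfl fun i _ => Finset.prod_union dis23
  have s24 : sigmaProb N M p (A₂ ∪ A₄) = ∑ i, q₂ i * q₄ i :=
    Finset.sum_congr rfl fun i _ => Finset.prod_union dis24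
  have s34 : sigmaProb N M p (A₃ ∪ A₄) = ∑ i, q₃ i * q₄ i :=
    Finset.sum_congr rfl fun i _ => Finset.prod_union dis34
  have s123 : sigmaProb N M p (A₁ ∪ A₂ ∪ A₃) = ∑ i, q₁ i * q₂ i * q₃ i :=
    Finset.sum_congr rfl fun i _ => by rw [Finset.prod_union dis123, Finset.prod_union dis12]
  have s124 : sigmaProb N M p (A₁ ∪ A₂ ∪ A₄) = ∑ i, q₁ i * q₂ i * q₄ i :=
    Finset.sum_congr rfl fun i _ => by rw [Finset.prod_union dis124, Finset.prod_union dis12]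
  have s134 : sigmaProb N M p (A₁ ∪ A₃ ∪ A₄) = ∑ i, q₁ i * q₃ i * q₄ i :=
    Finset.sum_congr rfl fun i _ => by rw [Finset.prod_union dis134, Finset.prod_union dis13]
  have s234 : sigmaProb N M p (A₂ ∪ A₃ ∪ A₄) = ∑ i, q₂ i * q₃ i * q₄ i :=
    Finset.sum_congr rfl fun i _ => by rw [Finset.prod_union dis234, Finset.prod_union dis23]
  have suniv : sigmaProb N M p Finset.univ = ∑ i, q₁ i * q₂ i * q₃ i * q₄ i :=
    Finset.sum_congr rfl fun i _ => by
      rw [hU, Finset.prod_union dis1234, Finset.prod_union dis123, Finset.prod_union dis12]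
  rw [s1, s2, s3, s4, s12, s13, s14, s23, s24, s34, s123, s124, s134, s234, suniv]
end

section
/- (Recursion over amassed-clique graphs, equation (8)) Let g be a contact graph. Then ∏_{A block of g} σ(A) = ∑_{π} μ(E_{g(π)}), where the sum runs over all partitions π of the set of blocks of g and g(π) is the coarsened partition of Fin M whose blocks are the unions ⋃_{A ∈ C} A over the cells C of π. Equivalently, μ(E_g) = ∏_{A block of g} σ(A) − ∑_{π ≠ discrete partition} μ(E_{g(π)}). -/
open MeasureTheory ProbabilityTheory

open scoped Classical

set_option linter.unusedSectionVars false

namespace ContactGraphAux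

variable {N M : ℕ}

/-- Extension of a function on the parts of `g` to all finsets. -/
noncomputable def fhat (g : Finpartition (Finset.univ : Finset (Fin M))) (hN : 1 ≤ N)
    (f : g.parts → Fin N) (A : Finset (Fin M)) : Fin N :=
  if h : A ∈ g.parts then f ⟨A, h⟩ else ⟨0, hN⟩

lemma fhat_coe (g : Finpartition (Finset.univ : Finset (Fin M))) (hN : 1 ≤ N)
    (f : g.parts → Fin N) (A : g.parts) : fhat g hN f A = f A := by
  simp [fhat, A.2]

/-- The partition of `g.parts` induced by the value function `f`. -/
noncomputable def piOf (g : Finpartition (Finset.univ : Finset (Fin M))) (hN : 1 ≤ N)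
    (f : g.parts → Fin N) : Finpartition g.parts :=
  Finpartition.ofErase
    (Finset.image (fun i : Fin N => g.parts.filter fun A => fhat g hN f A = i) Finset.univ)
    (by
      rw [Finset.supIndep_iff_pairwiseDisjoint]
      intro C hC D hD hne
      simp only [Finset.coe_image, Set.mem_image] at hC hD
      obtain ⟨i, -, rfl⟩ := hC
      obtain ⟨j, -, rfl⟩ := hD
      simp only [id, Function.onFun]
      rw [Finset.disjoint_left]
      intro A hA hA'
      simp only [Finset.mem_filter] at hA hA'
      exact hne (by rw [← hA.2, hA'.2])
      )
    (by
      apply le_antisymm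
      · refine Finset.sup_le fun C hC => ?_
        simp only [Finset.mem_image] at hC
        obtain ⟨i, -, rfl⟩ := hC
        exact Finset.filter_subset _ _
      · intro A hA
        have h1 : A ∈ g.parts.filter fun B => fhat g hN f B = fhat g hN f A :=
          Finset.mem_filter.2 ⟨hA, rfl⟩
        have h2 := Finset.le_sup (f := id)
          (Finset.mem_image_of_mem (fun i : Fin N => g.parts.filter fun A => fhat g hN f A = i)
            (Finset.mem_univ (fhat g hN f A)))
        exact Finset.mem_of_subset h2 h1)

lemma mem_piOf_parts (g : Finpartition (Finset.univ : Finset (Fin M))) (hN : 1 ≤ N)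
    (f : g.parts → Fin N) (C : Finset (Finset (Fin M))) :
    C ∈ (piOf g hN f).parts ↔
      C.Nonempty ∧ ∃ i, g.parts.filter (fun A => fhat g hN f A = i) = C := by
  simp only [piOf, Finpartition.ofErase, Finset.mem_erase, Finset.mem_image,
    Finset.mem_univ, true_and, Finset.bot_eq_empty, ← Finset.nonempty_iff_ne_empty]


variable {Ω : Type*} [MeasurableSpace Ω]

/-- The event that every variable takes the value assigned to its block. -/
def Eev (g : Finpartition (Finset.univ : Finset (Fin M))) (hN : 1 ≤ N)
    (X : Fin M → Ω → Fin N) (f : g.parts → Fin N) : Set Ω :=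
  {ω | ∀ u : Fin M, X u ω = fhat g hN f (g.part u)}

/-- The event `E_{g(π)}`. -/
def Fev (g : Finpartition (Finset.univ : Finset (Fin M))) (X : Fin M → Ω → Fin N)
    (π : Finpartition g.parts) : Set Ω :=
  {ω | ∀ u v : Fin M, X u ω = X v ω ↔ ∃ C ∈ π.parts, u ∈ C.sup id ∧ v ∈ C.sup id}

lemma Eev_subset_Fev (g : Finpartition (Finset.univ : Finset (Fin M))) (hN : 1 ≤ N)
    (X : Fin M → Ω → Fin N) (f : g.parts → Fin N) :
    Eev g hN X f ⊆ Fev g X (piOf g hN f) := by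
  intro ω hω u v
  constructor
  · intro huv
    refine ⟨g.parts.filter (fun A => fhat g hN f A = fhat g hN f (g.part u)), ?_, ?_, ?_⟩
    · rw [mem_piOf_parts]
      exact ⟨⟨g.part u, Finset.mem_filter.2 ⟨g.part_mem.2 (Finset.mem_univ u), rfl⟩⟩, _, rfl⟩
    · exact Finset.mem_sup.2 ⟨g.part u,
        Finset.mem_filter.2 ⟨g.part_mem.2 (Finset.mem_univ u), rfl⟩, g.mem_part (Finset.mem_univ u)⟩
    · refine Finset.mem_sup.2 ⟨g.part v, Finset.mem_filter.2 ⟨g.part_mem.2 (Finset.mem_univ v), ?_⟩,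
        g.mem_part (Finset.mem_univ v)⟩
      rw [← hω u, ← hω v, huv]
  · rintro ⟨C, hC, hu, hv⟩
    rw [mem_piOf_parts] at hC
    obtain ⟨-, i, rfl⟩ := hC
    obtain ⟨A, hA, huA⟩ := Finset.mem_sup.1 hu
    obtain ⟨B, hB, hvB⟩ := Finset.mem_sup.1 hv
    rw [Finset.mem_filter] at hA hB
    rw [hω u, hω v, g.part_eq_of_mem hA.1 huA, g.part_eq_of_mem hB.1 hvB, hA.2, hB.2]

lemma exists_of_mem_Fev (g : Finpartition (Finset.univ : Finset (Fin M))) (hN : 1 ≤ N)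
    (X : Fin M → Ω → Fin N) (π : Finpartition g.parts) {ω : Ω} (hω : ω ∈ Fev g X π) :
    ∃ f : g.parts → Fin N, piOf g hN f = π ∧ ω ∈ Eev g hN X f := by
  choose rep hrep using fun A : g.parts => g.nonempty_of_mem_parts A.2
  set f : g.parts → Fin N := fun A => X (rep A) ω with hf
  have hval : ∀ (A) (hA : A ∈ g.parts), ∀ u ∈ A, X u ω = fhat g hN f A := by
    intro A hA u hu
    have hr : rep ⟨A, hA⟩ ∈ A := hrep ⟨A, hA⟩
    obtain ⟨C, hC, hAC⟩ := π.exists_mem hA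
    have h1 : X u ω = X (rep ⟨A, hA⟩) ω :=
      (hω u (rep ⟨A, hA⟩)).2 ⟨C, hC, Finset.mem_sup.2 ⟨A, hAC, hu⟩, Finset.mem_sup.2 ⟨A, hAC, hr⟩⟩
    rw [h1, fhat, dif_pos hA]
  have hmemE : ω ∈ Eev g hN X f := fun u =>
    hval _ (g.part_mem.2 (Finset.mem_univ u)) u (g.mem_part (Finset.mem_univ u))
  have hsame : ∀ (A B) (hA : A ∈ g.parts) (hB : B ∈ g.parts),
      fhat g hN f A = fhat g hN f B ↔ ∃ C ∈ π.parts, A ∈ C ∧ B ∈ C := by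
    intro A B hA hB
    obtain ⟨a, ha⟩ := g.nonempty_of_mem_parts hA
    obtain ⟨b, hb⟩ := g.nonempty_of_mem_parts hB
    constructor
    · intro h
      have hab : X a ω = X b ω := by rw [hval A hA a ha, hval B hB b hb, h]
      obtain ⟨C, hC, haC, hbC⟩ := (hω a b).1 hab
      obtain ⟨A', hA', haA'⟩ := Finset.mem_sup.1 haC
      obtain ⟨B', hB', hbB'⟩ := Finset.mem_sup.1 hbC
      have e1 : A = A' := g.eq_of_mem_parts hA (π.le hC hA') ha haA'
      have e2 : B = B' := g.eq_of_mem_parts hB (π.le hC hB') hb hbB'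
      exact ⟨C, hC, e1 ▸ hA', e2 ▸ hB'⟩
    · rintro ⟨C, hC, hAC, hBC⟩
      have hab : X a ω = X b ω := (hω a b).2
        ⟨C, hC, Finset.mem_sup.2 ⟨A, hAC, ha⟩, Finset.mem_sup.2 ⟨B, hBC, hb⟩⟩
      rw [← hval A hA a ha, ← hval B hB b hb]
      exact hab
  have hcell : ∀ C ∈ π.parts, ∀ A ∈ C,
      C = g.parts.filter (fun B => fhat g hN f B = fhat g hN f A) := by
    intro C hC A hAC
    have hA : A ∈ g.parts := π.le hC hAC
    ext B
    simp only [Finset.mem_filter]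
    constructor
    · intro hBC
      have hB : B ∈ g.parts := π.le hC hBC
      exact ⟨hB, (hsame B A hB hA).2 ⟨C, hC, hBC, hAC⟩⟩
    · rintro ⟨hB, hfB⟩
      obtain ⟨C', hC', hBC', hAC'⟩ := (hsame B A hB hA).1 hfB
      rwa [π.eq_of_mem_parts hC' hC hAC' hAC] at hBC'
  refine ⟨f, ?_, hmemE⟩
  apply Finpartition.ext
  ext C
  rw [mem_piOf_parts]
  constructor
  · rintro ⟨⟨A, hAmem⟩, i, rfl⟩
    simp only [Finset.mem_filter] at hAmem
    obtain ⟨D, hD, hAD⟩ := π.exists_mem hAmem.1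
    have hDeq := hcell D hD A hAD
    rw [← hAmem.2, ← hDeq]
    exact hD
  · intro hC
    obtain ⟨A, hAC⟩ := π.nonempty_of_mem_parts hC
    exact ⟨⟨A, hAC⟩, fhat g hN f A, (hcell C hC A hAC).symm⟩

lemma Eev_disjoint (g : Finpartition (Finset.univ : Finset (Fin M))) (hN : 1 ≤ N)
    (X : Fin M → Ω → Fin N) {f f' : g.parts → Fin N} (hne : f ≠ f') :
    Disjoint (Eev g hN X f) (Eev g hN X f') := by
  rw [Set.disjoint_left]
  intro ω h1 h2
  obtain ⟨A, hA⟩ := Function.ne_iff.1 hne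
  apply hA
  obtain ⟨a, ha⟩ := g.nonempty_of_mem_parts A.2
  have hpa : g.part a = (A : Finset (Fin M)) := g.part_eq_of_mem A.2 ha
  have e1 := h1 a
  have e2 := h2 a
  rw [hpa] at e1 e2
  have : fhat g hN f A = fhat g hN f' A := by rw [← e1, e2]
  rwa [fhat_coe, fhat_coe] at this

lemma meas_Eev_eq (g : Finpartition (Finset.univ : Finset (Fin M))) (hN : 1 ≤ N)
    {μ : Measure Ω} (X : Fin M → Ω → Fin N)
    (hXindep : iIndepFun X μ)
    (p : Fin M → Fin N → NNReal) (hp : ∀ j i, μ {ω | X j ω = i} = p j i)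
    (f : g.parts → Fin N) :
    μ (Eev g hN X f) = ∏ u : Fin M, (p u (fhat g hN f (g.part u)) : ENNReal) := by
  have h1 : Eev g hN X f = ⋂ u ∈ Finset.univ, X u ⁻¹' {fhat g hN f (g.part u)} := by
    ext ω
    simp [Eev, Set.mem_iInter, Set.mem_preimage]
  rw [h1, hXindep.measure_inter_preimage_eq_mul Finset.univ
      (fun u _ => measurableSet_singleton _)]
  refine Finset.prod_congr rfl fun u _ => ?_
  rw [← hp u (fhat g hN f (g.part u))]
  congr 1

lemma measurableSet_Eev (g : Finpartition (Finset.univ : Finset (Fin M))) (hN : 1 ≤ N)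
    (X : Fin M → Ω → Fin N) (hXmeas : ∀ j, Measurable (X j)) (f : g.parts → Fin N) :
    MeasurableSet (Eev g hN X f) := by
  have h1 : Eev g hN X f = ⋂ u : Fin M, X u ⁻¹' {fhat g hN f (g.part u)} := by
    ext ω
    simp [Eev, Set.mem_iInter, Set.mem_preimage]
  rw [h1]
  exact MeasurableSet.iInter fun u => (hXmeas u) (measurableSet_singleton _)

end ContactGraphAux

open ContactGraphAux

open scoped Classical in
/-- recursion over amassed-clique graphs, equation (8):
`∏_{A block of g} σ(A) = ∑_π μ(E_{g(π)})`, the sum running over all partitions `π` of the set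
of blocks of `g`, where `g(π)` is the coarsened partition of `Fin M` whose blocks are the
unions `⋃_{A ∈ C} A` over the cells `C` of `π`; equivalently,
`μ(E_g) = ∏_{A block of g} σ(A) − ∑_{π ≠ discrete} μ(E_{g(π)})`. -/
theorem contact_graph_prob_recursion
    (N M : ℕ) (hN : 1 ≤ N) (hM : 1 ≤ M)
    {Ω : Type*} [MeasurableSpace Ω] (μ : Measure Ω) [IsProbabilityMeasure μ]
    (X : Fin M → Ω → Fin N)
    (hXmeas : ∀ j, Measurable (X j))
    (hXindep : iIndepFun X μ)
    (p : Fin M → Fin N → NNReal)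
    (hp : ∀ j i, μ {ω | X j ω = i} = p j i)
    (hpsum : ∀ j, ∑ i, p j i = 1)
    (g : Finpartition (Finset.univ : Finset (Fin M))) :
    ((∏ A ∈ g.parts, ∑ i : Fin N, ∏ u ∈ A, p u i : NNReal) : ENNReal)
        = ∑ π : Finpartition g.parts,
            μ {ω | ∀ u v : Fin M, X u ω = X v ω ↔
                ∃ C ∈ π.parts, u ∈ C.sup id ∧ v ∈ C.sup id}
      ∧
    (μ {ω | ∀ u v : Fin M, X u ω = X v ω ↔ ∃ B ∈ g.parts, u ∈ B ∧ v ∈ B}).toReal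
        = ((∏ A ∈ g.parts, ∑ i : Fin N, ∏ u ∈ A, p u i : NNReal) : ℝ)
          - ∑ π ∈ Finset.univ.filter (fun π : Finpartition g.parts => π ≠ ⊥),
              (μ {ω | ∀ u v : Fin M, X u ω = X v ω ↔
                  ∃ C ∈ π.parts, u ∈ C.sup id ∧ v ∈ C.sup id}).toReal := by
  have hFev : ∀ π : Finpartition g.parts,
      {ω | ∀ u v : Fin M, X u ω = X v ω ↔ ∃ C ∈ π.parts, u ∈ C.sup id ∧ v ∈ C.sup id}
        = Fev g X π := fun _ => rfl
  have key : ((∏ A ∈ g.parts, ∑ i : Fin N, ∏ u ∈ A, p u i : NNReal) : ENNReal)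
      = ∑ π : Finpartition g.parts, μ (Fev g X π) := by
    calc ((∏ A ∈ g.parts, ∑ i : Fin N, ∏ u ∈ A, p u i : NNReal) : ENNReal)
        = ∏ A ∈ g.parts, ∑ i : Fin N, ∏ u ∈ A, (p u i : ENNReal) := by push_cast; rfl
      _ = ∏ A : g.parts, ∑ i : Fin N, ∏ u ∈ (A : Finset (Fin M)), (p u i : ENNReal) :=
          (Finset.prod_coe_sort _ _).symm
      _ = ∑ f : g.parts → Fin N, ∏ A : g.parts, ∏ u ∈ (A : Finset (Fin M)),
            (p u (f A) : ENNReal) := Fintype.prod_sum _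
      _ = ∑ f : g.parts → Fin N, μ (Eev g hN X f) := by
          refine Finset.sum_congr rfl fun f _ => ?_
          rw [meas_Eev_eq g hN X hXindep p hp f]
          rw [show (∏ u : Fin M, (p u (fhat g hN f (g.part u)) : ENNReal))
              = ∏ u ∈ g.parts.biUnion id, (p u (fhat g hN f (g.part u)) : ENNReal) from
            (Finset.prod_congr g.biUnion_parts fun _ _ => rfl).symm]
          rw [Finset.prod_biUnion g.supIndep.pairwiseDisjoint,
            ← Finset.prod_coe_sort g.parts]
          refine Finset.prod_congr rfl fun A _ => Finset.prod_congr rfl fun u hu => ?_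
          rw [g.part_eq_of_mem A.2 hu, fhat_coe]
      _ = ∑ π : Finpartition g.parts,
            ∑ f ∈ Finset.univ.filter (fun f => piOf g hN f = π), μ (Eev g hN X f) :=
          (Finset.sum_fiberwise _ _ _).symm
      _ = ∑ π : Finpartition g.parts, μ (Fev g X π) := by
          refine Finset.sum_congr rfl fun π _ => ?_
          rw [← measure_biUnion_finset ?_ (fun f _ => measurableSet_Eev g hN X hXmeas f)]
          · congr 1
            ext ω
            simp only [Set.mem_iUnion, exists_prop, Finset.mem_filter, Finset.mem_univ, true_and]
            constructor
            · rintro ⟨f, hfπ, hωf⟩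
              have h := Eev_subset_Fev g hN X f hωf
              rwa [hfπ] at h
            · intro hω
              exact exists_of_mem_Fev g hN X π hω
          · intro f hf f' hf' hne
            exact Eev_disjoint g hN X hne
  have hbot : Fev g X (⊥ : Finpartition g.parts)
      = {ω | ∀ u v : Fin M, X u ω = X v ω ↔ ∃ B ∈ g.parts, u ∈ B ∧ v ∈ B} := by
    ext ω
    simp only [Fev, Set.mem_setOf_eq]
    refine forall₂_congr fun u v => iff_congr Iff.rfl ?_
    constructor
    · rintro ⟨C, hC, hu, hv⟩
      rw [Finpartition.mem_bot_iff] at hC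
      obtain ⟨A, hA, hAC⟩ := hC
      subst hAC
      rw [Finset.sup_singleton] at hu hv
      exact ⟨A, hA, hu, hv⟩
    · rintro ⟨B, hB, hu, hv⟩
      exact ⟨{B}, Finpartition.mem_bot_iff.2 ⟨B, hB, rfl⟩, by simpa using hu, by simpa using hv⟩
  constructor
  · simp only [hFev]
    exact key
  · simp only [hFev]
    rw [← hbot]
    have hsplit : (∑ π : Finpartition g.parts, μ (Fev g X π))
        = μ (Fev g X ⊥)
          + ∑ π ∈ Finset.univ.filter (fun π : Finpartition g.parts => π ≠ ⊥), μ (Fev g X π) := by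
      rw [← Finset.sum_filter_add_sum_filter_not Finset.univ
        (fun π : Finpartition g.parts => π = ⊥)]
      congr 1
      rw [Finset.filter_eq', if_pos (Finset.mem_univ _), Finset.sum_singleton]
    have hS_ne : (∑ π ∈ Finset.univ.filter (fun π : Finpartition g.parts => π ≠ ⊥),
        μ (Fev g X π)) ≠ ⊤ := ENNReal.sum_ne_top.2 fun _ _ => measure_ne_top μ _
    have hEq := key.trans hsplit
    have h2 := congrArg ENNReal.toReal hEq
    rw [ENNReal.coe_toReal, ENNReal.toReal_add (measure_ne_top μ _) hS_ne,
      ENNReal.toReal_sum (fun _ _ => measure_ne_top μ _)] at h2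
    linarith [h2]
end

section
/- (Stirling recursion lemma, Appendix B) Let S(m, l) denote the number of partitions of an m-element set into exactly l nonempty blocks (the Stirling number of the second kind, definable as the number of Finpartitions of Fin m having exactly l parts). Let x : ℕ → ℝ satisfy x(1) = 1 and, for every m ≥ 2, x(m) = − ∑_{l=1}^{m−1} S(m, l) · x(l). Then x(m) = (−1)^{m−1} (m−1)! for every m ≥ 1. -/
open Finset Function

/-- The Stirling number of the second kind `S(m, l)`: the number of partitions of an
`m`-element set into exactly `l` nonempty blocks. -/
def stirlingSecond (m l : ℕ) : ℕ :=
  Fintype.card {ρ : Finpartition (Finset.univ : Finset (Fin m)) // ρ.parts.card = l}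

/-- The number of surjections `Fin m → Fin l`. -/
def surjCount (m l : ℕ) : ℕ := Fintype.card {f : Fin m → Fin l // Function.Surjective f}

lemma surjCount_eq_zero_of_lt {m l : ℕ} (h : m < l) : surjCount m l = 0 := by
  have : IsEmpty {f : Fin m → Fin l // Function.Surjective f} := by
    constructor
    rintro ⟨f, hf⟩
    have := Fintype.card_le_of_surjective f hf
    simp only [Fintype.card_fin] at this
    omega
  simpa [surjCount] using Fintype.card_eq_zero

lemma surjCount_zero {m : ℕ} (hm : 1 ≤ m) : surjCount m 0 = 0 := by
  have : IsEmpty {f : Fin m → Fin 0 // Function.Surjective f} := by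
    constructor
    rintro ⟨f, hf⟩
    exact (f ⟨0, by omega⟩).elim0
  simpa [surjCount] using Fintype.card_eq_zero

lemma surjCount_self (m : ℕ) : surjCount m m = m.factorial := by
  have e : {f : Fin m → Fin m // Function.Surjective f} ≃ Equiv.Perm (Fin m) :=
    { toFun := fun f => Equiv.ofBijective f.1 (Finite.surjective_iff_bijective.mp f.2)
      invFun := fun e => ⟨e, e.surjective⟩
      left_inv := fun f => Subtype.ext rfl
      right_inv := fun e => Equiv.ext fun x => rfl }
  rw [surjCount, Fintype.card_congr e, Fintype.card_perm, Fintype.card_fin]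

lemma surjCount_succ_succ (m l : ℕ) :
    surjCount (m + 1) (l + 1) = (l + 1) * (surjCount m (l + 1) + surjCount m l) := by
  classical
  let A := {g : Fin m → Fin (l + 1) // Function.Surjective g}
  let B := {h : Fin m → Fin l // Function.Surjective h}
  let Ψ : Fin (l + 1) × (A ⊕ B) → {f : Fin (m + 1) → Fin (l + 1) // Function.Surjective f} :=
    fun p =>
      match p with
      | (v, Sum.inl g) => ⟨Fin.cons v g.1, by
          intro y
          obtain ⟨i, hi⟩ := g.2 y
          exact ⟨i.succ, by simpa using hi⟩⟩
      | (v, Sum.inr h) => ⟨Fin.cons v (fun i => v.succAbove (h.1 i)), by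
          intro y
          rcases eq_or_ne y v with rfl | hy
          · exact ⟨0, rfl⟩
          · have : y ∈ Set.range v.succAbove := by
              rw [Fin.range_succAbove]; exact hy
            obtain ⟨j, hj⟩ := this
            obtain ⟨i, hi⟩ := h.2 j
            exact ⟨i.succ, by simp [hi, hj]⟩⟩
  have hbij : Function.Bijective Ψ := by
    constructor
    · rintro ⟨v, g | h⟩ ⟨v', g' | h'⟩ hEq
      · simp only [Ψ, Subtype.mk.injEq] at hEq
        obtain ⟨hv, hg⟩ := (Fin.cons_inj (α := fun _ => Fin (l + 1))).mp (congrArg Subtype.val hEq)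
        simp [hv, Subtype.ext hg]
      · simp only [Ψ, Subtype.mk.injEq] at hEq
        obtain ⟨hv, hg⟩ := (Fin.cons_inj (α := fun _ => Fin (l + 1))).mp (congrArg Subtype.val hEq)
        exfalso
        obtain ⟨i, hi⟩ := g.2 v'
        have := congrFun hg i
        rw [hi] at this
        exact Fin.succAbove_ne v' (h'.1 i) this.symm
      · simp only [Ψ, Subtype.mk.injEq] at hEq
        obtain ⟨hv, hg⟩ := (Fin.cons_inj (α := fun _ => Fin (l + 1))).mp (congrArg Subtype.val hEq)
        exfalso
        obtain ⟨i, hi⟩ := g'.2 v'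
        have := congrFun hg i
        rw [hi] at this
        subst hv
        exact Fin.succAbove_ne v (h.1 i) this
      · simp only [Ψ, Subtype.mk.injEq] at hEq
        obtain ⟨hv, hg⟩ := (Fin.cons_inj (α := fun _ => Fin (l + 1))).mp (congrArg Subtype.val hEq)
        subst hv
        have : h.1 = h'.1 := by
          funext i
          exact Fin.succAbove_right_injective (congrFun hg i)
        simp [Subtype.ext this]
    · rintro ⟨f, hf⟩
      set v := f 0 with hv
      set g : Fin m → Fin (l + 1) := Fin.tail f with hgdef
      have hcons : f = Fin.cons v g := (Fin.cons_self_tail f).symm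
      by_cases hg : Function.Surjective g
      · exact ⟨(v, Sum.inl ⟨g, hg⟩), Subtype.ext hcons.symm⟩
      · -- g misses exactly v
        have hmiss : ∀ y, y ≠ v → ∃ i, g i = y := by
          intro y hy
          obtain ⟨j, hj⟩ := hf y
          rcases Fin.eq_zero_or_eq_succ j with rfl | ⟨i, rfl⟩
          · exact (hy hj.symm).elim
          · exact ⟨i, hj⟩
        have hvmiss : ∀ i, g i ≠ v := by
          intro i hi
          apply hg
          intro y
          rcases eq_or_ne y v with rfl | hy
          · exact ⟨i, hi⟩
          · exact hmiss y hy
        have hsome : ∀ i, (finSuccEquiv' v (g i)).isSome := by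
          intro i
          rw [← Option.ne_none_iff_isSome]
          intro hn
          apply hvmiss i
          have := congrArg (finSuccEquiv' v).symm hn
          simpa using this
        let h : Fin m → Fin l := fun i => (finSuccEquiv' v (g i)).get (hsome i)
        have hkey : ∀ i, v.succAbove (h i) = g i := by
          intro i
          have : (finSuccEquiv' v).symm (some (h i)) = (finSuccEquiv' v).symm (finSuccEquiv' v (g i)) := by
            congr 1
            exact Option.some_get (hsome i)
          simpa [finSuccEquiv'_symm_some] using this
        have hhsurj : Function.Surjective h := by
          intro j
          obtain ⟨i, hi⟩ := hmiss (v.succAbove j) (Fin.succAbove_ne v j)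
          refine ⟨i, Fin.succAbove_right_injective (p := v) ?_⟩
          rw [hkey i, hi]
        refine ⟨(v, Sum.inr ⟨h, hhsurj⟩), Subtype.ext ?_⟩
        simp only [Ψ]
        rw [hcons]
        have : (fun i => v.succAbove (h i)) = g := funext hkey
        rw [this]
  calc surjCount (m + 1) (l + 1)
      = Fintype.card (Fin (l + 1) × (A ⊕ B)) :=
        (Fintype.card_congr (Equiv.ofBijective Ψ hbij)).symm
    _ = (l + 1) * (surjCount m (l + 1) + surjCount m l) := by
        simp [A, B, surjCount, Fintype.card_prod, Fintype.card_sum]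

lemma Finpartition.parts_eq_image {α : Type*} [DecidableEq α] [Fintype α]
    (P : Finpartition (Finset.univ : Finset α)) :
    P.parts = Finset.univ.image P.part := by
  ext p
  constructor
  · intro hp
    obtain ⟨a, ha⟩ := P.nonempty_of_mem_parts hp
    exact Finset.mem_image.2 ⟨a, Finset.mem_univ a, P.part_eq_of_mem hp ha⟩
  · intro hp
    obtain ⟨a, -, rfl⟩ := Finset.mem_image.1 hp
    exact P.part_mem.2 (Finset.mem_univ a)

lemma surjCount_eq (m l : ℕ) : surjCount m l = l.factorial * stirlingSecond m l := by
  classical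
  let T := Σ ρ : {ρ : Finpartition (Finset.univ : Finset (Fin m)) // ρ.parts.card = l},
      ↥ρ.1.parts ≃ Fin l
  let Φ : T → {f : Fin m → Fin l // Function.Surjective f} := fun t =>
    ⟨fun i => t.2 ⟨t.1.1.part i, t.1.1.part_mem.2 (Finset.mem_univ i)⟩, by
      intro y
      obtain ⟨p, hp⟩ : ∃ p : ↥t.1.1.parts, t.2 p = y := ⟨t.2.symm y, t.2.apply_symm_apply y⟩
      obtain ⟨a, ha⟩ := t.1.1.nonempty_of_mem_parts p.2
      refine ⟨a, ?_⟩
      have hpa : (⟨t.1.1.part a, t.1.1.part_mem.2 (Finset.mem_univ a)⟩ : ↥t.1.1.parts) = p :=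
        Subtype.ext (t.1.1.part_eq_of_mem p.2 ha)
      dsimp only
      rw [hpa, hp]⟩
  -- fibers of Φ t are the parts
  have hfib : ∀ t : T, ∀ i, t.1.1.part i = Finset.univ.filter (fun j => (Φ t).1 j = (Φ t).1 i) := by
    rintro t i
    ext j
    simp only [Finset.mem_filter, Finset.mem_univ, true_and, Φ, Equiv.apply_eq_iff_eq,
      Subtype.mk.injEq]
    exact t.1.1.mem_part_iff_part_eq_part (Finset.mem_univ j) (Finset.mem_univ i)
  have hbij : Function.Bijective Φ := by
    constructor
    · rintro ⟨⟨ρ, hρ⟩, e⟩ ⟨⟨ρ', hρ'⟩, e'⟩ hEq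
      have hfun : (Φ ⟨⟨ρ, hρ⟩, e⟩).1 = (Φ ⟨⟨ρ', hρ'⟩, e'⟩).1 := by rw [hEq]
      have hpart : ∀ i, ρ.part i = ρ'.part i := by
        intro i
        rw [hfib ⟨⟨ρ, hρ⟩, e⟩ i, hfib ⟨⟨ρ', hρ'⟩, e'⟩ i, hfun]
      have hρρ' : ρ = ρ' := by
        ext p
        rw [Finpartition.parts_eq_image, Finpartition.parts_eq_image, funext hpart]
      subst hρρ'
      have he : e = e' := by
        apply Equiv.ext
        rintro ⟨p, hp⟩
        obtain ⟨a, ha⟩ := ρ.nonempty_of_mem_parts hp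
        have hpa : p = ρ.part a := (ρ.part_eq_of_mem hp ha).symm
        have h1 := congrFun hfun a
        simp only [Φ] at h1
        convert h1 using 2 <;> exact Subtype.ext hpa
      rw [he]
    · rintro ⟨f, hf⟩
      letI : DecidableRel (Setoid.ker f).r := fun a b => inferInstanceAs (Decidable (f a = f b))
      set P := Finpartition.ofSetoid (Setoid.ker f) with hP
      have h1 : ∀ i, P.part i = Finset.univ.filter (fun j => f j = f i) := by
        intro i
        ext j
        simp only [Finset.mem_filter, Finset.mem_univ, true_and]
        rw [Finpartition.mem_part_ofSetoid_iff_rel]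
        exact ⟨fun h => h.symm, fun h => h.symm⟩
      have h2 : P.parts = Finset.univ.image (fun y => Finset.univ.filter (fun j => f j = y)) := by
        rw [Finpartition.parts_eq_image P]
        ext p
        simp only [Finset.mem_image, Finset.mem_univ, true_and]
        constructor
        · rintro ⟨a, rfl⟩; exact ⟨f a, (h1 a).symm⟩
        · rintro ⟨y, rfl⟩
          obtain ⟨a, rfl⟩ := hf y
          exact ⟨a, h1 a⟩
      have hinj : Function.Injective (fun y => Finset.univ.filter (fun j => f j = y)) := by
        intro y y' h
        dsimp only at h
        obtain ⟨a, rfl⟩ := hf y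
        have : a ∈ Finset.univ.filter (fun j => f j = f a) := by simp
        rw [h] at this
        exact (Finset.mem_filter.1 this).2
      have h3 : P.parts.card = l := by
        rw [h2, Finset.card_image_of_injective _ hinj, Finset.card_univ, Fintype.card_fin]
      let e' : Fin l → ↥P.parts := fun y =>
        ⟨Finset.univ.filter (fun j => f j = y), by
          rw [h2]; exact Finset.mem_image_of_mem _ (Finset.mem_univ y)⟩
      have he'bij : Function.Bijective e' := by
        constructor
        · intro y y' h
          exact hinj (congrArg Subtype.val h)
        · rintro ⟨p, hp⟩
          rw [h2] at hp
          obtain ⟨y, -, rfl⟩ := Finset.mem_image.1 hp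
          exact ⟨y, rfl⟩
      let e : ↥P.parts ≃ Fin l := (Equiv.ofBijective e' he'bij).symm
      refine ⟨⟨⟨P, h3⟩, e⟩, Subtype.ext ?_⟩
      funext i
      show e ⟨P.part i, _⟩ = f i
      have : (⟨P.part i, P.part_mem.2 (Finset.mem_univ i)⟩ : ↥P.parts) = e' (f i) :=
        Subtype.ext (h1 i)
      rw [this]
      exact (Equiv.ofBijective e' he'bij).symm_apply_apply (f i)
  have hcard : Fintype.card T = stirlingSecond m l * l.factorial := by
    rw [Fintype.card_sigma]
    have : ∀ ρ : {ρ : Finpartition (Finset.univ : Finset (Fin m)) // ρ.parts.card = l},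
        Fintype.card (↥ρ.1.parts ≃ Fin l) = l.factorial := by
      intro ρ
      have hc : Fintype.card ↥ρ.1.parts = l := by
        rw [Fintype.card_coe, ρ.2]
      rw [Fintype.card_equiv (Fintype.equivFinOfCardEq hc), Fintype.card_coe, ρ.2]
    simp only [this, Finset.sum_const, Finset.card_univ, smul_eq_mul]
    rfl
  rw [surjCount, ← Fintype.card_congr (Equiv.ofBijective Φ hbij), hcard, mul_comm]

lemma stirlingSecond_self (m : ℕ) : stirlingSecond m m = 1 := by
  have h := surjCount_eq m m
  rw [surjCount_self] at h
  exact Nat.eq_of_mul_eq_mul_left m.factorial_pos (by rw [mul_one, ← h])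

lemma key_identity {m : ℕ} (hm : 2 ≤ m) :
    ∑ l ∈ Finset.Icc 1 m,
      (stirlingSecond m l : ℝ) * ((-1) ^ (l - 1) * (l - 1).factorial) = 0 := by
  obtain ⟨n, rfl⟩ : ∃ n, m = n + 1 := ⟨m - 1, by omega⟩
  have hn : 1 ≤ n := by omega
  rw [← Finset.Ico_add_one_right_eq_Icc, Finset.sum_Ico_eq_sum_range]
  have hrange : n + 1 + 1 - 1 = n + 1 := by omega
  rw [hrange]
  have hterm : ∀ k, (stirlingSecond (n + 1) (1 + k) : ℝ) *
        ((-1) ^ (1 + k - 1) * (1 + k - 1).factorial)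
      = (-1 : ℝ) ^ k * (surjCount n (k + 1)) + (-1) ^ k * (surjCount n k) := by
    intro k
    have h1 : (k + 1) * (k.factorial * stirlingSecond (n + 1) (k + 1))
        = (k + 1) * (surjCount n (k + 1) + surjCount n k) := by
      rw [← mul_assoc, ← Nat.factorial_succ, ← surjCount_eq, surjCount_succ_succ]
    have h2 : k.factorial * stirlingSecond (n + 1) (k + 1)
        = surjCount n (k + 1) + surjCount n k :=
      Nat.eq_of_mul_eq_mul_left (by omega) h1
    have h4 : (k.factorial : ℝ) * (stirlingSecond (n + 1) (k + 1) : ℝ)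
        = (surjCount n (k + 1) : ℝ) + (surjCount n k : ℝ) := by exact_mod_cast h2
    have h3 : 1 + k - 1 = k := by omega
    rw [h3, show 1 + k = k + 1 by omega]
    linear_combination (-1 : ℝ) ^ k * h4
  rw [Finset.sum_congr rfl (fun k _ => hterm k), Finset.sum_add_distrib]
  have hA : ∑ k ∈ Finset.range (n + 1), (-1 : ℝ) ^ k * (surjCount n (k + 1))
      = ∑ k ∈ Finset.range n, (-1 : ℝ) ^ k * (surjCount n (k + 1)) := by
    rw [Finset.sum_range_succ, surjCount_eq_zero_of_lt (by omega)]
    simp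
  have hB : ∑ k ∈ Finset.range (n + 1), (-1 : ℝ) ^ k * (surjCount n k)
      = -∑ k ∈ Finset.range n, (-1 : ℝ) ^ k * (surjCount n (k + 1)) := by
    rw [Finset.sum_range_succ', surjCount_zero hn]
    have : ∀ k, (-1 : ℝ) ^ (k + 1) * (surjCount n (k + 1))
        = -((-1 : ℝ) ^ k * (surjCount n (k + 1))) := by
      intro k; ring
    rw [Finset.sum_congr rfl (fun k _ => this k), Finset.sum_neg_distrib]
    simp
  rw [hA, hB]
  ring
/-- Stirling recursion lemma, Appendix B: if `x 1 = 1` and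
`x m = −∑_{l=1}^{m−1} S(m,l)·x l` for all `m ≥ 2`, then `x m = (−1)^{m−1}(m−1)!`
for all `m ≥ 1`. -/
theorem stirling_recursion_lemma
    (x : ℕ → ℝ) (hx1 : x 1 = 1)
    (hrec : ∀ m, 2 ≤ m →
      x m = -∑ l ∈ Finset.Icc 1 (m - 1), (stirlingSecond m l : ℝ) * x l) :
    ∀ m, 1 ≤ m → x m = (-1 : ℝ) ^ (m - 1) * (m - 1).factorial := by
  intro m
  induction m using Nat.strong_induction_on with
  | _ m ih =>
    intro hm
    rcases eq_or_lt_of_le hm with h1 | h2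
    · rw [← h1]; simpa using hx1
    · have hm2 : 2 ≤ m := h2
      obtain ⟨n, rfl⟩ : ∃ n, m = n + 1 := ⟨m - 1, by omega⟩
      have hkey := key_identity hm2
      rw [Finset.sum_Icc_succ_top (by omega)] at hkey
      rw [stirlingSecond_self] at hkey
      rw [hrec (n + 1) hm2]
      simp only [Nat.add_sub_cancel] at hkey ⊢
      have hsum : ∑ l ∈ Finset.Icc 1 n, (stirlingSecond (n + 1) l : ℝ) * x l
          = ∑ l ∈ Finset.Icc 1 n,
              (stirlingSecond (n + 1) l : ℝ) * ((-1) ^ (l - 1) * (l - 1).factorial) := by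
        apply Finset.sum_congr rfl
        intro l hl
        rw [Finset.mem_Icc] at hl
        rw [ih l (by omega) hl.1]
      rw [hsum]
      push_cast at hkey ⊢
      linarith
end

section
/- (Exchangeability of identically distributed walkers) Suppose additionally that all walkers have the same marginal distribution, i.e. p j = q for every j : Fin M and some fixed probability vector q : Fin N → ℝ≥0. If g and g' are two contact graphs whose multisets of block sizes coincide, then μ(E_g) = μ(E_{g'}). -/
open MeasureTheory ProbabilityTheory

/-- Matching lemma: if two finsets have equal multisets of values under `f` and `g`,
there is a bijection between them matching the values. -/
lemma exists_matching_equiv {α β γ : Type*} [DecidableEq α] [DecidableEq β]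
    (f : α → γ) (g : β → γ) (s : Finset α) :
    ∀ t : Finset β, s.val.map f = t.val.map g →
      ∃ e : {x // x ∈ s} ≃ {y // y ∈ t}, ∀ x, g (e x).1 = f x.1 := by
  induction s using Finset.induction_on with
  | empty =>
    intro t h
    have ht : t = ∅ := by
      rw [← Finset.val_eq_zero]
      simpa using h.symm
    subst ht
    refine ⟨Equiv.equivOfIsEmpty _ _, fun x => (Finset.notMem_empty _ x.2).elim⟩
  | @insert a s₀ ha ih =>
    intro t h
    rw [Finset.insert_val_of_notMem ha, Multiset.map_cons] at h
    have hfa : f a ∈ t.val.map g := by rw [← h]; exact Multiset.mem_cons_self _ _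
    obtain ⟨b, hb, hgb⟩ := Multiset.mem_map.mp hfa
    have hbt : b ∈ t := hb
    have htb : t.val = b ::ₘ (t.erase b).val := by
      rw [Finset.erase_val, Multiset.cons_erase hb]
    rw [htb, Multiset.map_cons, hgb] at h
    have h' : s₀.val.map f = (t.erase b).val.map g := by
      exact (Multiset.cons_inj_right _).mp h
    obtain ⟨e₀, he₀⟩ := ih (t.erase b) h'
    have hbe : b ∉ t.erase b := Finset.notMem_erase _ _
    have hins : insert b (t.erase b) = t := Finset.insert_erase hbt
    refine ⟨(Finset.subtypeInsertEquivOption ha).trans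
      ((e₀.optionCongr).trans ((Finset.subtypeInsertEquivOption hbe).symm.trans
        (Equiv.subtypeEquivRight (fun y => by rw [hins])))), fun x => ?_⟩
    rcases x with ⟨x, hx⟩
    by_cases hxa : x = a
    · subst hxa
      simp [Finset.subtypeInsertEquivOption, Equiv.subtypeEquivRight_apply_coe, hgb]
    · have hxs : x ∈ s₀ := by
        rcases Finset.mem_insert.mp hx with h1 | h1
        · exact absurd h1 hxa
        · exact h1
      simpa [Finset.subtypeInsertEquivOption, Equiv.subtypeEquivRight_apply_coe, hxa]
        using he₀ ⟨x, hxs⟩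

/-- From equal multisets of block sizes, produce a permutation of `Fin M` carrying the
block relation of `g` to that of `g'`. -/
lemma exists_perm_of_sizes_eq {M : ℕ}
    (g g' : Finpartition (Finset.univ : Finset (Fin M)))
    (hsizes : g.parts.val.map Finset.card = g'.parts.val.map Finset.card) :
    ∃ σ : Fin M ≃ Fin M, ∀ u v : Fin M,
      ((∃ B ∈ g.parts, u ∈ B ∧ v ∈ B) ↔ ∃ B ∈ g'.parts, σ u ∈ B ∧ σ v ∈ B) := by
  obtain ⟨e, he⟩ := exists_matching_equiv Finset.card Finset.card g.parts g'.parts hsizes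
  obtain ⟨f₁, hf₁⟩ := g.exists_enumeration
  obtain ⟨f₂, hf₂⟩ := g'.exists_enumeration
  let sig : (Σ t : {x // x ∈ g.parts}, Fin t.1.card) ≃ Σ t : {x // x ∈ g'.parts}, Fin t.1.card :=
    Equiv.sigmaCongr e (fun t => finCongr (he t).symm)
  have hsigfst : ∀ z : (Σ t : {x // x ∈ g.parts}, Fin t.1.card), (sig z).1 = e z.1 := by
    rintro ⟨t, x⟩; rfl
  let uEquiv : {x : Fin M // x ∈ (Finset.univ : Finset (Fin M))} ≃ Fin M :=
    Equiv.subtypeUnivEquiv (fun x => Finset.mem_univ x)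
  let σ : Fin M ≃ Fin M :=
    uEquiv.symm.trans ((f₁.trans (sig.trans f₂.symm)).trans uEquiv)
  have hpart : ∀ (P : Finpartition (Finset.univ : Finset (Fin M))) (u v : Fin M),
      (∃ B ∈ P.parts, u ∈ B ∧ v ∈ B) ↔ P.part u = P.part v := by
    intro P u v
    constructor
    · rintro ⟨B, hB, hu, hv⟩
      rw [P.part_eq_of_mem hB hu, P.part_eq_of_mem hB hv]
    · intro hpe
      exact ⟨P.part u, P.part_mem.2 (Finset.mem_univ u), P.mem_part (Finset.mem_univ u),
        hpe ▸ P.mem_part (Finset.mem_univ v)⟩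
  refine ⟨σ, fun u v => ?_⟩
  rw [hpart g u v, hpart g' (σ u) (σ v)]
  have hu : g.part u = g.part (uEquiv.symm u : Fin M) := rfl
  have key : ∀ w : Fin M, f₂ (uEquiv.symm (σ w)) = sig (f₁ (uEquiv.symm w)) := by
    intro w
    have : uEquiv.symm (σ w) = f₂.symm (sig (f₁ (uEquiv.symm w))) := by
      simp [σ, uEquiv]
    rw [this, Equiv.apply_symm_apply]
  have h1 := hf₁ (uEquiv.symm u) (uEquiv.symm v)
  have h2 := hf₂ (uEquiv.symm (σ u)) (uEquiv.symm (σ v))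
  have hcu : ((uEquiv.symm u : {x // x ∈ (Finset.univ : Finset (Fin M))}) : Fin M) = u := rfl
  have hcv : ((uEquiv.symm v : {x // x ∈ (Finset.univ : Finset (Fin M))}) : Fin M) = v := rfl
  rw [hcu, hcv] at h1
  rw [show ((uEquiv.symm (σ u) : {x // x ∈ (Finset.univ : Finset (Fin M))}) : Fin M) = σ u from rfl,
    show ((uEquiv.symm (σ v) : {x // x ∈ (Finset.univ : Finset (Fin M))}) : Fin M) = σ v from rfl] at h2
  rw [h1, h2, key u, key v, hsigfst, hsigfst]
  constructor
  · intro hh; rw [hh]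
  · intro hh; exact e.injective hh

/-- exchangeability of identically distributed walkers: if all walkers share the
same marginal distribution `q`, then any two contact graphs whose multisets of block sizes
coincide have equally probable events. -/
theorem contact_graph_prob_exchangeable
    (N M : ℕ) (hN : 1 ≤ N) (hM : 1 ≤ M)
    {Ω : Type*} [MeasurableSpace Ω] (μ : Measure Ω) [IsProbabilityMeasure μ]
    (X : Fin M → Ω → Fin N)
    (hXmeas : ∀ j, Measurable (X j))
    (hXindep : iIndepFun X μ)
    (p : Fin M → Fin N → NNReal)
    (hp : ∀ j i, μ {ω | X j ω = i} = p j i)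
    (hpsum : ∀ j, ∑ i, p j i = 1)
    (q : Fin N → NNReal) (hq : ∀ j, p j = q)
    (g g' : Finpartition (Finset.univ : Finset (Fin M)))
    (hsizes : g.parts.val.map Finset.card = g'.parts.val.map Finset.card) :
    μ {ω | ∀ u v : Fin M, X u ω = X v ω ↔ ∃ B ∈ g.parts, u ∈ B ∧ v ∈ B}
      = μ {ω | ∀ u v : Fin M, X u ω = X v ω ↔ ∃ B ∈ g'.parts, u ∈ B ∧ v ∈ B} := by
  classical
  -- reduce each event probability to a sum over admissible colorings
  have key : ∀ (P : Finpartition (Finset.univ : Finset (Fin M))),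
      μ {ω | ∀ u v : Fin M, X u ω = X v ω ↔ ∃ B ∈ P.parts, u ∈ B ∧ v ∈ B}
        = ∑ x ∈ Finset.univ.filter
            (fun x : Fin M → Fin N => ∀ u v : Fin M, x u = x v ↔ ∃ B ∈ P.parts, u ∈ B ∧ v ∈ B),
            ∏ j, (q (x j) : ENNReal) := by
    intro P
    set A := Finset.univ.filter
      (fun x : Fin M → Fin N => ∀ u v : Fin M, x u = x v ↔ ∃ B ∈ P.parts, u ∈ B ∧ v ∈ B) with hA
    have hset : {ω | ∀ u v : Fin M, X u ω = X v ω ↔ ∃ B ∈ P.parts, u ∈ B ∧ v ∈ B}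
        = ⋃ x ∈ A, ⋂ j, X j ⁻¹' {x j} := by
      ext ω
      simp only [Set.mem_setOf_eq, Set.mem_iUnion, Set.mem_iInter, Set.mem_preimage,
        Set.mem_singleton_iff]
      constructor
      · intro hω
        exact ⟨fun j => X j ω, by simpa [hA] using hω, fun j => rfl⟩
      · rintro ⟨x, hx, hxe⟩ u v
        rw [hxe u, hxe v]
        simp only [hA, Finset.mem_filter] at hx
        exact hx.2 u v
    rw [hset, measure_biUnion_finset]
    · refine Finset.sum_congr rfl fun x _ => ?_
      have := hXindep.measure_inter_preimage_eq_mul (S := Finset.univ)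
        (sets := fun j => {x j}) (fun i _ => MeasurableSet.singleton _)
      simp only [Finset.mem_univ, Set.iInter_true, ← Set.iInter_coe_set] at this
      rw [this]
      refine Finset.prod_congr rfl fun j _ => ?_
      have : X j ⁻¹' {x j} = {ω | X j ω = x j} := rfl
      rw [this, hp j (x j), hq j]
    · -- pairwise disjoint
      intro x hx y hy hxy
      simp only [Function.onFun]
      refine Set.disjoint_left.mpr fun ω hωx hωy => ?_
      simp only [Set.mem_iInter, Set.mem_preimage, Set.mem_singleton_iff] at hωx hωy
      exact hxy (funext fun j => (hωx j).symm.trans (hωy j))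
    · intro x hx
      exact MeasurableSet.iInter fun j => (hXmeas j) (MeasurableSet.singleton _)
  obtain ⟨σ, hσ⟩ := exists_perm_of_sizes_eq g g' hsizes
  rw [key g, key g']
  refine Finset.sum_nbij' (fun x => x ∘ σ.symm) (fun x => x ∘ σ) ?_ ?_ ?_ ?_ ?_
  · intro x hx
    simp only [Finset.mem_filter, Finset.mem_univ, true_and] at hx ⊢
    intro u v
    rw [Function.comp_apply, Function.comp_apply, hx (σ.symm u) (σ.symm v),
      hσ (σ.symm u) (σ.symm v), Equiv.apply_symm_apply, Equiv.apply_symm_apply]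
  · intro x hx
    simp only [Finset.mem_filter, Finset.mem_univ, true_and] at hx ⊢
    intro u v
    rw [Function.comp_apply, Function.comp_apply, hx (σ u) (σ v)]
    exact (hσ u v).symm
  · intro x _; ext j; simp
  · intro x _; ext j; simp
  · intro x _
    exact (Equiv.prod_comp σ.symm fun j => (q (x j) : ENNReal)).symm
end

section
/- (Lemma 3, unlabelled contact graph probability) Suppose all walkers have the same marginal distribution q : Fin N → ℝ≥0 (p j = q for all j). Let Q = {q_1, …, q_m} be a multiset of m positive integers summing to M, let c_j denote the multiplicity of j in Q for 1 ≤ j ≤ M, and set γ(Q) = M! / ( ∏_{i=1}^{m} q_i! · ∏_{j=1}^{M} c_j! ). Let E^u_Q be the union of the events E_g over all contact graphs g whose multiset of block sizes equals Q. Then for any fixed contact graph g whose multiset of block sizes equals Q, μ(E^u_Q) = γ(Q) · μ(E_g). -/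
open MeasureTheory ProbabilityTheory

set_option linter.unusedSectionVars false

open Finset

section FiberCompat

variable {α α' β : Type*}

/-- Bijections compatible with fiber maps correspond to families of fiberwise bijections. -/
def fiberCompatEquiv (f : α → β) (f' : α' → β) :
    {e : α ≃ α' // ∀ a, f' (e a) = f a} ≃
      ∀ b : β, ({a : α // f a = b} ≃ {a' : α' // f' a' = b}) where
  toFun e b :=
    { toFun := fun a => ⟨e.1 a.1, by rw [e.2, a.2]⟩
      invFun := fun a' => ⟨e.1.symm a'.1, by
        have h := e.2 (e.1.symm a'.1)
        rw [Equiv.apply_symm_apply] at h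
        rw [← h, a'.2]⟩
      left_inv := fun a => Subtype.ext (e.1.symm_apply_apply a.1)
      right_inv := fun a' => Subtype.ext (e.1.apply_symm_apply a'.1) }
  invFun F :=
    ⟨(Equiv.sigmaFiberEquiv f).symm.trans
      ((Equiv.sigmaCongrRight F).trans (Equiv.sigmaFiberEquiv f')),
     fun a => ((F (f a)) ⟨a, rfl⟩).2⟩
  left_inv e := Subtype.ext (Equiv.ext fun a => rfl)
  right_inv F := by
    funext b
    ext a
    obtain ⟨a, rfl⟩ := a
    rfl

lemma card_equiv_eq (α β : Type*) [Fintype α] [Fintype β] [DecidableEq α] [DecidableEq β] :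
    Fintype.card (α ≃ β)
      = if Fintype.card α = Fintype.card β then (Fintype.card α).factorial else 0 := by
  split_ifs with h
  · rw [Fintype.card_equiv (Fintype.equivOfCardEq h)]
  · rw [Fintype.card_eq_zero_iff]
    exact ⟨fun e => h (Fintype.card_congr e)⟩

end FiberCompat
open Finset

section Act

variable {M : ℕ}

/-- Permutation acting on finsets as an embedding. -/
def permEmb (σ : Equiv.Perm (Fin M)) : Finset (Fin M) ↪ Finset (Fin M) :=
  ⟨Finset.image σ, Finset.image_injective σ.injective⟩

/-- Action of a permutation on a finpartition of `univ`. -/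
def act (σ : Equiv.Perm (Fin M)) (g : Finpartition (univ : Finset (Fin M))) :
    Finpartition (univ : Finset (Fin M)) where
  parts := g.parts.map (permEmb σ)
  supIndep := by
    rw [Finset.supIndep_iff_pairwiseDisjoint]
    rintro B' hB' C' hC' hne
    simp only [coe_map, Set.mem_image, mem_coe, permEmb] at hB' hC'
    obtain ⟨B, hB, rfl⟩ := hB'
    obtain ⟨C, hC, rfl⟩ := hC'
    have hBC : B ≠ C := fun h => hne (by rw [h])
    have := g.supIndep.pairwiseDisjoint hB hC hBC
    simpa only [Function.onFun, id_eq, Function.Embedding.coeFn_mk] using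
      (Finset.disjoint_image σ.injective).2 this
  sup_parts := by
    ext x
    simp only [mem_sup, mem_map, permEmb, Function.Embedding.coeFn_mk, id_eq, mem_univ, iff_true]
    obtain ⟨B, hB, hx⟩ := g.exists_mem (mem_univ (σ.symm x))
    exact ⟨B.image σ, ⟨B, hB, rfl⟩, by simpa using ⟨σ.symm x, hx, by simp⟩⟩
  bot_notMem := by
    simp only [bot_eq_empty, mem_map, permEmb, Function.Embedding.coeFn_mk]
    rintro ⟨B, hB, hBe⟩
    rw [Finset.image_eq_empty] at hBe
    exact g.bot_notMem (show ⊥ ∈ g.parts by rw [Finset.bot_eq_empty, ← hBe]; exact hB)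

lemma act_parts (σ : Equiv.Perm (Fin M)) (g : Finpartition (univ : Finset (Fin M))) :
    (act σ g).parts = g.parts.map (permEmb σ) := rfl

lemma mem_act_parts {σ : Equiv.Perm (Fin M)} {g : Finpartition (univ : Finset (Fin M))}
    {B' : Finset (Fin M)} :
    B' ∈ (act σ g).parts ↔ ∃ B ∈ g.parts, B.image σ = B' := by
  simp [act_parts, permEmb]

lemma act_parts_val_map_card (σ : Equiv.Perm (Fin M)) (g : Finpartition (univ : Finset (Fin M))) :
    (act σ g).parts.val.map Finset.card = g.parts.val.map Finset.card := by
  rw [act_parts, Finset.map_val, Multiset.map_map]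
  congr 1
  funext B
  exact Finset.card_image_of_injective _ σ.injective

/-- Two finpartitions of the same finset with nested parts are equal. -/
lemma Finpartition.eq_of_parts_subset {α : Type*} [DecidableEq α] {s : Finset α}
    {P P' : Finpartition s} (h : P.parts ⊆ P'.parts) : P = P' := by
  ext1
  refine Finset.Subset.antisymm h fun C hC => ?_
  obtain ⟨x, hx⟩ := P'.nonempty_of_mem_parts hC
  have hxs : x ∈ s := mem_of_subset (P'.le hC) hx
  obtain ⟨B, hB, hxB⟩ := P.exists_mem hxs
  have : B = C := P'.eq_of_mem_parts (h hB) hC hxB hx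
  exact this ▸ hB

end Act

section Parts

variable {M : ℕ} (g g' : Finpartition (univ : Finset (Fin M)))

/-- The part of `a`, as an element of the subtype of parts. -/
def partS (a : Fin M) : {B // B ∈ g.parts} := ⟨g.part a, g.part_mem.2 (mem_univ a)⟩

lemma rel_iff_mem_part (u v : Fin M) :
    (∃ B ∈ g.parts, u ∈ B ∧ v ∈ B) ↔ v ∈ g.part u := by
  constructor
  · rintro ⟨B, hB, hu, hv⟩
    rwa [g.part_eq_of_mem hB hu]
  · intro hv
    exact ⟨g.part u, g.part_mem.2 (mem_univ u), g.mem_part (mem_univ u), hv⟩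

/-- Fiber of the part map over a part is the part. -/
def partFiberEquiv {B : Finset (Fin M)} (hB : B ∈ g.parts) :
    {a : Fin M // g.part a = B} ≃ {x // x ∈ B} where
  toFun a := ⟨a.1, by
    have h := g.mem_part (mem_univ a.1)
    rwa [a.2] at h⟩
  invFun x := ⟨x.1, g.part_eq_of_mem hB x.2⟩
  left_inv a := rfl
  right_inv x := rfl

lemma card_fiber_part {B : Finset (Fin M)} (hB : B ∈ g.parts) :
    Fintype.card {a : Fin M // g.part a = B} = B.card := by
  rw [Fintype.card_congr (partFiberEquiv g hB), Fintype.card_coe]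

lemma fiber_part_empty {b : Finset (Fin M)} (hb : b ∉ g.parts) :
    IsEmpty {a : Fin M // g.part a = b} :=
  ⟨fun a => hb (by rw [← a.2]; exact g.part_mem.2 (mem_univ a.1))⟩

lemma card_filter_subtype {α : Type*} (s : Finset α) (p : α → Prop) [DecidablePred p] :
    (s.filter p).card = Fintype.card {y : {x // x ∈ s} // p y.1} := by
  rw [← Fintype.card_coe]
  exact Fintype.card_congr ⟨fun x => ⟨⟨x.1, (mem_filter.mp x.2).1⟩, (mem_filter.mp x.2).2⟩,
    fun y => ⟨y.1.1, mem_filter.mpr ⟨y.1.2, y.2⟩⟩, fun x => rfl, fun y => rfl⟩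

lemma count_card_parts (j : ℕ) :
    (g.parts.val.map Finset.card).count j
      = Fintype.card {B : {B // B ∈ g.parts} // B.1.card = j} := by
  rw [Multiset.count_map]
  have : (g.parts.val.filter fun B => j = B.card) = (g.parts.filter fun B => j = B.card).val := rfl
  rw [this]
  have : (g.parts.filter fun B => j = B.card).val.card
      = (g.parts.filter fun B => j = B.card).card := rfl
  rw [this, card_filter_subtype]
  exact Fintype.card_congr (Equiv.subtypeEquivRight fun B => eq_comm)

end Parts

section BlockPred

variable {M : ℕ} (g g' : Finpartition (univ : Finset (Fin M)))
  (φ : {B // B ∈ g.parts} → Finset (Fin M)) (σ : Equiv.Perm (Fin M))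

/-- `σ` maps every block `B` of `g` to `φ B`. -/
def blockPred : Prop := ∀ B : {B // B ∈ g.parts}, B.1.image σ = φ B

instance : Decidable (blockPred g φ σ) := by unfold blockPred; infer_instance

lemma blockPred.injective {φ σ} (h : blockPred g φ σ) : Function.Injective φ := by
  intro B C hBC
  rw [← h B, ← h C] at hBC
  exact Subtype.ext (Finset.image_injective σ.injective hBC)

lemma blockPred_act {φ σ} (hval : ∀ B, φ B ∈ g'.parts) (h : blockPred g φ σ) :
    act σ g = g' := by
  refine Finpartition.eq_of_parts_subset fun B' hB' => ?_
  rw [mem_act_parts] at hB'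
  obtain ⟨B, hB, rfl⟩ := hB'
  rw [h ⟨B, hB⟩]
  exact hval _

lemma blockPred_iff_pointwise {φ σ} (hinj : Function.Injective φ)
    (hval : ∀ B, φ B ∈ g'.parts) :
    blockPred g φ σ ↔ ∀ a, g'.part (σ a) = φ (partS g a) := by
  constructor
  · intro h a
    refine g'.part_eq_of_mem (hval (partS g a)) ?_
    rw [← h (partS g a)]
    exact Finset.mem_image_of_mem _ (g.mem_part (mem_univ a))
  · intro h B
    refine Finset.Subset.antisymm ?_ ?_
    · intro x hx
      rw [Finset.mem_image] at hx
      obtain ⟨a, ha, rfl⟩ := hx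
      have hpa : partS g a = B := Subtype.ext (g.part_eq_of_mem B.2 ha)
      have := h a
      rw [hpa] at this
      rw [← this]
      exact g'.mem_part (mem_univ _)
    · intro y hy
      set a := σ.symm y with ha
      have hy' : σ a = y := σ.apply_symm_apply y
      have h1 : g'.part y = φ (partS g a) := by rw [← hy']; exact h a
      have h2 : g'.part y = φ B := g'.part_eq_of_mem (hval B) hy
      have : partS g a = B := hinj (h1.symm.trans h2)
      have haB : a ∈ B.1 := by
        rw [← (show (partS g a).1 = B.1 from congrArg Subtype.val this)]
        exact g.mem_part (mem_univ a)
      rw [← hy']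
      exact Finset.mem_image_of_mem _ haB

end BlockPred

section CountBlockPred

variable {M : ℕ} (g g' : Finpartition (univ : Finset (Fin M)))

lemma card_blockPred (φ : {B // B ∈ g.parts} → Finset (Fin M))
    (hval : ∀ B, φ B ∈ g'.parts) (hinj : Function.Injective φ) :
    Fintype.card {σ : Equiv.Perm (Fin M) // blockPred g φ σ}
      = if (∀ B, (φ B).card = B.1.card) ∧ (∀ b ∈ g'.parts, ∃ B, φ B = b)
        then ∏ b ∈ g'.parts, b.card.factorial else 0 := by
  classical
  have hF1mem : ∀ B : {B // B ∈ g.parts},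
      Fintype.card {a : Fin M // φ (partS g a) = φ B} = B.1.card := by
    intro B
    rw [Fintype.card_congr ((Equiv.subtypeEquivRight fun a => hinj.eq_iff).trans
      (Equiv.subtypeEquivRight fun a => (Subtype.ext_iff)))]
    exact card_fiber_part g B.2
  have hF1not : ∀ b : Finset (Fin M), (∀ B, φ B ≠ b) →
      Fintype.card {a : Fin M // φ (partS g a) = b} = 0 := by
    intro b h
    exact Fintype.card_eq_zero_iff.mpr ⟨fun a => h _ a.2⟩
  have hF2mem : ∀ b ∈ g'.parts, Fintype.card {a : Fin M // g'.part a = b} = b.card :=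
    fun b hb => card_fiber_part g' hb
  have hF2not : ∀ b ∉ g'.parts, Fintype.card {a : Fin M // g'.part a = b} = 0 :=
    fun b hb => Fintype.card_eq_zero_iff.mpr (fiber_part_empty g' hb)
  have hcongr : Fintype.card {σ : Equiv.Perm (Fin M) // blockPred g φ σ}
      = ∏ b : Finset (Fin M),
          Fintype.card ({a : Fin M // φ (partS g a) = b} ≃ {a : Fin M // g'.part a = b}) := by
    rw [Fintype.card_congr ((Equiv.subtypeEquivRight fun σ =>
          (blockPred_iff_pointwise g g' hinj hval)).trans
        (fiberCompatEquiv (fun a => φ (partS g a)) (fun a => g'.part a)))]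
    exact Fintype.card_pi
  rw [hcongr]
  split_ifs with hGOOD
  · obtain ⟨hsize, hsurj⟩ := hGOOD
    rw [← Finset.prod_subset (subset_univ g'.parts) (fun b _ hb => ?_)]
    · refine Finset.prod_congr rfl fun b hb => ?_
      obtain ⟨B, rfl⟩ := hsurj b hb
      rw [card_equiv_eq, hF1mem B, hF2mem _ hb, if_pos (hsize B).symm, hsize B]
    · rw [card_equiv_eq, hF1not b (fun B hBb => hb (hBb ▸ hval B)),
        hF2not b hb, if_pos rfl, Nat.factorial_zero]
  · rw [not_and_or] at hGOOD
    rcases hGOOD with hsize | hsurj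
    · push_neg at hsize
      obtain ⟨B, hB⟩ := hsize
      refine Finset.prod_eq_zero (mem_univ (φ B)) ?_
      rw [card_equiv_eq, hF1mem B, hF2mem _ (hval B), if_neg (fun h => hB h.symm)]
    · push_neg at hsurj
      obtain ⟨b, hb, hnb⟩ := hsurj
      refine Finset.prod_eq_zero (mem_univ b) ?_
      rw [card_equiv_eq, hF1not b hnb, hF2mem _ hb,
        if_neg (fun h => (g'.nonempty_of_mem_parts hb).card_pos.ne' h.symm)]

end CountBlockPred

section GoodPhi

variable {M : ℕ} (g g' : Finpartition (univ : Finset (Fin M)))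

/-- A good block assignment: the condition under which permutations realizing it exist. -/
def Goodφ (φ : {B // B ∈ g.parts} → Finset (Fin M)) : Prop :=
  (∀ B, φ B ∈ g'.parts) ∧ Function.Injective φ ∧ (∀ B, (φ B).card = B.1.card)
    ∧ (∀ b ∈ g'.parts, ∃ B, φ B = b)

/-- Good block assignments are size-preserving bijections between the parts. -/
noncomputable def goodEquiv : {φ : {B // B ∈ g.parts} → Finset (Fin M) // Goodφ g g' φ} ≃
    {e : {B // B ∈ g.parts} ≃ {C // C ∈ g'.parts} // ∀ B, (e B).1.card = B.1.card} where
  toFun φ := by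
    refine ⟨Equiv.ofBijective (fun B => (⟨φ.1 B, φ.2.1 B⟩ : {C // C ∈ g'.parts})) ⟨?_, ?_⟩, ?_⟩
    · intro B C h
      exact φ.2.2.1 (congrArg Subtype.val h)
    · rintro ⟨b, hb⟩
      obtain ⟨B, hB⟩ := φ.2.2.2.2 b hb
      exact ⟨B, Subtype.ext hB⟩
    · intro B
      exact φ.2.2.2.1 B
  invFun e :=
    ⟨fun B => (e.1 B).1, fun B => (e.1 B).2, fun B C h => e.1.injective (Subtype.ext h),
      e.2, fun b hb => ⟨e.1.symm ⟨b, hb⟩, congrArg Subtype.val (e.1.apply_symm_apply ⟨b, hb⟩)⟩⟩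
  left_inv φ := Subtype.ext rfl
  right_inv e := Subtype.ext (Equiv.ext fun B => Subtype.ext rfl)

/-- Size function valued in `Fin (M+1)`. -/
def fS (B : {B // B ∈ g.parts}) : Fin (M + 1) :=
  ⟨B.1.card, Nat.lt_succ_of_le ((Finset.card_le_univ B.1).trans_eq (by simp))⟩

lemma mapcard_eq_of_sizepres (e : {B // B ∈ g.parts} ≃ {C // C ∈ g'.parts})
    (hc : ∀ B, (e B).1.card = B.1.card) :
    g.parts.val.map Finset.card = g'.parts.val.map Finset.card := by
  ext j
  rw [count_card_parts, count_card_parts]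
  exact Fintype.card_congr
    ((fiberCompatEquiv (fun B : {B // B ∈ g.parts} => B.1.card)
      (fun C : {C // C ∈ g'.parts} => C.1.card)) ⟨e, hc⟩ j)

lemma card_sizepres (h : g.parts.val.map Finset.card = g'.parts.val.map Finset.card) :
    Fintype.card {e : {B // B ∈ g.parts} ≃ {C // C ∈ g'.parts} // ∀ B, (e B).1.card = B.1.card}
      = ∏ j ∈ Finset.range (M + 1),
          ((g.parts.val.map Finset.card).count j).factorial := by
  classical
  have h1 : Fintype.card
        {e : {B // B ∈ g.parts} ≃ {C // C ∈ g'.parts} // ∀ B, (e B).1.card = B.1.card}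
      = ∏ j : Fin (M + 1),
          Fintype.card ({B : {B // B ∈ g.parts} // fS g B = j}
            ≃ {C : {C // C ∈ g'.parts} // fS g' C = j}) := by
    rw [Fintype.card_congr ((Equiv.subtypeEquivRight fun e => ?_).trans
      (fiberCompatEquiv (fS g) (fS g')))]
    · exact Fintype.card_pi
    · constructor
      · intro hc B
        exact Fin.ext (hc B)
      · intro hc B
        exact congrArg Fin.val (hc B)
  rw [h1, ← Fin.prod_univ_eq_prod_range]
  refine Finset.prod_congr rfl fun j _ => ?_
  have h2 : ∀ (gg : Finpartition (univ : Finset (Fin M))),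
      Fintype.card {B : {B // B ∈ gg.parts} // fS gg B = j}
        = (gg.parts.val.map Finset.card).count j.1 := by
    intro gg
    rw [count_card_parts]
    exact Fintype.card_congr (Equiv.subtypeEquivRight fun B =>
      ⟨fun hh => congrArg Fin.val hh, fun hh => Fin.ext hh⟩)
  rw [card_equiv_eq, h2, h2, ← h, if_pos rfl]

end GoodPhi

section FiberAct

variable {M : ℕ} (g g' : Finpartition (univ : Finset (Fin M)))

lemma card_fiber_act :
    ((univ : Finset (Equiv.Perm (Fin M))).filter (fun σ => act σ g = g')).card
      = if g.parts.val.map Finset.card = g'.parts.val.map Finset.card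
        then (∏ j ∈ Finset.range (M + 1), ((g.parts.val.map Finset.card).count j).factorial)
          * ∏ b ∈ g'.parts, b.card.factorial
        else 0 := by
  classical
  set C := (univ : Finset (Equiv.Perm (Fin M))).filter (fun σ => act σ g = g') with hC
  have step1 : C.card = ∑ φ ∈ (univ : Finset ({B // B ∈ g.parts} → Finset (Fin M))),
      (C.filter (fun σ => blockPred g φ σ)).card := by
    have h0 := Finset.card_eq_sum_card_fiberwise (s := C)
      (t := (univ : Finset ({B // B ∈ g.parts} → Finset (Fin M))))
      (f := fun (σ : Equiv.Perm (Fin M)) (B : {B // B ∈ g.parts}) => (B.1.image σ : Finset (Fin M)))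
      (fun σ _ => mem_univ _)
    rw [h0]
    refine Finset.sum_congr rfl fun φ _ => ?_
    congr 1
    apply Finset.filter_congr
    intro σ _
    simp only [funext_iff, blockPred]
  have step2 : ∀ φ, (C.filter (fun σ => blockPred g φ σ)).card
      = if Goodφ g g' φ then ∏ b ∈ g'.parts, b.card.factorial else 0 := by
    intro φ
    by_cases h1 : ∀ B, φ B ∈ g'.parts
    · have hfil : C.filter (fun σ => blockPred g φ σ)
          = univ.filter (fun σ => blockPred g φ σ) := by
        ext σ
        simp only [hC, mem_filter, mem_univ, true_and, and_iff_right_iff_imp]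
        exact fun hbp => blockPred_act g g' h1 hbp
      rw [hfil, ← Fintype.card_subtype]
      by_cases h2 : Function.Injective φ
      · rw [card_blockPred g g' φ h1 h2]
        refine if_congr ?_ rfl rfl
        exact ⟨fun ⟨a, b⟩ => ⟨h1, h2, a, b⟩, fun ⟨_, _, a, b⟩ => ⟨a, b⟩⟩
      · rw [Fintype.card_eq_zero_iff.mpr ⟨fun σ => h2 (blockPred.injective g σ.2)⟩,
          if_neg (fun hG => h2 hG.2.1)]
    · rw [if_neg (fun hG => h1 hG.1)]
      rw [Finset.card_eq_zero, Finset.filter_eq_empty_iff]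
      intro σ hσ
      intro hbp
      push_neg at h1
      obtain ⟨B, hB⟩ := h1
      apply hB
      rw [← hbp B]
      have hact : act σ g = g' := (mem_filter.mp hσ).2
      rw [← hact]
      exact mem_act_parts.mpr ⟨B.1, B.2, rfl⟩
  have step3 : C.card = (univ.filter (fun φ => Goodφ g g' φ)).card
      * ∏ b ∈ g'.parts, b.card.factorial := by
    rw [step1]
    rw [Finset.sum_congr rfl fun φ _ => step2 φ]
    rw [← Finset.sum_filter, Finset.sum_const, smul_eq_mul]
  rw [step3, ← Fintype.card_subtype, Fintype.card_congr (goodEquiv g g')]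
  split_ifs with hQ
  · rw [card_sizepres g g' hQ]
  · rw [Fintype.card_eq_zero_iff.mpr ⟨fun e => hQ (mapcard_eq_of_sizepres g g' e.1 e.2)⟩,
      zero_mul]

end FiberAct

section MainCount

variable {M : ℕ} (g g' : Finpartition (univ : Finset (Fin M)))

lemma prod_card_factorial (s : Finset (Finset (Fin M))) :
    ∏ b ∈ s, (b.card).factorial = ((s.val.map Finset.card).map Nat.factorial).prod := by
  rw [Multiset.map_map]
  rfl

lemma count_partitions :
    M.factorial
      = ((univ : Finset (Finpartition (univ : Finset (Fin M)))).filter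
          (fun g'' => g.parts.val.map Finset.card = g''.parts.val.map Finset.card)).card
        * ((∏ j ∈ Finset.range (M + 1), ((g.parts.val.map Finset.card).count j).factorial)
            * ((g.parts.val.map Finset.card).map Nat.factorial).prod) := by
  classical
  have h0 : M.factorial = (univ : Finset (Equiv.Perm (Fin M))).card := by
    rw [Finset.card_univ, Fintype.card_perm, Fintype.card_fin]
  rw [h0, Finset.card_eq_sum_card_fiberwise (f := fun σ => act σ g)
      (t := (univ : Finset (Finpartition (univ : Finset (Fin M))))) (fun σ _ => mem_univ _)]
  rw [Finset.sum_congr rfl (fun g'' _ => card_fiber_act g g''), ← Finset.sum_filter]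
  have h1 : ∀ g'' ∈ (univ : Finset (Finpartition (univ : Finset (Fin M)))).filter
      (fun g'' => g.parts.val.map Finset.card = g''.parts.val.map Finset.card),
      ((∏ j ∈ Finset.range (M + 1), ((g.parts.val.map Finset.card).count j).factorial)
          * ∏ b ∈ g''.parts, (b.card).factorial)
        = ((∏ j ∈ Finset.range (M + 1), ((g.parts.val.map Finset.card).count j).factorial)
            * ((g.parts.val.map Finset.card).map Nat.factorial).prod) := by
    intro g'' hg''
    rw [prod_card_factorial, ← (mem_filter.mp hg'').2]
  rw [Finset.sum_congr rfl h1, Finset.sum_const, smul_eq_mul]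

lemma exists_act (h : g.parts.val.map Finset.card = g'.parts.val.map Finset.card) :
    ∃ σ : Equiv.Perm (Fin M), act σ g = g' := by
  classical
  have hcard := card_fiber_act g g'
  rw [if_pos h] at hcard
  have hpos : 0 < ((univ : Finset (Equiv.Perm (Fin M))).filter (fun σ => act σ g = g')).card := by
    rw [hcard]
    refine Nat.mul_pos (Finset.prod_pos fun j _ => Nat.factorial_pos _) ?_
    refine Finset.prod_pos fun b _ => Nat.factorial_pos _
  obtain ⟨σ, hσ⟩ := Finset.card_pos.mp hpos
  exact ⟨σ, (mem_filter.mp hσ).2⟩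

end MainCount

section MeasureSec

open MeasureTheory ProbabilityTheory

variable {N M : ℕ} {Ω : Type*} [MeasurableSpace Ω] (μ : Measure Ω)
  (X : Fin M → Ω → Fin N)

/-- The atom event where the walker configuration is exactly `f`. -/
def atomSet (f : Fin M → Fin N) : Set Ω := {ω | ∀ j, X j ω = f j}

/-- The contact-graph event of `g`. -/
def eventSet (g : Finpartition (univ : Finset (Fin M))) : Set Ω :=
  {ω | ∀ u v : Fin M, X u ω = X v ω ↔ ∃ B ∈ g.parts, u ∈ B ∧ v ∈ B}

/-- Configurations realizing the contact graph `g`. -/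
def TSet (g : Finpartition (univ : Finset (Fin M))) : Finset (Fin M → Fin N) :=
  univ.filter (fun f => ∀ u v : Fin M, f u = f v ↔ ∃ B ∈ g.parts, u ∈ B ∧ v ∈ B)

lemma atomSet_eq (f : Fin M → Fin N) : atomSet X f = ⋂ j, X j ⁻¹' {f j} := by
  ext ω; simp [atomSet]

lemma atomSet_measurable (hXmeas : ∀ j, Measurable (X j)) (f : Fin M → Fin N) :
    MeasurableSet (atomSet X f) := by
  rw [atomSet_eq]
  exact MeasurableSet.iInter fun j => (hXmeas j) (measurableSet_singleton _)

lemma atomSet_disjoint {f f' : Fin M → Fin N} (h : f ≠ f') :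
    Disjoint (atomSet X f) (atomSet X f') := by
  refine Set.disjoint_left.mpr fun ω h1 h2 => h (funext fun j => ((h1 j).symm.trans (h2 j)))

lemma meas_atom (hXindep : iIndepFun X μ)
    (q : Fin N → NNReal) (hq : ∀ j i, μ {ω | X j ω = i} = q i) (f : Fin M → Fin N) :
    μ (atomSet X f) = ∏ j, (q (f j) : ENNReal) := by
  rw [atomSet_eq, hXindep.meas_iInter (fun j => ⟨{f j}, measurableSet_singleton _, rfl⟩)]
  refine Finset.prod_congr rfl fun j _ => ?_
  rw [← hq j (f j)]
  congr 1

lemma eventSet_eq (g : Finpartition (univ : Finset (Fin M))) :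
    eventSet X g = ⋃ f ∈ (TSet g : Finset (Fin M → Fin N)), atomSet X f := by
  ext ω
  simp only [eventSet, Set.mem_setOf_eq, Set.mem_iUnion, atomSet, TSet, mem_filter, mem_univ,
    true_and, Set.mem_setOf_eq]
  constructor
  · intro h
    exact ⟨fun j => X j ω, h, fun j => rfl⟩
  · rintro ⟨f, hf, hωf⟩ u v
    rw [hωf u, hωf v]
    exact hf u v

lemma eventSet_measurable (hXmeas : ∀ j, Measurable (X j))
    (g : Finpartition (univ : Finset (Fin M))) : MeasurableSet (eventSet X g) := by
  rw [eventSet_eq]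
  exact (TSet g).measurableSet_biUnion fun f _ => atomSet_measurable X hXmeas f

lemma meas_event (hXindep : iIndepFun X μ)
    (hXmeas : ∀ j, Measurable (X j))
    (q : Fin N → NNReal) (hq : ∀ j i, μ {ω | X j ω = i} = q i)
    (g : Finpartition (univ : Finset (Fin M))) :
    μ (eventSet X g) = ∑ f ∈ (TSet g : Finset (Fin M → Fin N)), ∏ j, (q (f j) : ENNReal) := by
  rw [eventSet_eq, measure_biUnion_finset ?hd (fun f _ => atomSet_measurable X hXmeas f)]
  · exact Finset.sum_congr rfl fun f _ => meas_atom μ X hXindep q hq f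
  · intro f hf f' hf' hne
    exact atomSet_disjoint X hne

lemma rel_act {σ : Equiv.Perm (Fin M)} {g g' : Finpartition (univ : Finset (Fin M))}
    (hact : act σ g = g') (u v : Fin M) :
    (∃ B ∈ g'.parts, u ∈ B ∧ v ∈ B) ↔ (∃ B ∈ g.parts, σ.symm u ∈ B ∧ σ.symm v ∈ B) := by
  subst hact
  constructor
  · rintro ⟨B', hB', hu, hv⟩
    rw [mem_act_parts] at hB'
    obtain ⟨B, hB, rfl⟩ := hB'
    refine ⟨B, hB, ?_, ?_⟩
    · obtain ⟨x, hx, hxu⟩ := Finset.mem_image.mp hu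
      rwa [← hxu, Equiv.symm_apply_apply]
    · obtain ⟨x, hx, hxv⟩ := Finset.mem_image.mp hv
      rwa [← hxv, Equiv.symm_apply_apply]
  · rintro ⟨B, hB, hu, hv⟩
    refine ⟨B.image σ, mem_act_parts.mpr ⟨B, hB, rfl⟩, ?_, ?_⟩
    · exact Finset.mem_image.mpr ⟨σ.symm u, hu, σ.apply_symm_apply u⟩
    · exact Finset.mem_image.mpr ⟨σ.symm v, hv, σ.apply_symm_apply v⟩

lemma meas_event_act (hXindep : iIndepFun X μ)
    (hXmeas : ∀ j, Measurable (X j))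
    (q : Fin N → NNReal) (hq : ∀ j i, μ {ω | X j ω = i} = q i)
    {σ : Equiv.Perm (Fin M)} {g g' : Finpartition (univ : Finset (Fin M))}
    (hact : act σ g = g') :
    μ (eventSet X g') = μ (eventSet X g) := by
  rw [meas_event μ X hXindep hXmeas q hq, meas_event μ X hXindep hXmeas q hq]
  refine Finset.sum_nbij' (i := fun f => f ∘ ⇑σ) (j := fun f => f ∘ ⇑σ.symm) ?_ ?_ ?_ ?_ ?_
  · intro f hf
    simp only [TSet, mem_filter, mem_univ, true_and] at hf ⊢
    intro u v
    rw [Function.comp_apply, Function.comp_apply, hf (σ u) (σ v), rel_act hact (σ u) (σ v)]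
    simp
  · intro f hf
    simp only [TSet, mem_filter, mem_univ, true_and] at hf ⊢
    intro u v
    rw [Function.comp_apply, Function.comp_apply, hf (σ.symm u) (σ.symm v),
      ← rel_act hact u v]
  · intro f _
    funext x
    simp
  · intro f _
    funext x
    simp
  · intro f _
    exact (Equiv.prod_comp σ (fun j => (q (f j) : ENNReal))).symm

lemma event_partition_eq {g g' : Finpartition (univ : Finset (Fin M))}
    {ω : Ω} (h : ω ∈ eventSet X g) (h' : ω ∈ eventSet X g') : g = g' := by
  have hr : ∀ u v : Fin M, (∃ B ∈ g.parts, u ∈ B ∧ v ∈ B) ↔ ∃ B ∈ g'.parts, u ∈ B ∧ v ∈ B :=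
    fun u v => (h u v).symm.trans (h' u v)
  have key : ∀ (h1 h2 : Finpartition (univ : Finset (Fin M))),
      (∀ u v : Fin M, (∃ B ∈ h1.parts, u ∈ B ∧ v ∈ B) ↔ ∃ B ∈ h2.parts, u ∈ B ∧ v ∈ B) →
      h1.parts ⊆ h2.parts := by
    intro h1 h2 hrel B hB
    obtain ⟨a, ha⟩ := h1.nonempty_of_mem_parts hB
    have hBa : B = h1.part a := (h1.part_eq_of_mem hB ha).symm
    have : B = h2.part a := by
      ext x
      rw [hBa, ← rel_iff_mem_part h1 a x, hrel a x, rel_iff_mem_part h2 a x]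
    rw [this]
    exact h2.part_mem.2 (mem_univ a)
  exact Finpartition.eq_of_parts_subset (key g g' hr)

end MeasureSec


/-- Lemma 3, unlabelled contact graph probability: when all walkers are
identically distributed, the probability of observing *some* contact graph with block-size
multiset `Q` equals `γ(Q)` times the probability of any fixed contact graph with block-size
multiset `Q`, where `γ(Q) = M! / (∏ᵢ qᵢ! · ∏ⱼ cⱼ!)`. -/
theorem unlabelled_contact_graph_prob
    (N M : ℕ) (hN : 1 ≤ N) (hM : 1 ≤ M)
    {Ω : Type*} [MeasurableSpace Ω] (μ : Measure Ω) [IsProbabilityMeasure μ]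
    (X : Fin M → Ω → Fin N)
    (hXmeas : ∀ j, Measurable (X j))
    (hXindep : iIndepFun X μ)
    (p : Fin M → Fin N → NNReal)
    (hp : ∀ j i, μ {ω | X j ω = i} = p j i)
    (hpsum : ∀ j, ∑ i, p j i = 1)
    (q : Fin N → NNReal) (hq : ∀ j, p j = q)
    (m : ℕ) (Q : Multiset ℕ)
    (hQpos : ∀ a ∈ Q, 0 < a) (hQcard : Multiset.card Q = m) (hQsum : Q.sum = M)
    (g : Finpartition (Finset.univ : Finset (Fin M)))
    (hg : g.parts.val.map Finset.card = Q) :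
    (μ (⋃ (g' : Finpartition (Finset.univ : Finset (Fin M)))
          (_ : g'.parts.val.map Finset.card = Q),
          {ω | ∀ u v : Fin M, X u ω = X v ω ↔ ∃ B ∈ g'.parts, u ∈ B ∧ v ∈ B})).toReal
      = ((M.factorial : ℝ) /
          ((Q.map Nat.factorial).prod
            * ∏ j ∈ Finset.Icc 1 M, ((Q.count j).factorial : ℕ)))
        * (μ {ω | ∀ u v : Fin M, X u ω = X v ω ↔ ∃ B ∈ g.parts, u ∈ B ∧ v ∈ B}).toReal := by
  
  classical
  have hq' : ∀ j i, μ {ω | X j ω = i} = q i := fun j i => by rw [hp, hq]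
  set S : Finset (Finpartition (Finset.univ : Finset (Fin M))) :=
    Finset.univ.filter (fun g' => g'.parts.val.map Finset.card = Q) with hS
  -- rewrite the union as a biUnion over S
  have hU : (⋃ (g' : Finpartition (Finset.univ : Finset (Fin M)))
        (_ : g'.parts.val.map Finset.card = Q),
        {ω : Ω | ∀ u v : Fin M, X u ω = X v ω ↔ ∃ B ∈ g'.parts, u ∈ B ∧ v ∈ B})
      = ⋃ g' ∈ S, eventSet X g' := by
    ext ω
    simp only [Set.mem_iUnion, hS, Finset.mem_filter, Finset.mem_univ, true_and]
    constructor
    · rintro ⟨g', hg', hω⟩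
      exact ⟨g', hg', hω⟩
    · rintro ⟨g', hg', hω⟩
      exact ⟨g', hg', hω⟩
  rw [hU]
  have hmeas : ∀ g' ∈ S, MeasurableSet (eventSet X g') :=
    fun g' _ => eventSet_measurable X hXmeas g'
  have hdisj : (S : Set (Finpartition (Finset.univ : Finset (Fin M)))).PairwiseDisjoint
      (eventSet X) := by
    intro g1 _ g2 _ hne
    exact Set.disjoint_left.mpr fun ω h1 h2 => hne (event_partition_eq X h1 h2)
  rw [measure_biUnion_finset hdisj hmeas]
  have hterm : ∀ g' ∈ S, μ (eventSet X g')
      = μ (eventSet X g) := by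
    intro g' hg'
    have hcond : g'.parts.val.map Finset.card = Q := (Finset.mem_filter.mp hg').2
    obtain ⟨σ, hσ⟩ := exists_act g g' (by rw [hg, hcond])
    exact meas_event_act μ X hXindep hXmeas q hq' hσ
  rw [Finset.sum_congr rfl hterm, Finset.sum_const, nsmul_eq_mul, ENNReal.toReal_mul,
    ENNReal.toReal_natCast]
  -- identify the fixed event
  have hEg : {ω : Ω | ∀ u v : Fin M, X u ω = X v ω ↔ ∃ B ∈ g.parts, u ∈ B ∧ v ∈ B}
      = eventSet X g := rfl
  rw [hEg]
  -- the counting identity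
  have hScount : M.factorial = S.card
      * ((∏ j ∈ Finset.Icc 1 M, (Q.count j).factorial) * (Q.map Nat.factorial).prod) := by
    have h0 := count_partitions g
    have hfil : (Finset.univ.filter
        (fun g'' : Finpartition (Finset.univ : Finset (Fin M)) =>
          g.parts.val.map Finset.card = g''.parts.val.map Finset.card)) = S := by
      apply Finset.filter_congr
      intro g'' _
      rw [hg]
      exact ⟨fun h => h.symm, fun h => h.symm⟩
    rw [hfil, hg] at h0
    have hprod : ∏ j ∈ Finset.range (M + 1), (Q.count j).factorial
        = ∏ j ∈ Finset.Icc 1 M, (Q.count j).factorial := by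
      refine (Finset.prod_subset ?_ ?_).symm
      · intro j hj
        rw [Finset.mem_Icc] at hj
        rw [Finset.mem_range]
        omega
      · intro j hj1 hj2
        rw [Finset.mem_range] at hj1
        rw [Finset.mem_Icc] at hj2
        have hj0 : j = 0 := by
          by_contra h
          exact hj2 ⟨Nat.one_le_iff_ne_zero.mpr h, by omega⟩
        subst hj0
        rw [Multiset.count_eq_zero.mpr (fun h0 => (hQpos 0 h0).false), Nat.factorial_zero]
    rw [hprod] at h0
    exact h0
  -- final arithmetic
  have hKpos : (0 : ℝ) < ((Q.map Nat.factorial).prod : ℝ)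
      * ∏ j ∈ Finset.Icc 1 M, ((Q.count j).factorial : ℕ) := by
    have h1 : 0 < (Q.map Nat.factorial).prod :=
      Multiset.prod_pos (by
        intro x hx
        rw [Multiset.mem_map] at hx
        obtain ⟨a, _, rfl⟩ := hx
        exact Nat.factorial_pos a)
    have h2 : 0 < ∏ j ∈ Finset.Icc 1 M, (Q.count j).factorial :=
      Finset.prod_pos fun j _ => Nat.factorial_pos _
    positivity
  have hfinal : (S.card : ℝ) = (M.factorial : ℝ)
      / (((Q.map Nat.factorial).prod : ℝ)
          * ∏ j ∈ Finset.Icc 1 M, ((Q.count j).factorial : ℕ)) := by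
    rw [eq_div_iff hKpos.ne']
    have := congrArg (fun n : ℕ => (n : ℝ)) hScount
    push_cast at this ⊢
    rw [this]
    ring
  rw [hfinal]
end

section
/- (Steady-state unlabelled formula, equation (22)) Suppose all walkers have the same marginal distribution q : Fin N → ℝ≥0 (p j = q for all j). Let Q = {q_1, …, q_m} be a multiset of m positive integers summing to M with multiplicities c_j (1 ≤ j ≤ M), and let E^u_Q be the union of the events E_g over all contact graphs g whose multiset of block sizes equals Q. Then μ(E^u_Q) = [ M! / ( ∏_{i=1}^{m} q_i! · ∏_{j=1}^{M} c_j! ) ] · ∑_{i_1, …, i_m pairwise distinct elements of Fin N} ∏_{j=1}^{m} (q_{i_j})^{q_j}, where (q_{i_j})^{q_j} denotes the q_j-th power of the probability q(i_j). -/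
open Finset MeasureTheory ProbabilityTheory

namespace SSUF
variable {M m N : ℕ}

def w (x : Fin M → Fin N) (i : Fin N) : ℕ := #{j | x j = i}



/-- Equivalence between permutations intertwining two functions and families of fiber
equivalences. -/
def permEquiv (φ φ₀ : Fin M → Fin m) :
    {σ : Equiv.Perm (Fin M) // ∀ j, φ (σ j) = φ₀ j} ≃
      ∀ k : Fin m, ({j // φ₀ j = k} ≃ {j // φ j = k}) where
  toFun σh k :=
    { toFun := fun j => ⟨σh.1 j.1, by rw [σh.2]; exact j.2⟩
      invFun := fun j => ⟨σh.1.symm j.1, by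
        have := σh.2 (σh.1.symm j.1); rw [Equiv.apply_symm_apply] at this
        rw [← this]; exact j.2⟩
      left_inv := fun j => by simp
      right_inv := fun j => by simp }
  invFun e := ⟨Equiv.ofFiberEquiv e, fun j => Equiv.ofFiberEquiv_map e j⟩
  left_inv := fun σh => by
    apply Subtype.ext
    apply Equiv.ext
    intro j
    simp [Equiv.ofFiberEquiv]
  right_inv := fun e => by
    funext k
    apply Equiv.ext
    rintro ⟨j, hj⟩
    apply Subtype.ext
    have key : ∀ (k' : Fin m) (hj' : φ₀ j = k'),
        Subtype.val (e k' ⟨j, hj'⟩) = Subtype.val (e (φ₀ j) ⟨j, rfl⟩) := by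
      intro k' hj'; subst hj'; rfl
    rw [key k hj]
    rfl

lemma card_perm_comp (φ φ₀ : Fin M → Fin m)
    (h : ∀ k, #{j | φ j = k} = #{j | φ₀ j = k}) :
    Fintype.card {σ : Equiv.Perm (Fin M) // ∀ j, φ (σ j) = φ₀ j}
      = ∏ k, (#{j | φ₀ j = k}).factorial := by
  rw [Fintype.card_congr (permEquiv φ φ₀), Fintype.card_pi]
  refine Finset.prod_congr rfl fun k _ => ?_
  have h1 : Fintype.card {j // φ₀ j = k} = #{j | φ₀ j = k} := Fintype.card_subtype _
  have h2 : Fintype.card {j // φ j = k} = #{j | φ j = k} := Fintype.card_subtype _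
  have : Nonempty ({j // φ₀ j = k} ≃ {j // φ j = k}) := by
    rw [← Fintype.card_eq]; rw [h1, h2, h k]
  rw [Fintype.card_equiv this.some, h1]




noncomputable def injEquiv (u : Fin m → ℕ) (v : Fin N → ℕ) (S : Finset ℕ) (hu : ∀ k, u k ∈ S)
    (hcard : ∀ s ∈ S, Fintype.card {k // u k = s} = Fintype.card {i // v i = s}) :
    {ι : Fin m → Fin N // Function.Injective ι ∧ ∀ k, v (ι k) = u k} ≃
      ∀ s : S, ({k // u k = (s : ℕ)} ≃ {i // v i = (s : ℕ)}) where
  toFun ιh s := Equiv.ofBijective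
      (fun k => ⟨ιh.1 k.1, by rw [ιh.2.2]; exact k.2⟩)
      (by
        rw [Fintype.bijective_iff_injective_and_card]
        constructor
        · intro a b hab
          apply Subtype.ext
          exact ιh.2.1 (congrArg Subtype.val hab)
        · exact hcard s s.2)
  invFun e := by
    refine ⟨fun k => Subtype.val (e ⟨u k, hu k⟩ ⟨k, rfl⟩), ?_, fun k => (e ⟨u k, hu k⟩ ⟨k, rfl⟩).2⟩
    have key : ∀ (s : S) (k : Fin m) (hk : u k = (s : ℕ)),
        Subtype.val (e ⟨u k, hu k⟩ ⟨k, rfl⟩) = Subtype.val (e s ⟨k, hk⟩) := by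
      rintro ⟨s, hs⟩ k hk
      cases hk
      rfl
    intro a b hab
    simp only at hab
    have ha := (e ⟨u a, hu a⟩ ⟨a, rfl⟩).2
    have hb := (e ⟨u b, hu b⟩ ⟨b, rfl⟩).2
    rw [hab] at ha
    have huv : u a = u b := ha.symm.trans hb
    rw [key ⟨u b, hu b⟩ a huv] at hab
    have := (e ⟨u b, hu b⟩).injective (Subtype.ext hab)
    exact congrArg Subtype.val this
  left_inv ιh := by
    apply Subtype.ext
    funext k
    rfl
  right_inv e := by
    funext s
    apply Equiv.ext
    rintro ⟨k, hk⟩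
    apply Subtype.ext
    show Subtype.val (e ⟨u k, hu k⟩ ⟨k, rfl⟩) = _
    have key : ∀ (s' : S) (hk' : u k = (s' : ℕ)),
        Subtype.val (e ⟨u k, hu k⟩ ⟨k, rfl⟩) = Subtype.val (e s' ⟨k, hk'⟩) := by
      rintro ⟨s', hs'⟩ hk'
      cases hk'
      rfl
    exact key s hk

lemma card_inj (u : Fin m → ℕ) (v : Fin N → ℕ) (S : Finset ℕ) (hu : ∀ k, u k ∈ S)
    (hcard : ∀ s ∈ S, #{k | u k = s} = #{i | v i = s}) :
    #{ι : Fin m → Fin N | Function.Injective ι ∧ ∀ k, v (ι k) = u k}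
      = ∏ s ∈ S, (#{k | u k = s}).factorial := by
  have hc : ∀ s ∈ S, Fintype.card {k // u k = s} = Fintype.card {i // v i = s} := by
    intro s hs
    rw [Fintype.card_subtype, Fintype.card_subtype]
    exact hcard s hs
  rw [← Fintype.card_subtype, Fintype.card_congr (injEquiv u v S hu hc), Fintype.card_pi]
  rw [← Finset.prod_coe_sort S]
  refine Finset.prod_congr rfl fun s _ => ?_
  have h1 : Fintype.card {k // u k = (s : ℕ)} = #{k | u k = (s : ℕ)} := Fintype.card_subtype _
  have : Nonempty ({k // u k = (s : ℕ)} ≃ {i // v i = (s : ℕ)}) := by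
    rw [← Fintype.card_eq]; exact hc s s.2
  rw [Fintype.card_equiv this.some, h1]





def fiberOf (x : Fin M → Fin N) (i : Fin N) : Finset (Fin M) := {j | x j = i}

lemma mem_fiberOf {x : Fin M → Fin N} {i : Fin N} {j : Fin M} :
    j ∈ fiberOf x i ↔ x j = i := by simp [fiberOf]

lemma fiberOf_nonempty {x : Fin M → Fin N} {i : Fin N} (hi : i ∈ univ.image x) :
    (fiberOf x i).Nonempty := by
  obtain ⟨j, _, hj⟩ := Finset.mem_image.mp hi
  exact ⟨j, mem_fiberOf.mpr hj⟩

lemma fiberOf_injOn (x : Fin M → Fin N) :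
    Set.InjOn (fiberOf x) (univ.image x) := by
  intro i hi i' _ h
  obtain ⟨j, hj⟩ := fiberOf_nonempty hi
  have h1 : x j = i := mem_fiberOf.mp hj
  have h2 : x j = i' := mem_fiberOf.mp (h ▸ hj)
  rw [← h1, h2]

/-- The partition of `Fin M` into the fibers of `x`. -/
def fp (x : Fin M → Fin N) : Finpartition (univ : Finset (Fin M)) where
  parts := (univ.image x).image (fiberOf x)
  supIndep := by
    rw [Finset.supIndep_iff_pairwiseDisjoint]
    intro B hB B' hB' hne
    simp only [Finset.coe_image, Set.mem_image, Finset.mem_coe] at hB hB'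
    obtain ⟨i, hi, rfl⟩ := hB
    obtain ⟨i', hi', rfl⟩ := hB'
    have hii : i ≠ i' := fun h => hne (by rw [h])
    simp only [Function.onFun, Finset.disjoint_left]
    intro j hj hj'
    exact hii ((mem_fiberOf.mp hj).symm.trans (mem_fiberOf.mp hj'))
  sup_parts := by
    apply Finset.Subset.antisymm
    · intro j _; exact Finset.mem_univ j
    · intro j _
      rw [Finset.mem_sup]
      exact ⟨fiberOf x (x j), Finset.mem_image_of_mem _ (Finset.mem_image_of_mem _ (mem_univ j)),
        mem_fiberOf.mpr rfl⟩
  bot_notMem := by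
    intro hbot
    obtain ⟨i, hi, h⟩ := Finset.mem_image.mp hbot
    obtain ⟨j, hj⟩ := fiberOf_nonempty hi
    rw [h] at hj
    exact absurd hj (Finset.notMem_empty j)

lemma fp_iff_cond (x : Fin M → Fin N) (u v : Fin M) :
    x u = x v ↔ ∃ B ∈ (fp x).parts, u ∈ B ∧ v ∈ B := by
  constructor
  · intro h
    exact ⟨fiberOf x (x v), Finset.mem_image_of_mem _ (Finset.mem_image_of_mem _ (mem_univ v)),
      mem_fiberOf.mpr h, mem_fiberOf.mpr rfl⟩
  · rintro ⟨B, hB, hu, hv⟩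
    simp only [fp, Finset.mem_image] at hB
    obtain ⟨i, _, rfl⟩ := hB
    rw [mem_fiberOf.mp hu, mem_fiberOf.mp hv]

lemma parts_eq_of_cond {x : Fin M → Fin N} {g' : Finpartition (univ : Finset (Fin M))}
    (hg : ∀ u v, x u = x v ↔ ∃ B ∈ g'.parts, u ∈ B ∧ v ∈ B) : g' = fp x := by
  have key : ∀ B ∈ g'.parts, ∀ u ∈ B, B = fiberOf x (x u) := by
    intro B hB u hu
    apply Finset.ext
    intro v
    rw [mem_fiberOf]
    constructor
    · intro hv
      exact (hg v u).mpr ⟨B, hB, hv, hu⟩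
    · intro hv
      obtain ⟨B', hB', hu', hv'⟩ := (hg u v).mp hv.symm
      rwa [← g'.eq_of_mem_parts hB hB' hu hu'] at hv'
  apply Finpartition.ext
  apply Finset.ext
  intro B
  constructor
  · intro hB
    obtain ⟨u, hu⟩ := g'.nonempty_of_mem_parts hB
    rw [key B hB u hu]
    show _ ∈ (fp x).parts
    exact Finset.mem_image_of_mem _ (Finset.mem_image_of_mem _ (mem_univ u))
  · intro hB
    obtain ⟨i, hi, rfl⟩ := Finset.mem_image.mp hB
    obtain ⟨j, hj⟩ := fiberOf_nonempty hi
    have hj' : x j = i := mem_fiberOf.mp hj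
    -- the part of g' containing j equals fiberOf x i
    obtain ⟨B', hB', hjB'⟩ : ∃ B' ∈ g'.parts, j ∈ B' := by
      obtain ⟨B', hB', h1, _⟩ := (hg j j).mp rfl
      exact ⟨B', hB', h1⟩
    have hBf : B' = fiberOf x (x j) := key B' hB' j hjB'
    rw [show fiberOf x i = B' by rw [hBf, hj']]
    exact hB'

lemma cond_iff_shape (x : Fin M → Fin N) (Q : Multiset ℕ) :
    (∃ g' : Finpartition (univ : Finset (Fin M)),
        g'.parts.val.map Finset.card = Q ∧
        ∀ u v, x u = x v ↔ ∃ B ∈ g'.parts, u ∈ B ∧ v ∈ B) ↔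
      (univ.image x).val.map (w x) = Q := by
  have hval : (fp x).parts.val.map Finset.card = (univ.image x).val.map (w x) := by
    show ((univ.image x).image (fiberOf x)).val.map Finset.card = _
    rw [Finset.image_val_of_injOn (fiberOf_injOn x), Multiset.map_map]
    rfl
  constructor
  · rintro ⟨g', hQ, hg⟩
    rw [parts_eq_of_cond hg] at hQ
    rw [← hval, hQ]
  · intro h
    exact ⟨fp x, hval.trans h, fp_iff_cond x⟩





lemma count_map_finset {α : Type*} [DecidableEq α] (t : Finset α) (f : α → ℕ) (s : ℕ) :
    (t.val.map f).count s = #{a ∈ t | f a = s} := by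
  rw [Multiset.count_map]
  show _ = Multiset.card (t.val.filter (fun a => f a = s))
  congr 1
  exact Multiset.filter_congr fun a _ => eq_comm

lemma fib_comp_equiv (ψ : Fin M → Fin m) (σ : Equiv.Perm (Fin M)) (k : Fin m) :
    #{j | ψ (σ j) = k} = #{j | ψ j = k} := by
  rw [← Fintype.card_subtype, ← Fintype.card_subtype]
  exact Fintype.card_congr (σ.subtypeEquiv (fun j => Iff.rfl))

lemma exists_phi0 {qs : Fin m → ℕ} (hqs_sum : ∑ k, qs k = M) :
    ∃ φ₀ : Fin M → Fin m, ∀ k, #{j | φ₀ j = k} = qs k := by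
  have hcard : Fintype.card (Fin M) = Fintype.card (Σ k : Fin m, Fin (qs k)) := by
    simp [hqs_sum]
  obtain ⟨e⟩ : Nonempty (Fin M ≃ Σ k : Fin m, Fin (qs k)) := ⟨Fintype.equivOfCardEq hcard⟩
  refine ⟨fun j => (e j).1, fun k => ?_⟩
  rw [← Fintype.card_subtype]
  have e1 : {j : Fin M // (e j).1 = k} ≃ {p : Σ k' : Fin m, Fin (qs k') // p.1 = k} :=
    e.subtypeEquiv (fun j => Iff.rfl)
  have e2 : {p : Σ k' : Fin m, Fin (qs k') // p.1 = k} ≃ Fin (qs k) :=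
    { toFun := fun p => Fin.cast (congrArg qs p.2) p.1.2
      invFun := fun b => ⟨⟨k, b⟩, rfl⟩
      left_inv := by rintro ⟨⟨k', b⟩, h⟩; dsimp only at h; subst h; rfl
      right_inv := fun b => rfl }
  rw [Fintype.card_congr (e1.trans e2), Fintype.card_fin]

lemma shape_comp {qs : Fin m → ℕ} (hqs_pos : ∀ k, 0 < qs k)
    {ι : Fin m → Fin N} (hι : Function.Injective ι)
    {ψ : Fin M → Fin m} (hψ : ∀ k, #{j | ψ j = k} = qs k) :
    (univ.image (fun j => ι (ψ j))).val.map (w (fun j => ι (ψ j))) = univ.val.map qs := by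
  set x := fun j => ι (ψ j) with hx
  have hwx : ∀ k, w x (ι k) = qs k := by
    intro k
    rw [← hψ k]
    unfold w
    congr 1
    apply Finset.filter_congr
    intro j _
    show ι (ψ j) = ι k ↔ ψ j = k
    exact hι.eq_iff
  have himψ : univ.image ψ = univ := by
    apply Finset.eq_univ_of_forall
    intro k
    have : 0 < #{j | ψ j = k} := by rw [hψ k]; exact hqs_pos k
    obtain ⟨j, hj⟩ := Finset.card_pos.mp this
    exact Finset.mem_image.mpr ⟨j, mem_univ j, (Finset.mem_filter.mp hj).2⟩
  have himx : univ.image x = univ.image ι := by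
    rw [hx, show (univ.image fun j => ι (ψ j)) = (univ.image ψ).image ι by
      rw [Finset.image_image]; rfl, himψ]
  rw [himx, Finset.image_val_of_injOn (Function.Injective.injOn hι), Multiset.map_map]
  exact Multiset.map_congr rfl fun k _ => hwx k

lemma exists_phi {qs : Fin m → ℕ} (hqs_sum : ∑ k, qs k = M)
    (x : Fin M → Fin N) (ι : Fin m → Fin N)
    (hι : Function.Injective ι) (hw : ∀ k, w x (ι k) = qs k) :
    ∃ φ : Fin M → Fin m, (∀ j, ι (φ j) = x j) ∧ ∀ k, #{j | φ j = k} = qs k := by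
  have hcover : ∀ j, x j ∈ univ.image ι := by
    have hsum : ∑ i ∈ univ.image ι, #{j | x j = i} = #{j | x j ∈ univ.image ι} :=
      Finset.sum_card_fiberwise_eq_card_filter univ (univ.image ι) x
    have hM : ∑ i ∈ univ.image ι, #{j | x j = i} = M := by
      rw [Finset.sum_image (fun a _ b _ h => hι h)]
      exact (Finset.sum_congr rfl fun k _ => hw k).trans hqs_sum
    have huniv : ({j | x j ∈ univ.image ι} : Finset (Fin M)) = univ := by
      apply Finset.eq_univ_of_card
      rw [← hsum, hM]
      simp
    intro j
    have : j ∈ ({j | x j ∈ univ.image ι} : Finset (Fin M)) := by rw [huniv]; exact mem_univ j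
    exact (Finset.mem_filter.mp this).2
  choose φ hmem hφ using fun j => Finset.mem_image.mp (hcover j)
  refine ⟨φ, hφ, fun k => ?_⟩
  have hfib : ({j | φ j = k} : Finset (Fin M)) = ({j | x j = ι k} : Finset (Fin M)) := by
    ext j
    simp only [Finset.mem_filter, Finset.mem_univ, true_and]
    constructor
    · rintro rfl
      exact (hφ j).symm
    · intro h
      exact hι ((hφ j).trans h)
  rw [hfib]
  exact hw k





lemma shape_counts {qs : Fin m → ℕ} {x : Fin M → Fin N}
    (hx : (univ.image x).val.map (w x) = univ.val.map qs) {s : ℕ} (hs : 0 < s) :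
    #{i | w x i = s} = #{k | qs k = s} := by
  have h := congrArg (Multiset.count s) hx
  rw [count_map_finset, count_map_finset] at h
  rw [← h]
  congr 1
  ext i
  simp only [Finset.mem_filter, Finset.mem_univ, true_and, Finset.mem_image]
  constructor
  · intro hw
    refine ⟨?_, hw⟩
    have : 0 < #{j | x j = i} := by
      show 0 < w x i
      rw [hw]; exact hs
    obtain ⟨j, hj⟩ := Finset.card_pos.mp this
    exact ⟨j, (Finset.mem_filter.mp hj).2⟩
  · exact fun h => h.2



lemma mem_Icc_of (qs : Fin m → ℕ) (hqs_pos : ∀ k, 0 < qs k) (hqs_sum : ∑ k, qs k = M)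
    (k : Fin m) : qs k ∈ Finset.Icc 1 M :=
  Finset.mem_Icc.mpr ⟨hqs_pos k,
    hqs_sum ▸ Finset.single_le_sum (fun i _ => Nat.zero_le _) (mem_univ k)⟩

lemma image_F {qs : Fin m → ℕ} (hqs_pos : ∀ k, 0 < qs k) (hqs_sum : ∑ k, qs k = M)
    (φ₀ : Fin M → Fin m) (hφ₀ : ∀ k, #{j | φ₀ j = k} = qs k) :
    (({ι : Fin m → Fin N | Function.Injective ι} : Finset _) ×ˢ
        (univ : Finset (Equiv.Perm (Fin M)))).image
        (fun p => fun j => p.1 (φ₀ (p.2⁻¹ j)))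
      = ({x | (univ.image x).val.map (w x) = univ.val.map qs} : Finset _) := by
  ext x
  simp only [Finset.mem_image, Finset.mem_product, Finset.mem_filter, Finset.mem_univ, true_and,
    and_true]
  constructor
  · rintro ⟨⟨ι, σ⟩, hι, rfl⟩
    exact shape_comp hqs_pos hι (fun k => (fib_comp_equiv φ₀ σ⁻¹ k).trans (hφ₀ k))
  · intro hx
    have hc : ∀ s ∈ Finset.Icc 1 M, #{k | qs k = s} = #{i | w x i = s} := fun s hs =>
      (shape_counts hx (Finset.mem_Icc.mp hs).1).symm
    have hcard := card_inj qs (w x) (Finset.Icc 1 M) (mem_Icc_of qs hqs_pos hqs_sum) hc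
    have hpos : 0 < #{ι : Fin m → Fin N | Function.Injective ι ∧ ∀ k, w x (ι k) = qs k} := by
      rw [hcard]
      exact Finset.prod_pos fun s _ => Nat.factorial_pos _
    obtain ⟨ι, hιmem⟩ := Finset.card_pos.mp hpos
    obtain ⟨hι, hιw⟩ := (Finset.mem_filter.mp hιmem).2
    obtain ⟨φ, hφ, hφf⟩ := exists_phi hqs_sum x ι hι hιw
    have hperm : 0 < Fintype.card {σ : Equiv.Perm (Fin M) // ∀ j, φ (σ j) = φ₀ j} := by
      rw [card_perm_comp φ φ₀ (fun k => by rw [hφf k, hφ₀ k])]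
      exact Finset.prod_pos fun k _ => Nat.factorial_pos _
    obtain ⟨⟨σ, hσ⟩⟩ := Fintype.card_pos_iff.mp hperm
    refine ⟨(ι, σ), hι, funext fun j => ?_⟩
    show ι (φ₀ (σ⁻¹ j)) = x j
    have h1 : φ (σ (σ⁻¹ j)) = φ₀ (σ⁻¹ j) := hσ (σ⁻¹ j)
    rw [show σ (σ⁻¹ j) = j from σ.apply_symm_apply j] at h1
    rw [← h1]
    exact hφ j

lemma fiber_count {qs : Fin m → ℕ} (hqs_pos : ∀ k, 0 < qs k) (hqs_sum : ∑ k, qs k = M)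
    (φ₀ : Fin M → Fin m) (hφ₀ : ∀ k, #{j | φ₀ j = k} = qs k)
    (x : Fin M → Fin N) (hx : (univ.image x).val.map (w x) = univ.val.map qs) :
    #{p ∈ (({ι : Fin m → Fin N | Function.Injective ι} : Finset _) ×ˢ
        (univ : Finset (Equiv.Perm (Fin M)))) | (fun j => p.1 (φ₀ (p.2⁻¹ j))) = x}
      = (∏ k, (qs k).factorial) * ∏ s ∈ Finset.Icc 1 M, (#{k | qs k = s}).factorial := by
  rw [Finset.card_filter, Finset.sum_product]
  have inner : ∀ ι : Fin m → Fin N, Function.Injective ι →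
      (∑ σ : Equiv.Perm (Fin M), ite ((fun j => ι (φ₀ (σ⁻¹ j))) = x) 1 0)
        = if (∀ k, w x (ι k) = qs k) then ∏ k, (qs k).factorial else 0 := by
    intro ι hι
    by_cases hcompat : ∀ k, w x (ι k) = qs k
    · rw [if_pos hcompat]
      obtain ⟨φ, hφ, hφf⟩ := exists_phi hqs_sum x ι hι hcompat
      have hcond : ∀ σ : Equiv.Perm (Fin M),
          ((fun j => ι (φ₀ (σ⁻¹ j))) = x) ↔ (∀ j, φ (σ j) = φ₀ j) := by
        intro σ
        rw [funext_iff]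
        constructor
        · intro h j
          have h1 := h (σ j)
          rw [show σ⁻¹ (σ j) = j from σ.symm_apply_apply j] at h1
          rw [← hφ (σ j)] at h1
          exact (hι h1).symm
        · intro h j
          have h1 := h (σ⁻¹ j)
          rw [show σ (σ⁻¹ j) = j from σ.apply_symm_apply j] at h1
          rw [← h1]
          exact hφ j
      calc (∑ σ : Equiv.Perm (Fin M), ite ((fun j => ι (φ₀ (σ⁻¹ j))) = x) 1 0)
          = #{σ : Equiv.Perm (Fin M) | ∀ j, φ (σ j) = φ₀ j} := by
            rw [Finset.card_filter]
            exact Finset.sum_congr rfl fun σ _ => by rw [if_congr (hcond σ) rfl rfl]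
        _ = Fintype.card {σ : Equiv.Perm (Fin M) // ∀ j, φ (σ j) = φ₀ j} :=
            (Fintype.card_subtype _).symm
        _ = ∏ k, (#{j | φ₀ j = k}).factorial :=
            card_perm_comp φ φ₀ (fun k => by rw [hφf k, hφ₀ k])
        _ = ∏ k, (qs k).factorial := by
            exact Finset.prod_congr rfl fun k _ => by rw [hφ₀ k]
    · rw [if_neg hcompat]
      apply Finset.sum_eq_zero
      intro σ _
      rw [if_neg]
      intro hF
      apply hcompat
      intro k
      have h1 : w x (ι k) = #{j | φ₀ (σ⁻¹ j) = k} := by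
        rw [← hF]
        unfold w
        congr 1
        apply Finset.filter_congr
        intro j _
        show ι (φ₀ (σ⁻¹ j)) = ι k ↔ φ₀ (σ⁻¹ j) = k
        exact hι.eq_iff
      rw [h1, fib_comp_equiv φ₀ σ⁻¹ k]
      exact hφ₀ k
  calc (∑ ι ∈ ({ι : Fin m → Fin N | Function.Injective ι} : Finset _),
          ∑ σ : Equiv.Perm (Fin M), ite ((fun j => ι (φ₀ (σ⁻¹ j))) = x) 1 0)
      = ∑ ι ∈ ({ι : Fin m → Fin N | Function.Injective ι} : Finset _),
          if (∀ k, w x (ι k) = qs k) then ∏ k, (qs k).factorial else 0 := by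
        refine Finset.sum_congr rfl fun ι hι => ?_
        exact inner ι (Finset.mem_filter.mp hι).2
    _ = ∑ ι ∈ ({ι : Fin m → Fin N | Function.Injective ι} : Finset _).filter
          (fun ι => ∀ k, w x (ι k) = qs k), ∏ k, (qs k).factorial :=
        (Finset.sum_filter _ _).symm
    _ = #{ι : Fin m → Fin N | Function.Injective ι ∧ ∀ k, w x (ι k) = qs k}
          * ∏ k, (qs k).factorial := by
        rw [Finset.sum_const, Finset.filter_filter, smul_eq_mul]
    _ = (∏ k, (qs k).factorial) * ∏ s ∈ Finset.Icc 1 M, (#{k | qs k = s}).factorial := by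
        rw [card_inj qs (w x) (Finset.Icc 1 M) (mem_Icc_of qs hqs_pos hqs_sum)
          (fun s hs => (shape_counts hx (Finset.mem_Icc.mp hs).1).symm), mul_comm]



lemma key_identity (q : Fin N → NNReal) {qs : Fin m → ℕ}
    (hqs_pos : ∀ k, 0 < qs k) (hqs_sum : ∑ k, qs k = M) :
    (((∏ k, (qs k).factorial) * ∏ s ∈ Finset.Icc 1 M, (#{k | qs k = s}).factorial : ℕ) : ℝ) *
      ∑ x ∈ ({x : Fin M → Fin N | (univ.image x).val.map (w x) = univ.val.map qs} : Finset _),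
        ∏ j, (q (x j) : ℝ)
    = (M.factorial : ℝ) * ∑ ι ∈ ({ι : Fin m → Fin N | Function.Injective ι} : Finset _),
        ∏ k, (q (ι k) : ℝ) ^ qs k := by
  classical
  obtain ⟨φ₀, hφ₀⟩ := exists_phi0 hqs_sum
  set I : Finset (Fin m → Fin N) := {ι | Function.Injective ι} with hI
  set T : Finset (Fin M → Fin N) :=
    {x | (univ.image x).val.map (w x) = univ.val.map qs} with hT
  set F : (Fin m → Fin N) × Equiv.Perm (Fin M) → (Fin M → Fin N) :=
    fun p => fun j => p.1 (φ₀ (p.2⁻¹ j)) with hF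
  have step1 : (∑ p ∈ I ×ˢ (univ : Finset (Equiv.Perm (Fin M))), ∏ j, (q (F p j) : ℝ))
      = (M.factorial : ℝ) * ∑ ι ∈ I, ∏ k, (q (ι k) : ℝ) ^ qs k := by
    rw [Finset.sum_product]
    have inner : ∀ ι : Fin m → Fin N,
        (∑ σ : Equiv.Perm (Fin M), ∏ j, (q (F (ι, σ) j) : ℝ))
          = (M.factorial : ℝ) * ∏ k, (q (ι k) : ℝ) ^ qs k := by
      intro ι
      have hval : ∀ σ : Equiv.Perm (Fin M),
          (∏ j, (q (F (ι, σ) j) : ℝ)) = ∏ k, (q (ι k) : ℝ) ^ qs k := by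
        intro σ
        have h1 : (∏ j, (q (F (ι, σ) j) : ℝ)) = ∏ j, (q (ι (φ₀ j)) : ℝ) :=
          Equiv.prod_comp σ⁻¹ (fun j => (q (ι (φ₀ j)) : ℝ))
        rw [h1, ← Finset.prod_fiberwise' univ φ₀ (fun k => (q (ι k) : ℝ))]
        exact Finset.prod_congr rfl fun k _ => by
          rw [Finset.prod_const, hφ₀ k]
      rw [Finset.sum_congr rfl (fun σ _ => hval σ), Finset.sum_const, Finset.card_univ,
        Fintype.card_perm, Fintype.card_fin, nsmul_eq_mul]
    rw [Finset.mul_sum]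
    exact Finset.sum_congr rfl fun ι _ => inner ι
  have step2 : (∑ p ∈ I ×ˢ (univ : Finset (Equiv.Perm (Fin M))), ∏ j, (q (F p j) : ℝ))
      = (((∏ k, (qs k).factorial) *
            ∏ s ∈ Finset.Icc 1 M, (#{k | qs k = s}).factorial : ℕ) : ℝ) *
          ∑ x ∈ T, ∏ j, (q (x j) : ℝ) := by
    have hcomp := Finset.sum_comp (fun x : Fin M → Fin N => ∏ j, (q (x j) : ℝ)) F
      (s := I ×ˢ (univ : Finset (Equiv.Perm (Fin M))))
    rw [hcomp, image_F hqs_pos hqs_sum φ₀ hφ₀]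
    rw [Finset.mul_sum]
    refine Finset.sum_congr rfl fun x hx => ?_
    rw [fiber_count hqs_pos hqs_sum φ₀ hφ₀ x (Finset.mem_filter.mp hx).2, nsmul_eq_mul]
  rw [← step2, step1]



lemma measure_cond_eq {Ω : Type*} [MeasurableSpace Ω] (μ : Measure Ω)
    (X : Fin M → Ω → Fin N) (hXmeas : ∀ j, Measurable (X j))
    (hXindep : iIndepFun X μ)
    (q : Fin N → NNReal) (hq : ∀ j i, μ {ω | X j ω = i} = q i)
    (Cond : (Fin M → Fin N) → Prop) [DecidablePred Cond] :
    μ {ω | Cond (fun j => X j ω)} = ∑ x ∈ ({x | Cond x} : Finset (Fin M → Fin N)),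
      ∏ j, (q (x j) : ENNReal) := by
  have hset : {ω | Cond (fun j => X j ω)} =
      ⋃ x ∈ ({x | Cond x} : Finset (Fin M → Fin N)), ⋂ j, X j ⁻¹' {x j} := by
    ext ω
    simp only [Set.mem_setOf_eq, Set.mem_iUnion, Set.mem_iInter, Set.mem_preimage,
      Set.mem_singleton_iff, Finset.mem_filter, Finset.mem_univ, true_and]
    constructor
    · intro h
      exact ⟨fun j => X j ω, h, fun j => rfl⟩
    · rintro ⟨x, hx, h⟩
      have : (fun j => X j ω) = x := funext h
      rwa [this]
  rw [hset, measure_biUnion_finset]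
  · refine Finset.sum_congr rfl fun x _ => ?_
    rw [hXindep.meas_iInter (fun j => ⟨{x j}, measurableSet_singleton _, rfl⟩)]
    refine Finset.prod_congr rfl fun j _ => ?_
    exact hq j (x j)
  · intro x hx y hy hxy
    simp only [Function.onFun]
    rw [Set.disjoint_left]
    intro ω hω hω'
    simp only [Set.mem_iInter, Set.mem_preimage, Set.mem_singleton_iff] at hω hω'
    exact hxy (funext fun j => (hω j).symm.trans (hω' j))
  · intro x _
    exact MeasurableSet.iInter fun j => (hXmeas j) (measurableSet_singleton _)


end SSUF


/-- steady-state unlabelled formula, equation (22): for identically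
distributed walkers with common marginal `q`, the probability of observing some contact graph
with block sizes `q₁, …, q_m` (given by `qs : Fin m → ℕ`) equals
`γ(Q) · ∑_{i₁,…,i_m pairwise distinct} ∏ⱼ q(iⱼ)^{qⱼ}`. -/
theorem steady_state_unlabelled_formula
    (N M : ℕ) (hN : 1 ≤ N) (hM : 1 ≤ M)
    {Ω : Type*} [MeasurableSpace Ω] (μ : Measure Ω) [IsProbabilityMeasure μ]
    (X : Fin M → Ω → Fin N)
    (hXmeas : ∀ j, Measurable (X j))
    (hXindep : iIndepFun X μ)
    (p : Fin M → Fin N → NNReal)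
    (hp : ∀ j i, μ {ω | X j ω = i} = p j i)
    (hpsum : ∀ j, ∑ i, p j i = 1)
    (q : Fin N → NNReal) (hq : ∀ j, p j = q)
    (m : ℕ) (qs : Fin m → ℕ)
    (hqs_pos : ∀ j, 0 < qs j) (hqs_sum : ∑ j, qs j = M) :
    (μ (⋃ (g' : Finpartition (Finset.univ : Finset (Fin M)))
          (_ : g'.parts.val.map Finset.card = Finset.univ.val.map qs),
          {ω | ∀ u v : Fin M, X u ω = X v ω ↔ ∃ B ∈ g'.parts, u ∈ B ∧ v ∈ B})).toReal
      = ((M.factorial : ℝ) /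
            ((∏ j : Fin m, (qs j).factorial)
              * ∏ j ∈ Finset.Icc 1 M, (((Finset.univ.val.map qs).count j).factorial : ℕ)))
        * ∑ ι ∈ Finset.univ.filter (fun ι : Fin m → Fin N => Function.Injective ι),
            ∏ j : Fin m, (q (ι j) : ℝ) ^ qs j := by
  classical
  set Cond : (Fin M → Fin N) → Prop := fun x =>
    ∃ g' : Finpartition (Finset.univ : Finset (Fin M)),
      g'.parts.val.map Finset.card = Finset.univ.val.map qs ∧
      ∀ u v, x u = x v ↔ ∃ B ∈ g'.parts, u ∈ B ∧ v ∈ B with hCond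
  have hset : (⋃ (g' : Finpartition (Finset.univ : Finset (Fin M)))
          (_ : g'.parts.val.map Finset.card = Finset.univ.val.map qs),
          {ω | ∀ u v : Fin M, X u ω = X v ω ↔ ∃ B ∈ g'.parts, u ∈ B ∧ v ∈ B})
      = {ω | Cond (fun j => X j ω)} := by
    ext ω
    simp only [Set.mem_iUnion, Set.mem_setOf_eq, hCond]
    tauto
  rw [hset, SSUF.measure_cond_eq μ X hXmeas hXindep q
    (fun j i => (hp j i).trans (by rw [hq j])) Cond]
  have hfilter : ({x | Cond x} : Finset (Fin M → Fin N)) =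
      ({x : Fin M → Fin N |
        (univ.image x).val.map (SSUF.w x) = univ.val.map qs} : Finset _) := by
    apply Finset.filter_congr
    intro x _
    exact SSUF.cond_iff_shape x (univ.val.map qs)
  rw [hfilter]
  -- toReal
  set T := ({x : Fin M → Fin N |
    (univ.image x).val.map (SSUF.w x) = univ.val.map qs} : Finset _) with hT
  have htr : (∑ x ∈ T, ∏ j, (q (x j) : ENNReal)).toReal
      = ∑ x ∈ T, ∏ j, (q (x j) : ℝ) := by
    simp only [← ENNReal.coe_finset_prod, ← ENNReal.coe_finset_sum, ENNReal.coe_toReal]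
    push_cast
    rfl
  rw [htr]
  -- apply key identity
  have hkey := SSUF.key_identity (M := M) (N := N) q hqs_pos hqs_sum
  have hC : (∏ j ∈ Finset.Icc 1 M, (((Finset.univ.val.map qs).count j).factorial : ℕ))
      = ∏ s ∈ Finset.Icc 1 M, (#{k | qs k = s}).factorial := by
    refine Finset.prod_congr rfl fun s _ => ?_
    rw [SSUF.count_map_finset]
  rw [hC]
  have hK0 : ((∏ j : Fin m, (qs j).factorial : ℕ) : ℝ) *
      ((∏ s ∈ Finset.Icc 1 M, (#{k | qs k = s}).factorial : ℕ) : ℝ) ≠ 0 := by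
    positivity
  rw [div_mul_eq_mul_div, eq_div_iff hK0]
  push_cast at hkey ⊢
  linear_combination hkey
end

section
/- (Dobinski-type series for Bell numbers, equation (Series_Bell_number)) For every natural number k, B_k = e^{−1} · ∑_{n=0}^{∞} n^k / n!, where the sum is a convergent series of real numbers (with the convention 0^0 = 1). -/
/-- The Bell number `B_k`: the number of partitions of a `k`-element set. -/
def bellNumber (k : ℕ) : ℕ :=
  Fintype.card (Finpartition (Finset.univ : Finset (Fin k)))

open Finset

namespace BellAux

variable {α β : Type*} [DecidableEq α] [DecidableEq β]

/-- Transport a finpartition of a finset along an embedding. -/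
def fpMap (f : α ↪ β) {s : Finset α} (P : Finpartition s) : Finpartition (s.map f) where
  parts := P.parts.map ⟨Finset.map f, Finset.map_injective f⟩
  supIndep := by
    rw [Finset.supIndep_iff_pairwiseDisjoint]
    rintro x hx y hy hxy
    rw [coe_map] at hx hy
    obtain ⟨a, ha, rfl⟩ := hx; obtain ⟨b, hb, rfl⟩ := hy
    exact (Finset.disjoint_map f).mpr (P.disjoint ha hb (fun h => hxy (by rw [h])))
  sup_parts := by
    rw [Finset.sup_map]
    have := Finset.comp_sup_eq_sup_comp (s := P.parts) (f := id) (Finset.map f)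
      (fun x y => Finset.map_union x y) (Finset.map_empty f)
    simpa [Function.comp] using this.symm.trans (by rw [P.sup_parts])
  bot_notMem := by
    simp only [bot_eq_empty, Finset.mem_map, Function.Embedding.coeFn_mk]
    rintro ⟨p, hp, hp0⟩
    rw [Finset.map_eq_empty] at hp0
    subst hp0
    exact P.bot_notMem hp

@[simp] lemma fpMap_parts (f : α ↪ β) {s : Finset α} (P : Finpartition s) :
    (fpMap f P).parts = P.parts.map ⟨Finset.map f, Finset.map_injective f⟩ := rfl

/-- Pull back a finpartition of `s.map f` to a finpartition of `s`. -/
noncomputable def fpComap (f : α ↪ β) {s : Finset α} (Q : Finpartition (s.map f)) : Finpartition s where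
  parts := Q.parts.image (fun p => p.preimage f f.injective.injOn)
  supIndep := by
    rw [Finset.supIndep_iff_pairwiseDisjoint]
    rintro x hx y hy hxy
    simp only [coe_image, Set.mem_image, mem_coe] at hx hy
    obtain ⟨p, hp, rfl⟩ := hx; obtain ⟨q, hq, rfl⟩ := hy
    have hpq : p ≠ q := fun h => hxy (by rw [h])
    have := Q.disjoint hp hq hpq
    simp only [id_eq, Finset.disjoint_left] at this ⊢
    intro a ha ha'
    rw [Finset.mem_preimage] at ha ha'
    exact this ha ha'
  sup_parts := by
    rw [Finset.sup_image]
    have := Finset.comp_sup_eq_sup_comp (s := Q.parts) (f := id)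
      (fun t : Finset β => t.preimage f f.injective.injOn)
      (fun x y => Finset.preimage_union _) (by simp)
    simp only [Function.comp_def, id_eq] at this ⊢
    rw [← this, Q.sup_parts, Finset.preimage_map]
  bot_notMem := by
    simp only [bot_eq_empty, Finset.mem_image]
    rintro ⟨p, hp, hp0⟩
    obtain ⟨b, hb⟩ := Q.nonempty_of_mem_parts hp
    have hbs : b ∈ s.map f := Q.le hp hb
    obtain ⟨a, _, rfl⟩ := Finset.mem_map.1 hbs
    have : a ∈ p.preimage f f.injective.injOn := Finset.mem_preimage.2 hb
    rw [hp0] at this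
    exact absurd this (Finset.notMem_empty a)

lemma fpMap_bijective (f : α ↪ β) {s : Finset α} :
    Function.Bijective (fpMap f (s := s)) := by
  constructor
  · intro P Q h
    ext p
    have := congrArg Finpartition.parts h
    simp only [fpMap_parts] at this
    constructor
    · intro hp
      have : p.map f ∈ Q.parts.map ⟨Finset.map f, Finset.map_injective f⟩ := by
        rw [← this]; exact mem_map_of_mem _ hp
      simp only [Finset.mem_map, Function.Embedding.coeFn_mk] at this
      obtain ⟨q, hq, hqe⟩ := this
      rwa [← Finset.map_injective f hqe]
    · intro hp
      have : p.map f ∈ P.parts.map ⟨Finset.map f, Finset.map_injective f⟩ := by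
        rw [this]; exact mem_map_of_mem _ hp
      simp only [Finset.mem_map, Function.Embedding.coeFn_mk] at this
      obtain ⟨q, hq, hqe⟩ := this
      rwa [← Finset.map_injective f hqe]
  · intro Q
    refine ⟨fpComap f Q, ?_⟩
    ext p
    simp only [fpMap_parts, fpComap, Finset.mem_map, Finset.mem_image,
      Function.Embedding.coeFn_mk]
    constructor
    · rintro ⟨q, ⟨r, hr, rfl⟩, rfl⟩
      have hsub : r ⊆ s.map f := Q.le hr
      have : (r.preimage f f.injective.injOn).map f = r := by
        ext b
        simp only [Finset.mem_map, Finset.mem_preimage]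
        constructor
        · rintro ⟨a, ha, rfl⟩; exact ha
        · intro hb
          obtain ⟨a, _, rfl⟩ := Finset.mem_map.1 (hsub hb)
          exact ⟨a, hb, rfl⟩
      rwa [this]
    · intro hp
      refine ⟨p.preimage f f.injective.injOn, ⟨p, hp, rfl⟩, ?_⟩
      have hsub : p ⊆ s.map f := Q.le hp
      ext b
      simp only [Finset.mem_map, Finset.mem_preimage]
      constructor
      · rintro ⟨a, ha, rfl⟩; exact ha
      · intro hb
        obtain ⟨a, _, rfl⟩ := Finset.mem_map.1 (hsub hb)
        exact ⟨a, hb, rfl⟩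

lemma card_fpMap (f : α ↪ β) (s : Finset α) :
    Fintype.card (Finpartition s) = Fintype.card (Finpartition (s.map f)) :=
  Fintype.card_of_bijective (fpMap_bijective f)

end BellAux

lemma card_finpartition_eq_bell {β : Type*} [DecidableEq β] (s : Finset β) :
    Fintype.card (Finpartition s) = bellNumber s.card := by
  classical
  let f : Fin s.card ↪ β :=
    (s.equivFin.symm.toEmbedding.trans (Function.Embedding.subtype _))
  have hmap : (Finset.univ : Finset (Fin s.card)).map f = s := by
    ext b
    simp only [Finset.mem_map, Finset.mem_univ, true_and, f,
      Function.Embedding.trans_apply, Equiv.coe_toEmbedding,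
      Function.Embedding.coe_subtype]
    constructor
    · rintro ⟨i, rfl⟩; exact (s.equivFin.symm i).2
    · intro hb; exact ⟨s.equivFin ⟨b, hb⟩, by simp⟩
  rw [bellNumber, BellAux.card_fpMap f Finset.univ, hmap]

namespace BellAux

lemma avoid_parts_of_mem {α : Type*} [DecidableEq α] {s : Finset α} (P : Finpartition s)
    {t : Finset α} (ht : t ∈ P.parts) : (P.avoid t).parts = P.parts.erase t := by
  ext c
  rw [Finpartition.mem_avoid, Finset.mem_erase]
  constructor
  · rintro ⟨d, hd, hdt, rfl⟩
    have hne : d ≠ t := fun h => hdt (le_of_eq h)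
    have hdis : Disjoint d t := P.disjoint hd ht hne
    rw [Finset.sdiff_eq_self_of_disjoint hdis]
    exact ⟨hne, hd⟩
  · rintro ⟨hct, hc⟩
    have hdis : Disjoint c t := P.disjoint hc ht hct
    exact ⟨c, hc, fun hle => P.ne_bot hc (hdis.eq_bot_of_le hle),
      Finset.sdiff_eq_self_of_disjoint hdis⟩

variable {β : Type*} [Fintype β] [DecidableEq β]

/-- The block of a partition of `Option β` containing `none`, coded by a finset of `β`. -/
def blockOf (s : Finset β) : Finset (Option β) :=
  insert none (s.map Function.Embedding.some)

lemma none_mem_blockOf (s : Finset β) : none ∈ blockOf s := Finset.mem_insert_self _ _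

lemma some_mem_blockOf {s : Finset β} {b : β} : some b ∈ blockOf s ↔ b ∈ s := by
  simp [blockOf]

lemma map_compl (s : Finset β) :
    (sᶜ : Finset β).map Function.Embedding.some
      = (Finset.univ : Finset (Option β)) \ blockOf s := by
  ext x
  cases x with
  | none => simp [blockOf]
  | some b => simp [blockOf, Function.Embedding.some]

lemma none_not_mem_map_some (q : Finset β) : none ∉ q.map Function.Embedding.some := by
  simp [Function.Embedding.some]

/-- Build a partition of `Option β`'s universe from the `none`-block data and a partition of
the complement. -/
def fpMk (s : Finset β) (Q : Finpartition (sᶜ : Finset β)) :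
    Finpartition (Finset.univ : Finset (Option β)) :=
  ((fpMap Function.Embedding.some Q).copy (congrArg _ rfl)).extend
    (b := blockOf s)
    (by
      intro h
      exact absurd (h ▸ none_mem_blockOf s) (Finset.notMem_empty none))
    (by
      rw [map_compl s]
      exact disjoint_sdiff_self_left.symm |>.symm)
    (by
      rw [map_compl s, sup_eq_union, Finset.sdiff_union_of_subset (Finset.subset_univ _)])

lemma fpMk_parts (s : Finset β) (Q : Finpartition (sᶜ : Finset β)) :
    (fpMk s Q).parts = insert (blockOf s) ((fpMap Function.Embedding.some Q).parts) := rfl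

lemma fpMk_bijective :
    Function.Bijective
      (fun p : Σ s : Finset β, Finpartition (sᶜ : Finset β) => fpMk p.1 p.2) := by
  constructor
  · rintro ⟨s, Q⟩ ⟨s', Q'⟩ h
    simp only at h
    have hparts := congrArg Finpartition.parts h
    rw [fpMk_parts, fpMk_parts] at hparts
    -- blockOf s = blockOf s'
    have hbb : blockOf s = blockOf s' := by
      have : blockOf s ∈ insert (blockOf s') (fpMap Function.Embedding.some Q').parts := by
        rw [← hparts]; exact Finset.mem_insert_self _ _
      rcases Finset.mem_insert.1 this with h' | h'
      · exact h'
      · exfalso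
        rw [fpMap_parts] at h'
        obtain ⟨q, _, hq'⟩ := Finset.mem_map.1 h'
        simp only [Function.Embedding.coeFn_mk] at hq'
        exact none_not_mem_map_some q (hq' ▸ none_mem_blockOf s)
    have hss : s = s' := by
      ext b
      rw [← some_mem_blockOf (s := s), ← some_mem_blockOf (s := s'), hbb]
    subst hss
    have hQQ : Q = Q' := by
      have hPP : (fpMap Function.Embedding.some Q).parts
          = (fpMap Function.Embedding.some Q').parts := by
        ext q
        constructor
        · intro hq
          have hqb : q ≠ blockOf s := by
            rintro rfl
            rw [fpMap_parts] at hq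
            obtain ⟨q', _, hq'⟩ := Finset.mem_map.1 hq
            simp only [Function.Embedding.coeFn_mk] at hq'
            exact none_not_mem_map_some q' (hq' ▸ none_mem_blockOf s)
          have : q ∈ insert (blockOf s) (fpMap Function.Embedding.some Q').parts := by
            rw [← hparts]; exact Finset.mem_insert_of_mem hq
          exact (Finset.mem_insert.1 this).resolve_left hqb
        · intro hq
          have hqb : q ≠ blockOf s := by
            rintro rfl
            rw [fpMap_parts] at hq
            obtain ⟨q', _, hq'⟩ := Finset.mem_map.1 hq
            simp only [Function.Embedding.coeFn_mk] at hq'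
            exact none_not_mem_map_some q' (hq' ▸ none_mem_blockOf s)
          have : q ∈ insert (blockOf s) (fpMap Function.Embedding.some Q).parts := by
            rw [hparts]; exact Finset.mem_insert_of_mem hq
          exact (Finset.mem_insert.1 this).resolve_left hqb
      exact (fpMap_bijective Function.Embedding.some).1 (Finpartition.ext hPP)
    rw [hQQ]
  · intro P
    set t : Finset (Option β) := P.part none with htdef
    have ht : t ∈ P.parts := P.part_mem.2 (Finset.mem_univ none)
    have hnone : none ∈ t := P.mem_part (Finset.mem_univ none)
    set s : Finset β := Finset.univ.filter (fun b => some b ∈ t) with hsdef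
    have hts : t = blockOf s := by
      ext x
      cases x with
      | none => simp [blockOf, hnone]
      | some b => simp [blockOf, hsdef, Function.Embedding.some]
    have hcompl : (Finset.univ : Finset (Option β)) \ t
        = (sᶜ : Finset β).map Function.Embedding.some := by
      rw [map_compl s, hts]
    obtain ⟨Q, hQ⟩ := (fpMap_bijective (Function.Embedding.some) (s := (sᶜ : Finset β))).2
      ((P.avoid t).copy hcompl)
    refine ⟨⟨s, Q⟩, ?_⟩
    simp only
    apply Finpartition.ext
    rw [fpMk_parts, hQ]
    have : ((P.avoid t).copy hcompl).parts = P.parts.erase t := by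
      rw [Finpartition.copy_parts, avoid_parts_of_mem P ht]
    rw [this, ← hts, Finset.insert_erase ht]

lemma card_option :
    Fintype.card (Finpartition (Finset.univ : Finset (Option β)))
      = ∑ s : Finset β, bellNumber ((sᶜ : Finset β)).card := by
  rw [← Fintype.card_of_bijective fpMk_bijective, Fintype.card_sigma]
  exact Finset.sum_congr rfl fun s _ => card_finpartition_eq_bell _

end BellAux

lemma bellNumber_zero : bellNumber 0 = 1 := by
  rw [bellNumber]
  have h : (Finset.univ : Finset (Fin 0)) = (⊥ : Finset (Fin 0)) := by simp
  rw [h]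
  exact Fintype.card_unique

lemma bellNumber_succ (k : ℕ) :
    bellNumber (k + 1) = ∑ j ∈ Finset.range (k + 1), k.choose j * bellNumber j := by
  classical
  have h1 : Fintype.card (Finpartition (Finset.univ : Finset (Option (Fin k))))
      = bellNumber (k + 1) := by
    rw [BellAux.card_fpMap ((finSuccEquiv k).symm.toEmbedding) Finset.univ,
      Finset.map_univ_equiv, bellNumber]
  rw [← h1, BellAux.card_option]
  have h2 : ∀ s : Finset (Fin k),
      bellNumber ((sᶜ : Finset (Fin k)).card) = bellNumber (k - s.card) := by
    intro s; rw [Finset.card_compl, Fintype.card_fin]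
  rw [Finset.sum_congr rfl (fun s _ => h2 s), ← Finset.powerset_univ,
    Finset.sum_powerset]
  have h3 : ∀ j ∈ Finset.range ((Finset.univ : Finset (Fin k)).card + 1),
      (∑ t ∈ Finset.powersetCard j (Finset.univ : Finset (Fin k)),
        bellNumber (k - t.card)) = k.choose j * bellNumber (k - j) := by
    intro j hj
    rw [Finset.sum_congr rfl (fun t ht => by
      rw [(Finset.mem_powersetCard.1 ht).2]), Finset.sum_const,
      Finset.card_powersetCard, Finset.card_univ, Fintype.card_fin, smul_eq_mul]
  rw [Finset.sum_congr rfl h3, Finset.card_univ, Fintype.card_fin]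
  have h4 := Finset.sum_range_reflect (fun j => k.choose j * bellNumber (k - j)) (k + 1)
  simp only [Nat.add_sub_cancel] at h4
  rw [← h4]
  refine Finset.sum_congr rfl fun j hj => ?_
  have hjk : j ≤ k := Nat.lt_succ_iff.1 (Finset.mem_range.1 hj)
  rw [Nat.choose_symm hjk, Nat.sub_sub_self hjk]

lemma dobinski_aux : ∀ k : ℕ,
    Summable (fun n : ℕ => (n : ℝ) ^ k / n.factorial)
    ∧ (bellNumber k : ℝ) = Real.exp (-1) * ∑' n : ℕ, (n : ℝ) ^ k / n.factorial := by
  intro k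
  induction k using Nat.strong_induction_on with
  | _ k ih =>
  match k with
  | 0 =>
    have hs : Summable (fun n : ℕ => (n : ℝ) ^ 0 / n.factorial) := by
      have := NormedSpace.expSeries_div_summable (1 : ℝ)
      simpa using this
    refine ⟨hs, ?_⟩
    have ht : (∑' n : ℕ, (n : ℝ) ^ 0 / n.factorial) = Real.exp 1 := by
      rw [Real.exp_eq_exp_ℝ]
      have := (NormedSpace.expSeries_div_hasSum_exp (1 : ℝ)).tsum_eq
      simp only [one_pow] at this
      simp only [pow_zero]
      exact this
    rw [ht, bellNumber_zero, ← Real.exp_add]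
    norm_num
  | (k + 1) =>
    have hstep : ∀ n : ℕ, ((n + 1 : ℕ) : ℝ) ^ (k + 1) / ((n + 1).factorial : ℝ)
        = ∑ j ∈ Finset.range (k + 1), (k.choose j : ℝ) * ((n : ℝ) ^ j / n.factorial) := by
      intro n
      have hfac : ((n.factorial : ℝ)) ≠ 0 := by positivity
      have hn1 : ((n : ℝ) + 1) ≠ 0 := by positivity
      rw [Nat.factorial_succ]
      push_cast
      have h1 : ((n : ℝ) + 1) ^ (k + 1) / (((n : ℝ) + 1) * n.factorial)
          = ((n : ℝ) + 1) ^ k / n.factorial := by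
        rw [pow_succ]
        field_simp
      rw [h1, add_pow]
      simp only [one_pow]
      rw [Finset.sum_div]
      refine Finset.sum_congr rfl fun j hj => ?_
      ring
    have hsumg : Summable (fun n : ℕ =>
        ∑ j ∈ Finset.range (k + 1), (k.choose j : ℝ) * ((n : ℝ) ^ j / n.factorial)) := by
      apply summable_sum
      intro j hj
      exact ((ih j (Finset.mem_range.1 hj)).1).mul_left _
    have hsum : Summable (fun n : ℕ => (n : ℝ) ^ (k + 1) / n.factorial) := by
      rw [← summable_nat_add_iff (f := fun n : ℕ => (n : ℝ) ^ (k + 1) / n.factorial) 1]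
      refine Summable.congr hsumg fun n => ?_
      exact (hstep n).symm
    refine ⟨hsum, ?_⟩
    have h0 : ((0 : ℕ) : ℝ) ^ (k + 1) / ((0 : ℕ).factorial : ℝ) = 0 := by simp
    have htsum : (∑' n : ℕ, (n : ℝ) ^ (k + 1) / n.factorial)
        = ∑ j ∈ Finset.range (k + 1), (k.choose j : ℝ) * ∑' n : ℕ, (n : ℝ) ^ j / n.factorial := by
      rw [Summable.tsum_eq_zero_add hsum, h0, zero_add]
      calc (∑' n : ℕ, ((n + 1 : ℕ) : ℝ) ^ (k + 1) / ((n + 1).factorial : ℝ))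
          = ∑' n : ℕ, ∑ j ∈ Finset.range (k + 1),
              (k.choose j : ℝ) * ((n : ℝ) ^ j / n.factorial) := by
            exact tsum_congr hstep
        _ = ∑ j ∈ Finset.range (k + 1),
              ∑' n : ℕ, (k.choose j : ℝ) * ((n : ℝ) ^ j / n.factorial) := by
            exact Summable.tsum_finsetSum fun j hj => ((ih j (Finset.mem_range.1 hj)).1).mul_left _
        _ = ∑ j ∈ Finset.range (k + 1),
              (k.choose j : ℝ) * ∑' n : ℕ, (n : ℝ) ^ j / n.factorial := by
            exact Finset.sum_congr rfl fun j _ => tsum_mul_left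
    rw [htsum, Finset.mul_sum, bellNumber_succ]
    push_cast
    refine Finset.sum_congr rfl fun j hj => ?_
    rw [(ih j (Finset.mem_range.1 hj)).2]
    ring

/-- Dobinski-type series for Bell numbers: for every `k`,
`B_k = e⁻¹ · ∑_{n=0}^∞ n^k / n!`, the series being convergent (with `0^0 = 1`). -/
theorem bell_dobinski (k : ℕ) :
    Summable (fun n : ℕ => (n : ℝ) ^ k / n.factorial)
    ∧ (bellNumber k : ℝ)
        = Real.exp (-1) * ∑' n : ℕ, (n : ℝ) ^ k / n.factorial := by
  exact dobinski_aux k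
end
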